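/- arXiv:1208.5216 — 11 statements merged into one kernel-verified Lean document; each statement's English description precedes it below -/
import Mathlib

section
/- If v and v' are coprime positive integers, there exists a perfect regular difference system of sets DSS(v,m,q,ρ) over Z_v whose blocks form a difference family DF(v,m,λ), and a perfect regular DSS(v',m',q',ρ') over Z_{v'} whose blocks form a DF(v',m',λ'), then the family of all direct products Q_i × Q'_j (viewed as subsets of Z_{vv'} via the Chinese remainder isomorphism) is a regular DSS(vv', mm', qq', min(ρρ'+ρλ'+ρ'λ, ρm'q', ρ'mq)). -/
/-- Number of occurrences of `d` as an outer difference (difference of elements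
from distinct member sets) in the family `Q`. -/
def outerCount {G ι : Type*} [AddCommGroup G] [DecidableEq G] [Fintype ι] [DecidableEq ι]
    (Q : ι → Finset G) (d : G) : ℕ :=
  ∑ i : ι, ∑ j : ι, if i = j then 0 else ((Q i ×ˢ Q j).filter (fun p => p.1 - p.2 = d)).card

/-- Number of occurrences of `d` as an inner difference (difference of two distinct
elements of a single member set) in the family `Q`. -/
def innerCount {G ι : Type*} [AddCommGroup G] [DecidableEq G] [Fintype ι]
    (Q : ι → Finset G) (d : G) : ℕ :=
  ∑ i : ι, ((Q i ×ˢ Q i).filter (fun p => p.1 - p.2 = d ∧ p.1 ≠ p.2)).card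

lemma sum_offdiag {ι : Type*} [Fintype ι] [DecidableEq ι] (f : ι → ι → ℕ) :
    (∑ x : ι, ∑ y : ι, if x = y then 0 else f x y) + ∑ x : ι, f x x
      = ∑ x : ι, ∑ y : ι, f x y := by
  rw [← Finset.sum_add_distrib]
  refine Finset.sum_congr rfl fun x _ => ?_
  have h1 : f x x = ∑ y : ι, if x = y then f x y else 0 := by
    rw [Finset.sum_ite_eq]; simp
  rw [h1, ← Finset.sum_add_distrib]
  refine Finset.sum_congr rfl fun y _ => ?_
  split <;> simp_all

lemma card_prod_filter {G H : Type*} [AddCommGroup G] [AddCommGroup H]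
    [DecidableEq G] [DecidableEq H]
    (A C : Finset G) (B D : Finset H) (d₁ : G) (d₂ : H) :
    (((A ×ˢ B) ×ˢ (C ×ˢ D)).filter (fun p => p.1 - p.2 = (d₁, d₂))).card
      = ((A ×ˢ C).filter (fun p => p.1 - p.2 = d₁)).card *
        ((B ×ˢ D).filter (fun p => p.1 - p.2 = d₂)).card := by
  rw [← Finset.card_product]
  apply Finset.card_equiv (Equiv.prodProdProdComm G H G H)
  rintro ⟨⟨a, b⟩, c, e⟩
  simp [Equiv.prodProdProdComm, Prod.ext_iff]
  tauto

lemma card_image_filter {G H : Type*} [AddCommGroup G] [AddCommGroup H]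
    [DecidableEq G] [DecidableEq H] (e : G ≃+ H) (s t : Finset G) (d : G) :
    (((s.image e) ×ˢ (t.image e)).filter (fun p => p.1 - p.2 = e d)).card
      = ((s ×ˢ t).filter (fun p => p.1 - p.2 = d)).card := by
  apply Finset.card_equiv (e.toEquiv.prodCongr e.toEquiv).symm
  rintro ⟨x, y⟩
  simp [Prod.ext_iff]
  have hsub : x - y = e d ↔ e.symm x - e.symm y = d := by
    constructor
    · intro h; have := congrArg e.symm h; simpa [map_sub] using this
    · intro h; have := congrArg e h; rw [map_sub] at this; simpa using this
  constructor
  · rintro ⟨⟨⟨a, ha, rfl⟩, ⟨b, hb, rfl⟩⟩, h⟩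
    refine ⟨⟨by simpa using ha, by simpa using hb⟩, hsub.mp h⟩
  · rintro ⟨⟨ha, hb⟩, h⟩
    exact ⟨⟨⟨_, ha, e.apply_symm_apply x⟩, ⟨_, hb, e.apply_symm_apply y⟩⟩, hsub.mpr h⟩

set_option maxHeartbeats 1600000 in
theorem stmt_0 (v v' m m' q q' ρ ρ' lam lam' : ℕ) (hv : 0 < v) (hv' : 0 < v')
    (hco : Nat.Coprime v v')
    (Q : Fin q → Finset (ZMod v)) (Q' : Fin q' → Finset (ZMod v'))
    (hQdisj : ∀ i j, i ≠ j → Disjoint (Q i) (Q j))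
    (hQcard : ∀ i, (Q i).card = m)
    (hQperf : ∀ d : ZMod v, d ≠ 0 → outerCount Q d = ρ)
    (hQdf : ∀ d : ZMod v, d ≠ 0 → innerCount Q d = lam)
    (hQ'disj : ∀ i j, i ≠ j → Disjoint (Q' i) (Q' j))
    (hQ'card : ∀ i, (Q' i).card = m')
    (hQ'perf : ∀ d : ZMod v', d ≠ 0 → outerCount Q' d = ρ')
    (hQ'df : ∀ d : ZMod v', d ≠ 0 → innerCount Q' d = lam') :
    let R : Fin q × Fin q' → Finset (ZMod (v * v')) := fun ij =>
      (Q ij.1 ×ˢ Q' ij.2).image (fun p => (ZMod.chineseRemainder hco).symm p)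
    (∀ a b, a ≠ b → Disjoint (R a) (R b)) ∧
    (∀ a, (R a).card = m * m') ∧
    (∀ d : ZMod (v * v'), d ≠ 0 →
      min (ρ * ρ' + ρ * lam' + ρ' * lam) (min (ρ * m' * q') (ρ' * m * q)) ≤ outerCount R d) := by
  intro R
  set c := ZMod.chineseRemainder hco with hcdef
  have hginj : Function.Injective (fun p : ZMod v × ZMod v' => c.symm p) := c.symm.injective
  have hprod_disj : ∀ a b : Fin q × Fin q', a ≠ b →
      Disjoint (Q a.1 ×ˢ Q' a.2) (Q b.1 ×ˢ Q' b.2) := by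
    intro a b hab
    rw [Finset.disjoint_left]
    rintro ⟨x, y⟩ hx hy
    simp only [Finset.mem_product] at hx hy
    by_cases h1 : a.1 = b.1
    · have h2 : a.2 ≠ b.2 := fun h => hab (Prod.ext h1 h)
      exact (Finset.disjoint_left.mp (hQ'disj _ _ h2)) hx.2 hy.2
    · exact (Finset.disjoint_left.mp (hQdisj _ _ h1)) hx.1 hy.1
  refine ⟨fun a b hab => ?_, fun a => ?_, fun d hd => ?_⟩
  · exact (Finset.disjoint_image hginj).mpr (hprod_disj a b hab)
  · rw [Finset.card_image_of_injective _ hginj, Finset.card_product, hQcard, hQ'card]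
  · -- main counting part
    set E : (ZMod v × ZMod v') ≃+ ZMod (v * v') := c.symm.toAddEquiv with hE
    set D1 : ZMod v := (c d).1 with hD1
    set D2 : ZMod v' := (c d).2 with hD2
    set A : Fin q → Fin q → ℕ :=
      fun i i' => ((Q i ×ˢ Q i').filter (fun p => p.1 - p.2 = D1)).card with hA
    set B : Fin q' → Fin q' → ℕ :=
      fun j j' => ((Q' j ×ˢ Q' j').filter (fun p => p.1 - p.2 = D2)).card with hB
    have hR : ∀ a b : Fin q × Fin q',
        ((R a ×ˢ R b).filter (fun p => p.1 - p.2 = d)).card = A a.1 b.1 * B a.2 b.2 := by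
      intro a b
      have h0 : d = E (E.symm d) := (E.apply_symm_apply d).symm
      have h1 : ((R a ×ˢ R b).filter (fun p => p.1 - p.2 = d)).card
          = (((Q a.1 ×ˢ Q' a.2) ×ˢ (Q b.1 ×ˢ Q' b.2)).filter
              (fun p => p.1 - p.2 = E.symm d)).card := by
        conv_lhs => rw [h0]
        exact card_image_filter E _ _ _
      have h2 : E.symm d = (D1, D2) := rfl
      rw [h1, h2, card_prod_filter]
    have houter : outerCount R d = ∑ x : Fin q × Fin q', ∑ y : Fin q × Fin q',
        if x = y then 0 else A x.1 y.1 * B x.2 y.2 := by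
      unfold outerCount
      refine Finset.sum_congr rfl fun x _ => Finset.sum_congr rfl fun y _ => ?_
      split
      · rfl
      · exact hR x y
    have hdiag : (∑ x : Fin q × Fin q', A x.1 x.1 * B x.2 x.2)
        = (∑ i, A i i) * (∑ j, B j j) := by
      rw [Fintype.sum_prod_type, Finset.sum_mul_sum]
    have htot : (∑ x : Fin q × Fin q', ∑ y : Fin q × Fin q', A x.1 y.1 * B x.2 y.2)
        = (∑ i, ∑ i', A i i') * (∑ j, ∑ j', B j j') := by
      simp only [Fintype.sum_prod_type]
      rw [Finset.sum_mul_sum]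
      refine Finset.sum_congr rfl fun i _ => Finset.sum_congr rfl fun j _ => ?_
      exact (Finset.sum_mul_sum _ _ _ _).symm
    have hkey : outerCount R d + (∑ i, A i i) * (∑ j, B j j)
        = (∑ i, ∑ i', A i i') * (∑ j, ∑ j', B j j') := by
      rw [houter, ← hdiag, ← htot]
      exact sum_offdiag _
    -- computations of the sums for Q
    have hSA_ne : D1 ≠ 0 → (∑ i, A i i) = lam ∧ (∑ i, ∑ i', A i i') = ρ + lam := by
      intro h1
      have hdA : (∑ i, A i i) = lam := by
        rw [← hQdf D1 h1]
        unfold innerCount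
        refine Finset.sum_congr rfl fun i _ => ?_
        show ((Q i ×ˢ Q i).filter (fun p => p.1 - p.2 = D1)).card
          = ((Q i ×ˢ Q i).filter (fun p => p.1 - p.2 = D1 ∧ p.1 ≠ p.2)).card
        congr 1
        apply Finset.filter_congr
        intro p hp
        constructor
        · intro h
          exact ⟨h, fun he => h1 (by rw [← h, he, sub_self])⟩
        · exact fun h => h.1
      refine ⟨hdA, ?_⟩
      have h := sum_offdiag A
      have h2 : (∑ x, ∑ y, if x = y then 0 else A x y) = outerCount Q D1 := rfl
      rw [h2, hQperf D1 h1, hdA] at h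
      exact h.symm
    have hSA_eq : D1 = 0 → (∑ i, A i i) = q * m ∧ (∑ i, ∑ i', A i i') = q * m := by
      intro h1
      have hAd : ∀ i, A i i = m := by
        intro i
        have himg : (Q i ×ˢ Q i).filter (fun p => p.1 - p.2 = D1)
            = (Q i).image (fun a => (a, a)) := by
          ext ⟨x, y⟩
          simp only [Finset.mem_filter, Finset.mem_product, Finset.mem_image, h1, sub_eq_zero]
          constructor
          · rintro ⟨⟨hx, hy⟩, rfl⟩
            exact ⟨x, hx, rfl⟩
          · rintro ⟨a, ha, heq⟩
            cases heq
            exact ⟨⟨ha, ha⟩, rfl⟩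
        show ((Q i ×ˢ Q i).filter (fun p => p.1 - p.2 = D1)).card = m
        rw [himg, Finset.card_image_of_injective _
          (fun a b h => congrArg Prod.fst h), hQcard]
      have hAoff : ∀ i i', i ≠ i' → A i i' = 0 := by
        intro i i' hii
        show ((Q i ×ˢ Q i').filter (fun p => p.1 - p.2 = D1)).card = 0
        rw [Finset.card_eq_zero, Finset.filter_eq_empty_iff]
        rintro ⟨x, y⟩ hxy
        simp only [Finset.mem_product] at hxy
        rw [h1, sub_eq_zero]
        intro hxyeq
        have hxe : x = y := hxyeq
        subst hxe
        exact (Finset.disjoint_left.mp (hQdisj _ _ hii)) hxy.1 hxy.2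
      have hd1 : (∑ i, A i i) = q * m := by
        rw [Finset.sum_congr rfl fun i _ => hAd i]
        simp [mul_comm]
      refine ⟨hd1, ?_⟩
      have : ∀ i : Fin q, (∑ i', A i i') = A i i := by
        intro i
        apply Finset.sum_eq_single i
        · exact fun i' _ h => hAoff i i' (fun he => h he.symm)
        · intro h; exact absurd (Finset.mem_univ i) h
      rw [Finset.sum_congr rfl fun i _ => this i]
      exact hd1
    -- computations of the sums for Q'
    have hSB_ne : D2 ≠ 0 → (∑ j, B j j) = lam' ∧ (∑ j, ∑ j', B j j') = ρ' + lam' := by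
      intro h1
      have hdB : (∑ j, B j j) = lam' := by
        rw [← hQ'df D2 h1]
        unfold innerCount
        refine Finset.sum_congr rfl fun j _ => ?_
        show ((Q' j ×ˢ Q' j).filter (fun p => p.1 - p.2 = D2)).card
          = ((Q' j ×ˢ Q' j).filter (fun p => p.1 - p.2 = D2 ∧ p.1 ≠ p.2)).card
        congr 1
        apply Finset.filter_congr
        intro p hp
        constructor
        · intro h
          exact ⟨h, fun he => h1 (by rw [← h, he, sub_self])⟩
        · exact fun h => h.1
      refine ⟨hdB, ?_⟩
      have h := sum_offdiag B
      have h2 : (∑ x, ∑ y, if x = y then 0 else B x y) = outerCount Q' D2 := rfl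
      rw [h2, hQ'perf D2 h1, hdB] at h
      exact h.symm
    have hSB_eq : D2 = 0 → (∑ j, B j j) = q' * m' ∧ (∑ j, ∑ j', B j j') = q' * m' := by
      intro h1
      have hBd : ∀ j, B j j = m' := by
        intro j
        have himg : (Q' j ×ˢ Q' j).filter (fun p => p.1 - p.2 = D2)
            = (Q' j).image (fun a => (a, a)) := by
          ext ⟨x, y⟩
          simp only [Finset.mem_filter, Finset.mem_product, Finset.mem_image, h1, sub_eq_zero]
          constructor
          · rintro ⟨⟨hx, hy⟩, rfl⟩
            exact ⟨x, hx, rfl⟩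
          · rintro ⟨a, ha, heq⟩
            cases heq
            exact ⟨⟨ha, ha⟩, rfl⟩
        show ((Q' j ×ˢ Q' j).filter (fun p => p.1 - p.2 = D2)).card = m'
        rw [himg, Finset.card_image_of_injective _
          (fun a b h => congrArg Prod.fst h), hQ'card]
      have hBoff : ∀ j j', j ≠ j' → B j j' = 0 := by
        intro j j' hjj
        show ((Q' j ×ˢ Q' j').filter (fun p => p.1 - p.2 = D2)).card = 0
        rw [Finset.card_eq_zero, Finset.filter_eq_empty_iff]
        rintro ⟨x, y⟩ hxy
        simp only [Finset.mem_product] at hxy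
        rw [h1, sub_eq_zero]
        intro hxyeq
        have hxe : x = y := hxyeq
        subst hxe
        exact (Finset.disjoint_left.mp (hQ'disj _ _ hjj)) hxy.1 hxy.2
      have hd1 : (∑ j, B j j) = q' * m' := by
        rw [Finset.sum_congr rfl fun j _ => hBd j]
        simp [mul_comm]
      refine ⟨hd1, ?_⟩
      have : ∀ j : Fin q', (∑ j', B j j') = B j j := by
        intro j
        apply Finset.sum_eq_single j
        · exact fun j' _ h => hBoff j j' (fun he => h he.symm)
        · intro h; exact absurd (Finset.mem_univ j) h
      rw [Finset.sum_congr rfl fun j _ => this j]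
      exact hd1
    by_cases h1 : D1 = 0
    · have h2 : D2 ≠ 0 := by
        intro h2
        apply hd
        have hc0 : c d = 0 := Prod.ext h1 h2
        exact c.injective (hc0.trans (map_zero c).symm)
      obtain ⟨hDA, hSA⟩ := hSA_eq h1
      obtain ⟨hDB, hSB⟩ := hSB_ne h2
      rw [hSA, hDA, hSB, hDB] at hkey
      have hx : q * m * (ρ' + lam') = q * m * ρ' + q * m * lam' := by ring
      rw [hx] at hkey
      have ho : outerCount R d = q * m * ρ' := Nat.add_right_cancel hkey
      rw [ho]
      have hcm : ρ' * m * q = q * m * ρ' := by ring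
      exact le_trans (min_le_right _ _) (le_trans (min_le_right _ _) (le_of_eq hcm))
    · by_cases h2 : D2 = 0
      · obtain ⟨hDA, hSA⟩ := hSA_ne h1
        obtain ⟨hDB, hSB⟩ := hSB_eq h2
        rw [hSA, hDA, hSB, hDB] at hkey
        have hx : (ρ + lam) * (q' * m') = ρ * m' * q' + lam * (q' * m') := by ring
        rw [hx] at hkey
        have ho : outerCount R d = ρ * m' * q' := Nat.add_right_cancel hkey
        rw [ho]
        exact le_trans (min_le_right _ _) (min_le_left _ _)
      · obtain ⟨hDA, hSA⟩ := hSA_ne h1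
        obtain ⟨hDB, hSB⟩ := hSB_ne h2
        rw [hSA, hDA, hSB, hDB] at hkey
        have hx : (ρ + lam) * (ρ' + lam')
            = (ρ * ρ' + ρ * lam' + ρ' * lam) + lam * lam' := by ring
        rw [hx] at hkey
        have ho : outerCount R d = ρ * ρ' + ρ * lam' + ρ' * lam :=
          Nat.add_right_cancel hkey
        rw [ho]
        exact min_le_left _ _
end

section
/- In the direct product construction of a DSS from two perfect regular DSSs over coprime moduli v and v', where the first DSS also forms a DF(v,m,λ) and the second forms a DF(v',m',λ'), every outer difference (a,b) with a ≠ 0 and b ≠ 0 occurs exactly ρρ' + ρλ' + ρ'λ times in the product family {Q_i × Q'_j}. -/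
open Finset

lemma prodCount {α β : Type*} [AddCommGroup α] [AddCommGroup β] [DecidableEq α] [DecidableEq β]
    (s t : Finset α) (s' t' : Finset β) (a : α) (b : β) :
    (((s ×ˢ s') ×ˢ (t ×ˢ t')).filter (fun p => p.1 - p.2 = (a, b))).card =
    ((s ×ˢ t).filter (fun p => p.1 - p.2 = a)).card *
    ((s' ×ˢ t').filter (fun p => p.1 - p.2 = b)).card := by
  rw [← Finset.card_product]
  apply Finset.card_bij' (fun p _ => ((p.1.1, p.2.1), (p.1.2, p.2.2)))
    (fun p _ => ((p.1.1, p.2.1), (p.1.2, p.2.2)))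
  all_goals first
    | (intro p _; rfl)
    | (intro p hp; simp only [mem_filter, mem_product, Prod.ext_iff] at hp ⊢; tauto)

lemma innerEq {α : Type*} [AddCommGroup α] [DecidableEq α] {ι : Type*} [Fintype ι]
    (Q : ι → Finset α) (a : α) (ha : a ≠ 0) :
    ∑ i, ((Q i ×ˢ Q i).filter (fun p => p.1 - p.2 = a)).card = innerCount Q a := by
  rw [innerCount]
  refine sum_congr rfl fun i _ => ?_
  congr 1
  refine Finset.filter_congr fun p _ => ?_
  constructor
  · intro h
    refine ⟨h, fun he => ha ?_⟩
    rw [← h, he, sub_self]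
  · exact fun h => h.1

theorem stmt_2 (v v' m m' q q' ρ ρ' lam lam' : ℕ) (hv : 0 < v) (hv' : 0 < v')
    (hco : Nat.Coprime v v')
    (Q : Fin q → Finset (ZMod v)) (Q' : Fin q' → Finset (ZMod v'))
    (hQdisj : ∀ i j, i ≠ j → Disjoint (Q i) (Q j))
    (hQcard : ∀ i, (Q i).card = m)
    (hQperf : ∀ d : ZMod v, d ≠ 0 → outerCount Q d = ρ)
    (hQdf : ∀ d : ZMod v, d ≠ 0 → innerCount Q d = lam)
    (hQ'disj : ∀ i j, i ≠ j → Disjoint (Q' i) (Q' j))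
    (hQ'card : ∀ i, (Q' i).card = m')
    (hQ'perf : ∀ d : ZMod v', d ≠ 0 → outerCount Q' d = ρ')
    (hQ'df : ∀ d : ZMod v', d ≠ 0 → innerCount Q' d = lam') :
    ∀ a : ZMod v, ∀ b : ZMod v', a ≠ 0 → b ≠ 0 →
      outerCount (fun ij : Fin q × Fin q' => Q ij.1 ×ˢ Q' ij.2)
        (a, b) = ρ * ρ' + ρ * lam' + ρ' * lam := by
  intro a b ha hb
  classical
  set N : Fin q → Fin q → ℕ :=
    fun i k => ((Q i ×ˢ Q k).filter (fun p => p.1 - p.2 = a)).card with hN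
  set N' : Fin q' → Fin q' → ℕ :=
    fun j l => ((Q' j ×ˢ Q' l).filter (fun p => p.1 - p.2 = b)).card with hN'
  have houtQ : ∑ i, ∑ k, (if i = k then 0 else N i k) = ρ := hQperf a ha
  have houtQ' : ∑ j, ∑ l, (if j = l then 0 else N' j l) = ρ' := hQ'perf b hb
  have hinQ : ∑ i, N i i = lam := by rw [innerEq Q a ha]; exact hQdf a ha
  have hinQ' : ∑ j, N' j j = lam' := by rw [innerEq Q' b hb]; exact hQ'df b hb
  have hsumN' : ∑ j, ∑ l, N' j l = ρ' + lam' := by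
    have step : ∀ j l, N' j l =
        (if j = l then 0 else N' j l) + (if j = l then N' j l else 0) := by
      intro j l; split <;> simp
    calc ∑ j, ∑ l, N' j l
        = ∑ j, ((∑ l, if j = l then 0 else N' j l) + ∑ l, if j = l then N' j l else 0) := by
          refine sum_congr rfl fun j _ => ?_
          rw [← Finset.sum_add_distrib]
          exact sum_congr rfl fun l _ => step j l
      _ = (∑ j, ∑ l, if j = l then 0 else N' j l) + ∑ j, ∑ l, (if j = l then N' j l else 0) :=
          Finset.sum_add_distrib
      _ = ρ' + lam' := by
          rw [houtQ']
          congr 1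
          rw [← hinQ']
          exact sum_congr rfl fun j _ => by simp
  calc outerCount (fun ij : Fin q × Fin q' => Q ij.1 ×ˢ Q' ij.2) (a, b)
      = ∑ i, ∑ j, ∑ k, ∑ l,
          (if (i, j) = ((k, l) : Fin q × Fin q') then 0 else N i k * N' j l) := by
        rw [outerCount]
        rw [Fintype.sum_prod_type]
        refine sum_congr rfl fun i _ => ?_
        refine sum_congr rfl fun j _ => ?_
        rw [Fintype.sum_prod_type]
        refine sum_congr rfl fun k _ => sum_congr rfl fun l _ => ?_
        split
        · rfl
        · exact prodCount (Q i) (Q k) (Q' j) (Q' l) a b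
    _ = ∑ i, ∑ k, ∑ j, ∑ l,
          (if (i, j) = ((k, l) : Fin q × Fin q') then 0 else N i k * N' j l) :=
        sum_congr rfl fun i _ => Finset.sum_comm
    _ = ∑ i, ∑ k, (if i = k then N i i * ρ' else N i k * (ρ' + lam')) := by
        refine sum_congr rfl fun i _ => sum_congr rfl fun k _ => ?_
        by_cases hik : i = k
        · subst hik
          rw [if_pos rfl, ← houtQ', Finset.mul_sum]
          refine sum_congr rfl fun j _ => ?_
          rw [Finset.mul_sum]
          refine sum_congr rfl fun l _ => ?_
          simp only [Prod.mk.injEq, true_and]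
          split <;> simp
        · rw [if_neg hik, ← hsumN', Finset.mul_sum]
          refine sum_congr rfl fun j _ => ?_
          rw [Finset.mul_sum]
          refine sum_congr rfl fun l _ => ?_
          rw [if_neg (by simp [Prod.ext_iff, hik])]
    _ = lam * ρ' + ρ * (ρ' + lam') := by
        have step : ∀ i k, (if i = k then N i i * ρ' else N i k * (ρ' + lam')) =
            (if i = k then N i i * ρ' else 0) + (if i = k then 0 else N i k * (ρ' + lam')) := by
          intro i k; split <;> simp
        calc ∑ i, ∑ k, (if i = k then N i i * ρ' else N i k * (ρ' + lam'))
            = (∑ i, ∑ k, (if i = k then N i i * ρ' else 0)) +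
              ∑ i, ∑ k, (if i = k then 0 else N i k * (ρ' + lam')) := by
              rw [← Finset.sum_add_distrib]
              refine sum_congr rfl fun i _ => ?_
              rw [← Finset.sum_add_distrib]
              exact sum_congr rfl fun k _ => step i k
          _ = lam * ρ' + ρ * (ρ' + lam') := by
              congr 1
              · rw [← hinQ, Finset.sum_mul]
                exact sum_congr rfl fun i _ => by simp
              · rw [← houtQ, Finset.sum_mul]
                refine sum_congr rfl fun i _ => ?_
                rw [Finset.sum_mul]
                refine sum_congr rfl fun k _ => ?_
                split <;> simp
    _ = ρ * ρ' + ρ * lam' + ρ' * lam := by ring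
end

section
/- If there exist a frequency hopping sequence FHS(v, v−ρ; q) (equivalently, a partition of Z_v into q sets in which every nonzero outer difference occurs at least ρ times) and a perfect DSS of index ρ' and redundancy rate e' over Z_{v'} whose blocks form a DF(v',K,λ'), then the family of sets S_{i,x} = {v'·a + x : a ∈ Q_i} over Z_{vv'}, taken over all blocks Q_i of the FHS and all points x used by the DSS over Z_{v'}, is a DSS of index min(ρe'v', v(λ'+ρ')) and redundancy rate e' over Z_{vv'} on qv'e' sets. -/
set_option linter.unusedSectionVars false
set_option maxHeartbeats 1000000

/-- The base-`v'` packing map `(a, x) ↦ v'·a + x : ZMod (v·v')`. -/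
def phi (v v' : ℕ) (a : ZMod v) (x : ZMod v') : ZMod (v * v') :=
  ((v' * a.val + x.val : ℕ) : ZMod (v * v'))

section basics
variable (v v' : ℕ) [NeZero v] [NeZero v']

lemma my_mul_neZero : NeZero (v * v') := ⟨mul_ne_zero (NeZero.ne v) (NeZero.ne v')⟩

attribute [local instance] my_mul_neZero

lemma phi_lt (a : ZMod v) (x : ZMod v') : v' * a.val + x.val < v * v' := by
  have ha := ZMod.val_lt a
  have hx := ZMod.val_lt x
  calc v' * a.val + x.val < v' * a.val + v' := by omega
    _ = v' * (a.val + 1) := by ring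
    _ ≤ v' * v := Nat.mul_le_mul_left _ (by omega)
    _ = v * v' := Nat.mul_comm _ _

lemma phi_val (a : ZMod v) (x : ZMod v') : (phi v v' a x).val = v' * a.val + x.val :=
  ZMod.val_cast_of_lt (phi_lt v v' a x)

lemma phi_inj {a b : ZMod v} {x y : ZMod v'} (h : phi v v' a x = phi v v' b y) :
    a = b ∧ x = y := by
  have h' : v' * a.val + x.val = v' * b.val + y.val := by
    rw [← phi_val v v' a x, ← phi_val v v' b y, h]
  have hx := ZMod.val_lt x
  have hy := ZMod.val_lt y
  have h1 : (v' * a.val + x.val) % v' = x.val := by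
    rw [Nat.add_comm, Nat.add_mul_mod_self_left, Nat.mod_eq_of_lt hx]
  have h2 : (v' * b.val + y.val) % v' = y.val := by
    rw [Nat.add_comm, Nat.add_mul_mod_self_left, Nat.mod_eq_of_lt hy]
  rw [h'] at h1
  have hxy : x.val = y.val := by omega
  have hab : a.val = b.val := by
    have hv' : 0 < v' := Nat.pos_of_ne_zero (NeZero.ne v')
    have : v' * a.val = v' * b.val := by omega
    exact Nat.eq_of_mul_eq_mul_left hv' this
  exact ⟨ZMod.val_injective v hab, ZMod.val_injective v' hxy⟩

lemma phi_bij : Function.Bijective (fun p : ZMod v × ZMod v' => phi v v' p.1 p.2) := by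
  rw [Fintype.bijective_iff_injective_and_card]
  constructor
  · intro p q h
    obtain ⟨h1, h2⟩ := phi_inj v v' h
    exact Prod.ext h1 h2
  · simp [ZMod.card]

lemma phi_natCast (m : ℕ) (x : ZMod v') :
    phi v v' (m : ZMod v) x = ((v' * m + x.val : ℕ) : ZMod (v * v')) := by
  unfold phi
  rw [ZMod.val_natCast]
  have hm : v' * m + x.val = v * v' * (m / v) + (v' * (m % v) + x.val) := by
    conv_lhs => rw [← Nat.div_add_mod m v]
    ring
  rw [hm]
  push_cast
  have hz : ((v : ZMod (v * v')) * (v' : ZMod (v * v'))) = 0 := by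
    rw [← Nat.cast_mul]; exact ZMod.natCast_self _
  rw [hz, zero_mul, zero_add]

lemma phi_add (a b : ZMod v) (x y : ZMod v') :
    phi v v' a x + phi v v' b y
      = phi v v' (a + b + (((x.val + y.val) / v' : ℕ) : ZMod v)) (x + y) := by
  have h1 : a + b + (((x.val + y.val) / v' : ℕ) : ZMod v)
      = ((a.val + b.val + (x.val + y.val) / v' : ℕ) : ZMod v) := by
    push_cast
    simp [ZMod.natCast_val, ZMod.cast_id]
  rw [h1, phi_natCast]
  have hval : x.val + y.val = v' * ((x.val + y.val) / v') + (x + y).val := by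
    rw [ZMod.val_add]
    conv_lhs => rw [← Nat.div_add_mod (x.val + y.val) v']
  have hcast : ((x.val : ZMod (v * v')) + (y.val : ZMod (v * v')))
      = (v' : ZMod (v * v')) * ((x.val + y.val) / v' : ℕ) + ((x + y).val : ℕ) := by
    exact_mod_cast congrArg (Nat.cast : ℕ → ZMod (v * v')) hval
  unfold phi
  push_cast
  linear_combination hcast

lemma phi_sub_eq_iff (a b c : ZMod v) (x y w : ZMod v') :
    phi v v' a x - phi v v' b y = phi v v' c w
      ↔ x = y + w ∧ a = b + c + (((y.val + w.val) / v' : ℕ) : ZMod v) := by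
  rw [sub_eq_iff_eq_add, add_comm (phi v v' c w) (phi v v' b y), phi_add]
  constructor
  · intro h
    obtain ⟨h1, h2⟩ := phi_inj v v' h
    exact ⟨h2, h1⟩
  · rintro ⟨h2, h1⟩
    rw [h1, h2]

lemma card_image_pairs (A B : Finset (ZMod v)) (c : ZMod v) (x y w : ZMod v') :
    (((A.image fun a => phi v v' a x) ×ˢ (B.image fun b => phi v v' b y)).filter
        (fun p => p.1 - p.2 = phi v v' c w)).card
      = if x = y + w then
          ((A ×ˢ B).filter
            (fun p => p.1 - p.2 = c + (((y.val + w.val) / v' : ℕ) : ZMod v))).card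
        else 0 := by
  set κ : ZMod v := (((y.val + w.val) / v' : ℕ) : ZMod v) with hκ
  by_cases hxy : x = y + w
  · rw [if_pos hxy]
    have himg : ((A.image fun a => phi v v' a x) ×ˢ (B.image fun b => phi v v' b y)).filter
          (fun p => p.1 - p.2 = phi v v' c w)
        = ((A ×ˢ B).filter (fun p => p.1 - p.2 = c + κ)).image
            (fun p => (phi v v' p.1 x, phi v v' p.2 y)) := by
      ext s
      simp only [Finset.mem_filter, Finset.mem_product, Finset.mem_image]
      constructor
      · rintro ⟨⟨⟨a, ha, has⟩, ⟨b, hb, hbs⟩⟩, hdiff⟩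
        refine ⟨(a, b), ⟨⟨ha, hb⟩, ?_⟩, by rw [has, hbs]⟩
        have : phi v v' a x - phi v v' b y = phi v v' c w := by rw [has, hbs]; exact hdiff
        obtain ⟨-, h2⟩ := (phi_sub_eq_iff v v' a b c x y w).mp this
        rw [h2]; ring
      · rintro ⟨⟨a, b⟩, ⟨⟨ha, hb⟩, hdiff⟩, rfl⟩
        refine ⟨⟨⟨a, ha, rfl⟩, ⟨b, hb, rfl⟩⟩, ?_⟩
        apply (phi_sub_eq_iff v v' a b c x y w).mpr
        refine ⟨hxy, ?_⟩
        rw [sub_eq_iff_eq_add] at hdiff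
        simp only at hdiff
        rw [hdiff, hκ]; ring
    rw [himg]
    apply Finset.card_image_of_injective
    intro p q h
    obtain ⟨h1, -⟩ := phi_inj v v' (congrArg Prod.fst h)
    obtain ⟨h2, -⟩ := phi_inj v v' (congrArg Prod.snd h)
    exact Prod.ext h1 h2
  · rw [if_neg hxy, Finset.card_eq_zero, Finset.filter_eq_empty_iff]
    rintro ⟨s, t⟩ hst
    rw [Finset.mem_product] at hst
    obtain ⟨hs, ht⟩ := hst
    obtain ⟨a, -, rfl⟩ := Finset.mem_image.mp hs
    obtain ⟨b, -, rfl⟩ := Finset.mem_image.mp ht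
    intro hdiff
    exact hxy ((phi_sub_eq_iff v v' a b c x y w).mp hdiff).1

end basics

section counting
variable {G : Type*} [AddCommGroup G] [DecidableEq G] {ι : Type*} [Fintype ι] [DecidableEq ι]

lemma card_pairs (A B : Finset G) (e : G) :
    ((A ×ˢ B).filter (fun p => p.1 - p.2 = e)).card
      = (A.filter (fun a => a - e ∈ B)).card := by
  have himg : (A ×ˢ B).filter (fun p => p.1 - p.2 = e)
      = (A.filter (fun a => a - e ∈ B)).image (fun a => (a, a - e)) := by
    ext p
    simp only [Finset.mem_filter, Finset.mem_product, Finset.mem_image]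
    constructor
    · rintro ⟨⟨h1, h2⟩, h3⟩
      refine ⟨p.1, ⟨h1, ?_⟩, ?_⟩
      · have : p.2 = p.1 - e := by rw [← h3]; abel
        rw [← this]; exact h2
      · have : p.2 = p.1 - e := by rw [← h3]; abel
        rw [← this]
    · rintro ⟨a, ⟨h1, h2⟩, h3⟩
      subst h3
      exact ⟨⟨h1, h2⟩, sub_sub_cancel a e⟩
  rw [himg, Finset.card_image_of_injective _ (fun a b h => by
    simpa using congrArg Prod.fst h)]

lemma sum_card_filter_mem (R : ι → Finset G)
    (hdisj : ∀ i j, i ≠ j → Disjoint (R i) (R j)) (A : Finset G) (f : G → G) :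
    ∑ j : ι, (A.filter (fun x => f x ∈ R j)).card
      = (A.filter (fun x => f x ∈ Finset.univ.biUnion R)).card := by
  simp only [Finset.card_filter]
  rw [Finset.sum_comm]
  apply Finset.sum_congr rfl
  intro x _
  by_cases h : f x ∈ Finset.univ.biUnion R
  · obtain ⟨j₀, _, hj₀⟩ := Finset.mem_biUnion.mp h
    rw [if_pos h]
    have hfil : (Finset.univ.filter (fun j => f x ∈ R j)) = {j₀} := by
      ext j
      simp only [Finset.mem_filter, Finset.mem_univ, true_and, Finset.mem_singleton]
      constructor
      · intro hj
        by_contra hne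
        exact (Finset.disjoint_left.mp (hdisj j j₀ hne) hj) hj₀
      · rintro rfl; exact hj₀
    calc ∑ j : ι, (if f x ∈ R j then 1 else 0)
        = (Finset.univ.filter (fun j => f x ∈ R j)).card := by
          rw [Finset.card_filter]
      _ = 1 := by rw [hfil, Finset.card_singleton]
  · rw [if_neg h]
    apply Finset.sum_eq_zero
    intro j _
    rw [if_neg (fun hj => h (Finset.mem_biUnion.mpr ⟨j, Finset.mem_univ j, hj⟩))]

lemma sum_sum_card_eq (R : ι → Finset G)
    (hdisj : ∀ i j, i ≠ j → Disjoint (R i) (R j)) (e : G) :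
    ∑ i : ι, ∑ j : ι, ((R i ×ˢ R j).filter (fun p => p.1 - p.2 = e)).card
      = ((Finset.univ.biUnion R).filter (fun a => a - e ∈ Finset.univ.biUnion R)).card := by
  have h1 : ∀ i, ∑ j : ι, ((R i ×ˢ R j).filter (fun p => p.1 - p.2 = e)).card
      = ((R i).filter (fun a => a - e ∈ Finset.univ.biUnion R)).card := by
    intro i
    simp only [card_pairs]
    exact sum_card_filter_mem R hdisj (R i) (fun a => a - e)
  simp only [h1]
  rw [← Finset.card_biUnion, Finset.filter_biUnion]
  intro i _ j _ hne
  exact Finset.disjoint_filter_filter (hdisj i j hne)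

lemma sum_sum_split (R : ι → Finset G) (w : G) (hw : w ≠ 0) :
    ∑ i : ι, ∑ j : ι, ((R i ×ˢ R j).filter (fun p => p.1 - p.2 = w)).card
      = outerCount R w + innerCount R w := by
  have hdiag : ∀ i, ((R i ×ˢ R i).filter (fun p => p.1 - p.2 = w)).card
      = ((R i ×ˢ R i).filter (fun p => p.1 - p.2 = w ∧ p.1 ≠ p.2)).card := by
    intro i
    congr 1
    apply Finset.filter_congr
    intro p _
    constructor
    · intro h
      exact ⟨h, fun hne => hw (by rw [← h, hne, sub_self])⟩
    · exact And.left
  have hrow : ∀ i, ∑ j : ι, ((R i ×ˢ R j).filter (fun p => p.1 - p.2 = w)).card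
      = (∑ j : ι, if i = j then 0 else ((R i ×ˢ R j).filter (fun p => p.1 - p.2 = w)).card)
        + ((R i ×ˢ R i).filter (fun p => p.1 - p.2 = w)).card := by
    intro i
    set f : ι → ℕ := fun j => ((R i ×ˢ R j).filter (fun p => p.1 - p.2 = w)).card with hf
    rw [← Finset.sum_erase_add Finset.univ f (Finset.mem_univ i)]
    congr 1
    rw [← Finset.sum_erase_add Finset.univ _ (Finset.mem_univ i), if_pos rfl, add_zero]
    apply Finset.sum_congr rfl
    intro j hj
    rw [if_neg (Ne.symm (Finset.mem_erase.mp hj).1)]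
  simp only [hrow]
  rw [Finset.sum_add_distrib]
  unfold outerCount innerCount
  congr 1
  exact Finset.sum_congr rfl (fun i _ => hdiag i)

lemma sum_comm3 {α β γ M : Type*} [AddCommMonoid M] [Fintype α] [Fintype β] [Fintype γ]
    (f : α → β → γ → M) :
    (∑ a : α, ∑ b : β, ∑ c : γ, f a b c) = ∑ c : γ, ∑ a : α, ∑ b : β, f a b c := by
  calc (∑ a : α, ∑ b : β, ∑ c : γ, f a b c)
      = ∑ a : α, ∑ c : γ, ∑ b : β, f a b c :=
        Finset.sum_congr rfl (fun a _ => Finset.sum_comm)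
    _ = ∑ c : γ, ∑ a : α, ∑ b : β, f a b c := Finset.sum_comm

lemma sum_ite_zero' {α : Type*} (s : Finset α) (P : Prop) [Decidable P] (f : α → ℕ) :
    (∑ a ∈ s, if P then f a else 0) = if P then ∑ a ∈ s, f a else 0 := by
  split_ifs <;> simp

end counting

theorem stmt_3 (v v' q q' ρ ρ' lam' : ℕ) [NeZero v] (hv' : 0 < v')
    (Q : Fin q → Finset (ZMod v)) (Q' : Fin q' → Finset (ZMod v'))
    -- the FHS: a partition of Z_v into q sets every nonzero outer difference of which
    -- occurs at least ρ times
    (hQdisj : ∀ i j, i ≠ j → Disjoint (Q i) (Q j))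
    (hQcover : ∀ x : ZMod v, ∃ i, x ∈ Q i)
    (hQidx : ∀ d : ZMod v, d ≠ 0 → ρ ≤ outerCount Q d)
    -- the perfect DSS over Z_{v'} forming a DF(v',K,λ')
    (hQ'disj : ∀ i j, i ≠ j → Disjoint (Q' i) (Q' j))
    (hQ'perf : ∀ d : ZMod v', d ≠ 0 → outerCount Q' d = ρ')
    (hQ'df : ∀ d : ZMod v', d ≠ 0 → innerCount Q' d = lam') :
    -- the set of points used by the DSS over Z_{v'}; its cardinality is e'·v'
    let P : Finset (ZMod v') := Finset.univ.biUnion Q'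
    let S : Fin q × {x : ZMod v' // x ∈ P} → Finset (ZMod (v * v')) := fun ix =>
      (Q ix.1).image (fun a => ((v' * a.val + ix.2.val.val : ℕ) : ZMod (v * v')))
    -- the resulting family is a DSS of index min(ρ e'v', v(λ'+ρ')), of redundancy rate
    -- e' (i.e., it uses e'·v·v' = v·|P| symbols of Z_{vv'}), on q·v'·e' = q·|P| sets
    (∀ a b, a ≠ b → Disjoint (S a) (S b)) ∧
    (Finset.univ.biUnion S).card = v * P.card ∧
    Fintype.card (Fin q × {x : ZMod v' // x ∈ P}) = q * P.card ∧
    (∀ d : ZMod (v * v'), d ≠ 0 →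
      min (ρ * P.card) (v * (lam' + ρ')) ≤ outerCount S d) := by
  intro P S
  haveI : NeZero v' := ⟨hv'.ne'⟩
  haveI : NeZero (v * v') := ⟨mul_ne_zero (NeZero.ne v) (NeZero.ne v')⟩
  have hveq : (Finset.univ : Finset (ZMod v)).card = v := by
    rw [Finset.card_univ, ZMod.card]
  have hS : ∀ ix : Fin q × {x : ZMod v' // x ∈ P},
      S ix = (Q ix.1).image (fun a => phi v v' a ix.2.val) := fun ix => rfl
  have hbiU : Finset.univ.biUnion Q = Finset.univ := by
    ext a
    simp only [Finset.mem_biUnion, Finset.mem_univ, true_and, iff_true]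
    exact hQcover a
  refine ⟨?_, ?_, ?_, ?_⟩
  · -- disjointness
    rintro ⟨i, x⟩ ⟨j, y⟩ hne
    rw [Finset.disjoint_left]
    intro z hz1 hz2
    rw [hS] at hz1 hz2
    obtain ⟨a, ha, haz⟩ := Finset.mem_image.mp hz1
    obtain ⟨b, hb, hbz⟩ := Finset.mem_image.mp hz2
    obtain ⟨hab, hxy⟩ := phi_inj v v' (haz.trans hbz.symm)
    subst hab
    have hxy' : x = y := Subtype.ext hxy
    subst hxy'
    have hij : i ≠ j := fun h => hne (by rw [h])
    exact Finset.disjoint_left.mp (hQdisj i j hij) ha hb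
  · -- cardinality of the union
    have himg : Finset.univ.biUnion S
        = (Finset.univ ×ˢ P).image (fun p : ZMod v × ZMod v' => phi v v' p.1 p.2) := by
      ext z
      simp only [Finset.mem_biUnion, Finset.mem_image, Finset.mem_univ, true_and,
        Finset.mem_product]
      constructor
      · rintro ⟨⟨i, x⟩, hz⟩
        rw [hS] at hz
        obtain ⟨a, ha, rfl⟩ := Finset.mem_image.mp hz
        exact ⟨(a, x.val), x.2, rfl⟩
      · rintro ⟨⟨a, x⟩, hx, rfl⟩
        obtain ⟨i, hi⟩ := hQcover a
        exact ⟨(i, ⟨x, hx⟩), Finset.mem_image.mpr ⟨a, hi, rfl⟩⟩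
    rw [himg, Finset.card_image_of_injective _ (phi_bij v v').injective,
      Finset.card_product, hveq]
  · -- number of sets
    simp [Fintype.card_coe]
  · -- the index bound
    intro d hd
    obtain ⟨⟨c, w⟩, hcw⟩ := (phi_bij v v').surjective d
    simp only at hcw
    subst hcw
    have hF : ∀ (i j : Fin q) (x y : {t : ZMod v' // t ∈ P}),
        ((S (i, x) ×ˢ S (j, y)).filter (fun p => p.1 - p.2 = phi v v' c w)).card
          = if (x : ZMod v') = (y : ZMod v') + w then
              ((Q i ×ˢ Q j).filter (fun p =>
                p.1 - p.2 = c + ((((y : ZMod v').val + w.val) / v' : ℕ) : ZMod v))).card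
            else 0 := by
      intro i j x y
      rw [hS, hS]
      exact card_image_pairs v v' (Q i) (Q j) c x.val y.val w
    unfold outerCount
    by_cases hw : w = 0
    · -- case w = 0 : use the FHS property
      subst hw
      have hc : c ≠ 0 := by
        rintro rfl
        apply hd
        show phi v v' 0 0 = 0
        simp [phi, ZMod.val_zero]
      refine le_trans (min_le_left _ _) ?_
      have hκ0 : ∀ t : ZMod v',
          (((t.val + (0 : ZMod v').val) / v' : ℕ) : ZMod v) = 0 := by
        intro t
        rw [ZMod.val_zero, Nat.add_zero, Nat.div_eq_of_lt (ZMod.val_lt t), Nat.cast_zero]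
      have hstep1 : ∀ x : {t : ZMod v' // t ∈ P},
          (∑ i : Fin q, ∑ j : Fin q, if ((i, x) : Fin q × {t : ZMod v' // t ∈ P}) = (j, x)
              then 0
              else ((S (i, x) ×ˢ S (j, x)).filter
                (fun p => p.1 - p.2 = phi v v' c 0)).card)
            = outerCount Q c := by
        intro x
        unfold outerCount
        apply Finset.sum_congr rfl
        intro i _
        apply Finset.sum_congr rfl
        intro j _
        simp only [Prod.mk.injEq, and_true]
        have hval : ((S (i, x) ×ˢ S (j, x)).filter
              (fun p => p.1 - p.2 = phi v v' c 0)).card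
            = ((Q i ×ˢ Q j).filter (fun p => p.1 - p.2 = c)).card := by
          rw [hF i j x x, if_pos (add_zero ((x : ZMod v'))).symm, hκ0, add_zero]
        rw [hval]
      have hsub : ∀ I : Fin q × {t : ZMod v' // t ∈ P},
          (∑ j : Fin q, if I = (j, I.2) then 0
              else ((S I ×ˢ S (j, I.2)).filter (fun p => p.1 - p.2 = phi v v' c 0)).card)
            ≤ ∑ J : Fin q × {t : ZMod v' // t ∈ P}, if I = J then 0
              else ((S I ×ˢ S J).filter (fun p => p.1 - p.2 = phi v v' c 0)).card := by
        intro I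
        have hinj : ∀ a ∈ (Finset.univ : Finset (Fin q)), ∀ b ∈ Finset.univ,
            ((a, I.2) : Fin q × {t : ZMod v' // t ∈ P}) = (b, I.2) → a = b := by
          intro a _ b _ h
          exact (Prod.mk.injEq _ _ _ _ ▸ h).1
        calc (∑ j : Fin q, if I = (j, I.2) then 0
              else ((S I ×ˢ S (j, I.2)).filter (fun p => p.1 - p.2 = phi v v' c 0)).card)
            = ∑ J ∈ Finset.univ.image (fun j : Fin q => ((j, I.2) : Fin q × {t : ZMod v' // t ∈ P})),
                (if I = J then 0
                  else ((S I ×ˢ S J).filter (fun p => p.1 - p.2 = phi v v' c 0)).card) := by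
              rw [Finset.sum_image hinj]
          _ ≤ _ := Finset.sum_le_sum_of_subset (Finset.subset_univ _)
      calc ρ * P.card = ∑ _x : {t : ZMod v' // t ∈ P}, ρ := by
            rw [Finset.sum_const, Finset.card_univ, Fintype.card_coe, smul_eq_mul,
              Nat.mul_comm]
        _ ≤ ∑ x : {t : ZMod v' // t ∈ P}, ∑ i : Fin q, ∑ j : Fin q,
              (if ((i, x) : Fin q × {t : ZMod v' // t ∈ P}) = (j, x) then 0
                else ((S (i, x) ×ˢ S (j, x)).filter
                  (fun p => p.1 - p.2 = phi v v' c 0)).card) :=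
            Finset.sum_le_sum (fun x _ => by rw [hstep1 x]; exact hQidx c hc)
        _ = ∑ i : Fin q, ∑ x : {t : ZMod v' // t ∈ P}, ∑ j : Fin q,
              (if ((i, x) : Fin q × {t : ZMod v' // t ∈ P}) = (j, x) then 0
                else ((S (i, x) ×ˢ S (j, x)).filter
                  (fun p => p.1 - p.2 = phi v v' c 0)).card) := Finset.sum_comm
        _ = ∑ I : Fin q × {t : ZMod v' // t ∈ P}, ∑ j : Fin q,
              (if I = (j, I.2) then 0
                else ((S I ×ˢ S (j, I.2)).filter
                  (fun p => p.1 - p.2 = phi v v' c 0)).card) := by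
            rw [Fintype.sum_prod_type]
        _ ≤ _ := Finset.sum_le_sum (fun I _ => hsub I)
    · -- case w ≠ 0 : use the DSS/DF properties
      refine le_trans (min_le_right _ _) ?_
      have hv_count : ∀ e : ZMod v,
          (∑ i : Fin q, ∑ j : Fin q,
            ((Q i ×ˢ Q j).filter (fun p => p.1 - p.2 = e)).card) = v := by
        intro e
        rw [sum_sum_card_eq Q hQdisj e, hbiU,
          Finset.filter_true_of_mem (fun a _ => Finset.mem_univ _), hveq]
      have hdrop : ∀ I J : Fin q × {t : ZMod v' // t ∈ P},
          (if I = J then 0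
            else ((S I ×ˢ S J).filter (fun p => p.1 - p.2 = phi v v' c w)).card)
          = ((S I ×ˢ S J).filter (fun p => p.1 - p.2 = phi v v' c w)).card := by
        rintro ⟨i, x⟩ ⟨j, y⟩
        by_cases h : ((i, x) : Fin q × {t : ZMod v' // t ∈ P}) = (j, y)
        · rw [if_pos h]
          injection h with h1 h2
          subst h1; subst h2
          rw [hF i i x x, if_neg (fun hh => hw (left_eq_add.mp hh))]
        · rw [if_neg h]
      have hPP : (P.filter (fun t => t - w ∈ P)).card = ρ' + lam' := by
        have e1 : (∑ i : Fin q', ∑ j : Fin q',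
              ((Q' i ×ˢ Q' j).filter (fun p => p.1 - p.2 = w)).card)
            = (P.filter (fun t => t - w ∈ P)).card := sum_sum_card_eq Q' hQ'disj w
        have e2 := sum_sum_split Q' w hw
        rw [hQ'perf w hw, hQ'df w hw] at e2
        omega
      have hmain : (∑ I : Fin q × {t : ZMod v' // t ∈ P},
            ∑ J : Fin q × {t : ZMod v' // t ∈ P},
            if I = J then 0
              else ((S I ×ˢ S J).filter (fun p => p.1 - p.2 = phi v v' c w)).card)
          = v * (ρ' + lam') := by
        simp only [hdrop]
        simp only [Fintype.sum_prod_type, hF]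
        have step1 : ∀ (x : {t : ZMod v' // t ∈ P}),
            (∑ i : Fin q, ∑ j : Fin q, ∑ y : {t : ZMod v' // t ∈ P},
              if (x : ZMod v') = (y : ZMod v') + w then
                ((Q i ×ˢ Q j).filter (fun p =>
                  p.1 - p.2 = c + ((((y : ZMod v').val + w.val) / v' : ℕ) : ZMod v))).card
              else 0)
            = ∑ y : {t : ZMod v' // t ∈ P},
                if (x : ZMod v') = (y : ZMod v') + w then v else 0 := by
          intro x
          rw [sum_comm3 (fun (i j : Fin q) (y : {t : ZMod v' // t ∈ P}) =>
              if (x : ZMod v') = (y : ZMod v') + w then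
                ((Q i ×ˢ Q j).filter (fun p =>
                  p.1 - p.2 = c + ((((y : ZMod v').val + w.val) / v' : ℕ) : ZMod v))).card
              else 0)]
          apply Finset.sum_congr rfl
          intro y _
          simp only [sum_ite_zero']
          rw [hv_count]
        rw [Finset.sum_comm]
        simp only [step1]
        have step2 : ∀ x : ZMod v',
            (∑ y : {t : ZMod v' // t ∈ P},
              if x = (y : ZMod v') + w then v else 0)
            = if x - w ∈ P then v else 0 := by
          intro x
          rw [Finset.sum_coe_sort P (fun t => if x = t + w then v else 0)]
          have hiff : ∀ t : ZMod v', (x = t + w) = (t = x - w) := by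
            intro t
            apply propext
            constructor
            · intro h; rw [h]; abel
            · intro h; rw [h]; abel
          simp only [hiff]
          exact Finset.sum_ite_eq' P (x - w) (fun _ => v)
        simp only [step2]
        rw [Finset.sum_coe_sort P (fun x => if x - w ∈ P then v else 0)]
        rw [← Finset.sum_filter, Finset.sum_const, smul_eq_mul, Nat.mul_comm, hPP]
      rw [hmain, Nat.add_comm lam' ρ']
end

section
/- If there exist a partition of Z_v into q sets whose outer differences each occur at least ρ times (an FHS(v,v−ρ;q)) and a cyclic difference set DS(v',m',λ'), then there exists a DSS over Z_{vv'} of index min(ρm', vλ') and redundancy rate m'/v', based on qm' sets. -/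
open Finset

private def gmap (v v' : ℕ) : ZMod v →+ ZMod (v * v') :=
  ZMod.lift v ⟨(AddMonoidHom.mulLeft ((v' : ZMod (v * v')))).comp (Int.castAddHom _), by
    have : ((v : ℤ) : ZMod (v * v')) = ((v : ℕ) : ZMod (v * v')) := by push_cast; ring
    simp only [AddMonoidHom.comp_apply, Int.coe_castAddHom, AddMonoidHom.coe_mulLeft, this]
    rw [← Nat.cast_mul, mul_comm v' v, ZMod.natCast_self]⟩

private theorem gmap_nat (v v' n : ℕ) :
    gmap v v' ((n : ℕ) : ZMod v) = (v' : ZMod (v * v')) * n := by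
  have h : ((n : ℕ) : ZMod v) = ((n : ℤ) : ZMod v) := by push_cast; ring
  rw [h, gmap, ZMod.lift_coe]
  simp

private theorem card_filter_image_prod {α β : Type*} [DecidableEq α] [DecidableEq β]
    (s t : Finset α) (f₁ f₂ : α → β) (h₁ : Function.Injective f₁) (h₂ : Function.Injective f₂)
    (P : β × β → Prop) [DecidablePred P] :
    (((s.image f₁) ×ˢ (t.image f₂)).filter P).card
      = ((s ×ˢ t).filter (fun p => P (f₁ p.1, f₂ p.2))).card := by
  rw [eq_comm]
  apply Finset.card_bij (fun p _ => (f₁ p.1, f₂ p.2))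
  · intro p hp
    simp only [Finset.mem_filter, Finset.mem_product, Finset.mem_image] at hp ⊢
    exact ⟨⟨⟨p.1, hp.1.1, rfl⟩, ⟨p.2, hp.1.2, rfl⟩⟩, hp.2⟩
  · intro p hp r hr h
    rw [Prod.ext_iff] at h ⊢
    exact ⟨h₁ h.1, h₂ h.2⟩
  · intro p hp
    simp only [Finset.mem_filter, Finset.mem_product, Finset.mem_image] at hp
    obtain ⟨⟨⟨a, ha, hfa⟩, ⟨b, hb, hfb⟩⟩, hP⟩ := hp
    refine ⟨(a, b), ?_, ?_⟩
    · simp only [Finset.mem_filter, Finset.mem_product]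
      refine ⟨⟨ha, hb⟩, ?_⟩
      simpa [hfa, hfb] using hP
    · simp [hfa, hfb]

private theorem sum_card_filter_prod {G : Type*} [DecidableEq G] [Fintype G] {q : ℕ}
    (Q : Fin q → Finset G)
    (hone : ∀ x : G, (Finset.univ.filter (fun i => x ∈ Q i)).card = 1)
    (P : G × G → Prop) [DecidablePred P] :
    ∑ i, ∑ j, ((Q i ×ˢ Q j).filter P).card = (Finset.univ.filter P).card := by
  have h1 : ∀ i j : Fin q, ((Q i ×ˢ Q j).filter P).card
      = ∑ p ∈ Finset.univ.filter P,
          (if p.1 ∈ Q i then 1 else 0) * (if p.2 ∈ Q j then 1 else 0) := by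
    intro i j
    have he : (Q i ×ˢ Q j).filter P
        = (Finset.univ.filter P).filter (fun p => p.1 ∈ Q i ∧ p.2 ∈ Q j) := by
      ext p
      simp only [Finset.mem_filter, Finset.mem_product, Finset.mem_univ, true_and]
      tauto
    rw [he, Finset.card_filter]
    refine Finset.sum_congr rfl fun p _ => ?_
    by_cases h1 : p.1 ∈ Q i <;> by_cases h2 : p.2 ∈ Q j <;> simp [h1, h2]
  calc ∑ i, ∑ j, ((Q i ×ˢ Q j).filter P).card
      = ∑ i, ∑ j, ∑ p ∈ Finset.univ.filter P,
          (if p.1 ∈ Q i then 1 else 0) * (if p.2 ∈ Q j then 1 else 0) := by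
        simp only [h1]
    _ = ∑ i, ∑ p ∈ Finset.univ.filter P, ∑ j : Fin q,
          (if p.1 ∈ Q i then 1 else 0) * (if p.2 ∈ Q j then 1 else 0) := by
        exact Finset.sum_congr rfl fun i _ => Finset.sum_comm
    _ = ∑ p ∈ Finset.univ.filter P, ∑ i : Fin q, ∑ j : Fin q,
          (if p.1 ∈ Q i then 1 else 0) * (if p.2 ∈ Q j then 1 else 0) := Finset.sum_comm
    _ = ∑ p ∈ Finset.univ.filter P,
          (∑ i : Fin q, if p.1 ∈ Q i then 1 else 0) * (∑ j : Fin q, if p.2 ∈ Q j then 1 else 0) := by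
        exact Finset.sum_congr rfl fun p _ => (Finset.sum_mul_sum _ _ _ _).symm
    _ = ∑ _p ∈ Finset.univ.filter P, 1 := by
        refine Finset.sum_congr rfl fun p _ => ?_
        rw [← Finset.card_filter, ← Finset.card_filter, hone, hone]
    _ = (Finset.univ.filter P).card := by
        rw [Finset.sum_const, smul_eq_mul, mul_one]

private theorem card_sub_eq {G : Type*} [AddCommGroup G] [DecidableEq G] [Fintype G] (a : G) :
    ((Finset.univ : Finset (G × G)).filter (fun p => p.1 - p.2 = a)).card = Fintype.card G := by
  rw [← Finset.card_univ]
  apply Finset.card_bij (fun p _ => p.2)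
  · intro p _; exact Finset.mem_univ _
  · intro p hp r hr h
    simp only [Finset.mem_filter] at hp hr
    have h1 : p.1 = a + p.2 := by rw [← hp.2]; abel
    have h2 : r.1 = a + r.2 := by rw [← hr.2]; abel
    exact Prod.ext (by rw [h1, h2, h]) h
  · intro b _
    exact ⟨(a + b, b), by simp, rfl⟩

theorem stmt_4 (v v' q m' lam' ρ : ℕ) [NeZero v] (hv' : 0 < v')
    (Q : Fin q → Finset (ZMod v))
    -- the FHS: a partition of Z_v into q sets forming a DSS of index ρ
    (hQdisj : ∀ i j, i ≠ j → Disjoint (Q i) (Q j))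
    (hQcover : ∀ x : ZMod v, ∃ i, x ∈ Q i)
    (hQidx : ∀ d : ZMod v, d ≠ 0 → ρ ≤ outerCount Q d)
    -- the cyclic difference set DS(v',m',λ')
    (D : Finset (ZMod v')) (hDcard : D.card = m')
    (hD : ∀ d : ZMod v', d ≠ 0 →
      ((D ×ˢ D).filter (fun p => p.1 - p.2 = d ∧ p.1 ≠ p.2)).card = lam') :
    -- there is a DSS over Z_{vv'} on q·m' sets, of redundancy rate m'/v'
    -- (i.e., using v·v'·m'/v' = v·m' symbols), and of index min(ρm', vλ')
    ∃ S : Fin (q * m') → Finset (ZMod (v * v')),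
      (∀ a b, a ≠ b → Disjoint (S a) (S b)) ∧
      (Finset.univ.biUnion S).card = v * m' ∧
      (∀ d : ZMod (v * v'), d ≠ 0 → min (ρ * m') (v * lam') ≤ outerCount S d) := by
  haveI : NeZero v' := ⟨hv'.ne'⟩
  haveI : NeZero (v * v') := ⟨Nat.mul_ne_zero (NeZero.ne v) hv'.ne'⟩
  -- the embedding `g : Z_v →+ Z_{vv'}`, `a ↦ v'·a`
  have hginj : Function.Injective (gmap v v') := by
    refine (injective_iff_map_eq_zero (gmap v v')).2 fun a ha => ?_
    have h1 : gmap v v' ((a.val : ℕ) : ZMod v) = 0 := by rwa [ZMod.natCast_zmod_val]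
    rw [gmap_nat, ← Nat.cast_mul, ZMod.natCast_eq_zero_iff] at h1
    have h2 : v ∣ a.val := (Nat.mul_dvd_mul_iff_left hv').1 (by rwa [mul_comm v v'] at h1)
    have h3 : a.val = 0 := Nat.eq_zero_of_dvd_of_lt h2 (ZMod.val_lt a) |>.symm ▸ rfl
    calc a = ((a.val : ℕ) : ZMod v) := (ZMod.natCast_zmod_val a).symm
    _ = 0 := by rw [Nat.eq_zero_of_dvd_of_lt h2 (ZMod.val_lt a)]; simp
  -- the projection `π : Z_{vv'} →+* Z_{v'}`
  set π := ZMod.castHom (show v' ∣ v * v' from ⟨v, mul_comm v v'⟩) (ZMod v') with hπdef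
  have hπg : ∀ a : ZMod v, π (gmap v v' a) = 0 := by
    intro a
    rw [← ZMod.natCast_zmod_val a, gmap_nat, ← Nat.cast_mul, map_natCast, Nat.cast_mul,
      ZMod.natCast_self, zero_mul]
  have hπn : ∀ d : ZMod v', π (((d.val : ℕ) : ZMod (v * v'))) = d := by
    intro d; rw [map_natCast, ZMod.natCast_zmod_val]
  have hsurj : ∀ z : ZMod (v * v'), π z = 0 → ∃ a : ZMod v, gmap v v' a = z := by
    intro z hz
    have h1 : π (((z.val : ℕ) : ZMod (v * v'))) = 0 := by rwa [ZMod.natCast_zmod_val]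
    rw [map_natCast, ZMod.natCast_eq_zero_iff] at h1
    obtain ⟨k, hk⟩ := h1
    refine ⟨((k : ℕ) : ZMod v), ?_⟩
    rw [gmap_nat, ← Nat.cast_mul, ← hk, ZMod.natCast_zmod_val]
  -- index the difference set
  set eD : Fin m' ≃ {x // x ∈ D} := (Finset.equivFinOfCardEq hDcard).symm with heD
  obtain ⟨f, hf⟩ : ∃ f : Fin m' → ZMod v → ZMod (v * v'),
      ∀ t a, f t a = gmap v v' a + (((eD t : ZMod v').val : ℕ) : ZMod (v * v')) :=
    ⟨_, fun _ _ => rfl⟩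
  have hπc : ∀ t : Fin m', π ((((eD t : ZMod v').val : ℕ) : ZMod (v * v'))) = (eD t : ZMod v') :=
    fun t => hπn _
  have hfinj : ∀ t, Function.Injective (f t) := by
    intro t a b h
    rw [hf, hf] at h
    exact hginj (add_right_cancel h)
  have hfkey : ∀ t s a b, f t a = f s b → t = s ∧ a = b := by
    intro t s a b h
    have h1 : (eD t : ZMod v') = (eD s : ZMod v') := by
      have h2 := congrArg π h
      rw [hf, hf, map_add, map_add, hπg, hπg, zero_add, zero_add, hπc, hπc] at h2
      exact h2
    have hts : t = s := eD.injective (Subtype.ext h1)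
    subst hts
    exact ⟨rfl, hfinj t h⟩
  have hone : ∀ x : ZMod v, (Finset.univ.filter (fun i => x ∈ Q i)).card = 1 := by
    intro x
    obtain ⟨i, hi⟩ := hQcover x
    rw [Finset.card_eq_one]
    refine ⟨i, ?_⟩
    ext j
    simp only [Finset.mem_filter, Finset.mem_univ, true_and, Finset.mem_singleton]
    constructor
    · intro hj
      by_contra hne
      exact Finset.disjoint_left.1 (hQdisj j i hne) hj hi
    · rintro rfl; exact hi
  refine ⟨fun k => (Q (finProdFinEquiv.symm k).1).image (f (finProdFinEquiv.symm k).2),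
    ?_, ?_, ?_⟩
  · -- disjointness
    intro a b hab
    rw [Finset.disjoint_left]
    intro x hx hx'
    simp only [Finset.mem_image] at hx hx'
    obtain ⟨a1, ha1, hfa1⟩ := hx
    obtain ⟨a2, ha2, hfa2⟩ := hx'
    have heq : f (finProdFinEquiv.symm b).2 a2 = f (finProdFinEquiv.symm a).2 a1 := by
      rw [hfa1, hfa2]
    obtain ⟨hts, ha12⟩ := hfkey _ _ _ _ heq
    have hne : (finProdFinEquiv.symm a).1 ≠ (finProdFinEquiv.symm b).1 := fun h1 =>
      hab (finProdFinEquiv.symm.injective (Prod.ext h1 hts.symm))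
    exact Finset.disjoint_left.1 (hQdisj _ _ hne) ha1 (ha12 ▸ ha2)
  · -- cardinality of the union
    have hinj2 : Function.Injective (fun p : ZMod v × Fin m' => f p.2 p.1) := by
      intro p r h
      obtain ⟨hts, hab⟩ := hfkey _ _ _ _ h
      exact Prod.ext hab hts
    have him : Finset.univ.biUnion
          (fun k : Fin (q * m') =>
            (Q (finProdFinEquiv.symm k).1).image (f (finProdFinEquiv.symm k).2))
        = (Finset.univ : Finset (ZMod v × Fin m')).image (fun p => f p.2 p.1) := by
      ext x
      simp only [Finset.mem_biUnion, Finset.mem_univ, true_and, Finset.mem_image]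
      constructor
      · rintro ⟨k, a, ha, rfl⟩
        exact ⟨(a, (finProdFinEquiv.symm k).2), rfl⟩
      · rintro ⟨⟨a, t⟩, rfl⟩
        obtain ⟨i, hi⟩ := hQcover a
        refine ⟨finProdFinEquiv (i, t), ?_⟩
        rw [Equiv.symm_apply_apply]
        exact ⟨a, hi, rfl⟩
    rw [him, Finset.card_image_of_injective _ hinj2, Finset.card_univ, Fintype.card_prod,
      ZMod.card, Fintype.card_fin]
  · -- the index bound
    intro d0 hd0
    have hpair : ∀ (p r : Fin q × Fin m'),
        ((((Q p.1).image (f p.2)) ×ˢ ((Q r.1).image (f r.2))).filter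
            (fun x => x.1 - x.2 = d0)).card
          = ((Q p.1 ×ˢ Q r.1).filter (fun x => f p.2 x.1 - f r.2 x.2 = d0)).card := by
      intro p r
      exact card_filter_image_prod (Q p.1) (Q r.1) (f p.2) (f r.2) (hfinj _) (hfinj _)
        (fun x => x.1 - x.2 = d0)
    have hout : outerCount (fun k : Fin (q * m') =>
          (Q (finProdFinEquiv.symm k).1).image (f (finProdFinEquiv.symm k).2)) d0
        = ∑ p : Fin q × Fin m', ∑ r : Fin q × Fin m',
            if p = r then 0 else
              ((Q p.1 ×ˢ Q r.1).filter (fun x => f p.2 x.1 - f r.2 x.2 = d0)).card := by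
      unfold outerCount
      refine (Fintype.sum_equiv finProdFinEquiv _ _ fun p => ?_).symm
      refine Fintype.sum_equiv finProdFinEquiv _ _ fun r => ?_
      simp only [Equiv.symm_apply_apply, Equiv.apply_eq_iff_eq, hpair]
    rw [hout]
    by_cases hδ : π d0 = 0
    · -- second coordinate of `d0` is zero: use the FHS property
      obtain ⟨α₀, hα₀⟩ := hsurj d0 hδ
      have hα₀ne : α₀ ≠ 0 := by
        rintro rfl
        rw [map_zero] at hα₀
        exact hd0 hα₀.symm
      have hNdiag : ∀ (i j : Fin q) (t : Fin m'),
          ((Q i ×ˢ Q j).filter (fun x => f t x.1 - f t x.2 = d0)).card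
            = ((Q i ×ˢ Q j).filter (fun x => x.1 - x.2 = α₀)).card := by
        intro i j t
        congr 1
        refine Finset.filter_congr fun x _ => ?_
        have h1 : f t x.1 - f t x.2 = gmap v v' (x.1 - x.2) := by
          rw [hf, hf, map_sub]
          abel
        rw [h1, ← hα₀]
        exact hginj.eq_iff
      calc min (ρ * m') (v * lam') ≤ ρ * m' := min_le_left _ _
        _ = ∑ _t : Fin m', ρ := by
            rw [Finset.sum_const, Finset.card_univ, Fintype.card_fin, smul_eq_mul, mul_comm]
        _ ≤ ∑ _t : Fin m', outerCount Q α₀ := Finset.sum_le_sum fun t _ => hQidx α₀ hα₀ne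
        _ = ∑ t : Fin m', ∑ i, ∑ j, if i = j then 0 else
              ((Q i ×ˢ Q j).filter (fun x => f t x.1 - f t x.2 = d0)).card := by
            simp only [outerCount, hNdiag]
        _ = ∑ i, ∑ t : Fin m', ∑ j, if i = j then 0 else
              ((Q i ×ˢ Q j).filter (fun x => f t x.1 - f t x.2 = d0)).card :=
            Finset.sum_comm
        _ ≤ ∑ i, ∑ t : Fin m', ∑ j, ∑ s : Fin m', if (i, t) = (j, s) then 0 else
              ((Q i ×ˢ Q j).filter (fun x => f t x.1 - f s x.2 = d0)).card := by
            refine Finset.sum_le_sum fun i _ => Finset.sum_le_sum fun t _ =>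
              Finset.sum_le_sum fun j _ => ?_
            have h1 : (if i = j then 0 else
                ((Q i ×ˢ Q j).filter (fun x => f t x.1 - f t x.2 = d0)).card)
                = (if (i, t) = (j, t) then 0 else
                ((Q i ×ˢ Q j).filter (fun x => f t x.1 - f t x.2 = d0)).card) := by
              simp [Prod.ext_iff]
            rw [h1]
            exact Finset.single_le_sum
              (f := fun s => if (i, t) = (j, s) then 0 else
                ((Q i ×ˢ Q j).filter (fun x => f t x.1 - f s x.2 = d0)).card)
              (fun s _ => Nat.zero_le _) (Finset.mem_univ t)
        _ = ∑ p : Fin q × Fin m', ∑ r : Fin q × Fin m', if p = r then 0 else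
              ((Q p.1 ×ˢ Q r.1).filter (fun x => f p.2 x.1 - f r.2 x.2 = d0)).card := by
            simp only [Fintype.sum_prod_type]
    · -- second coordinate of `d0` is nonzero: use the difference set property
      have hcond_ne : ∀ t s : Fin m', (eD t : ZMod v') - (eD s : ZMod v') = π d0 → t ≠ s := by
        rintro t s h rfl
        rw [sub_self] at h
        exact hδ h.symm
      have hsum_ts : ∀ t s : Fin m', (eD t : ZMod v') - (eD s : ZMod v') = π d0 →
          ∑ i, ∑ j, ((Q i ×ˢ Q j).filter (fun x => f t x.1 - f s x.2 = d0)).card = v := by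
        intro t s h
        obtain ⟨α, hα⟩ := hsurj
          (d0 - (((eD t : ZMod v').val : ℕ) : ZMod (v * v'))
              + (((eD s : ZMod v').val : ℕ) : ZMod (v * v')))
          (by rw [map_add, map_sub, hπc, hπc, ← h]; abel)
        have heq : ∀ i j : Fin q,
            ((Q i ×ˢ Q j).filter (fun x => f t x.1 - f s x.2 = d0)).card
              = ((Q i ×ˢ Q j).filter (fun x => x.1 - x.2 = α)).card := by
          intro i j
          congr 1
          refine Finset.filter_congr fun x _ => ?_
          have h2 : f t x.1 - f s x.2 = gmap v v' (x.1 - x.2)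
              + ((((eD t : ZMod v').val : ℕ) : ZMod (v * v'))
                - (((eD s : ZMod v').val : ℕ) : ZMod (v * v'))) := by
            rw [hf, hf, map_sub]
            abel
          rw [h2]
          constructor
          · intro hh
            apply hginj
            rw [hα]
            linear_combination hh
          · intro hh
            rw [hh, hα]
            ring
        simp only [heq]
        rw [sum_card_filter_prod Q hone (fun x => x.1 - x.2 = α), _root_.card_sub_eq, ZMod.card]
      have hcardD : ((Finset.univ : Finset (Fin m' × Fin m')).filter
            (fun ts => (eD ts.1 : ZMod v') - (eD ts.2 : ZMod v') = π d0)).card = lam' := by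
        rw [← hD (π d0) hδ]
        apply Finset.card_bij (fun ts _ => ((eD ts.1 : ZMod v'), (eD ts.2 : ZMod v')))
        · intro ts hts
          simp only [Finset.mem_filter, Finset.mem_univ, true_and] at hts
          simp only [Finset.mem_filter, Finset.mem_product]
          exact ⟨⟨(eD ts.1).2, (eD ts.2).2⟩, hts,
            fun hcontra => hδ (by rw [← hts, hcontra, sub_self])⟩
        · intro a _ b _ h
          rw [Prod.ext_iff] at h
          exact Prod.ext (eD.injective (Subtype.ext h.1)) (eD.injective (Subtype.ext h.2))
        · intro p hp
          simp only [Finset.mem_filter, Finset.mem_product] at hp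
          obtain ⟨⟨hp1, hp2⟩, hsub, -⟩ := hp
          refine ⟨(eD.symm ⟨p.1, hp1⟩, eD.symm ⟨p.2, hp2⟩), ?_, ?_⟩
          · simp only [Finset.mem_filter, Finset.mem_univ, true_and, Equiv.apply_symm_apply]
            exact hsub
          · simp [Equiv.apply_symm_apply]
      calc min (ρ * m') (v * lam') ≤ v * lam' := min_le_right _ _
        _ = ∑ ts : Fin m' × Fin m',
              if (eD ts.1 : ZMod v') - (eD ts.2 : ZMod v') = π d0 then v else 0 := by
            rw [Finset.sum_ite, Finset.sum_const, Finset.sum_const_zero,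
              add_zero, smul_eq_mul, hcardD, mul_comm]
        _ = ∑ t : Fin m', ∑ s : Fin m',
              if (eD t : ZMod v') - (eD s : ZMod v') = π d0 then v else 0 :=
            Fintype.sum_prod_type _
        _ = ∑ t : Fin m', ∑ s : Fin m',
              if (eD t : ZMod v') - (eD s : ZMod v') = π d0 then
                ∑ i, ∑ j, ((Q i ×ˢ Q j).filter (fun x => f t x.1 - f s x.2 = d0)).card
              else 0 := by
            refine Finset.sum_congr rfl fun t _ => Finset.sum_congr rfl fun s _ => ?_
            by_cases hc : (eD t : ZMod v') - (eD s : ZMod v') = π d0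
            · rw [if_pos hc, if_pos hc, hsum_ts t s hc]
            · rw [if_neg hc, if_neg hc]
        _ = ∑ t : Fin m', ∑ s : Fin m', ∑ i, ∑ j,
              if (eD t : ZMod v') - (eD s : ZMod v') = π d0 then
                ((Q i ×ˢ Q j).filter (fun x => f t x.1 - f s x.2 = d0)).card
              else 0 := by
            refine Finset.sum_congr rfl fun t _ => Finset.sum_congr rfl fun s _ => ?_
            by_cases hc : (eD t : ZMod v') - (eD s : ZMod v') = π d0
            · simp only [if_pos hc]
            · simp only [if_neg hc, Finset.sum_const_zero]
        _ = ∑ i, ∑ t : Fin m', ∑ j, ∑ s : Fin m',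
              if (eD t : ZMod v') - (eD s : ZMod v') = π d0 then
                ((Q i ×ˢ Q j).filter (fun x => f t x.1 - f s x.2 = d0)).card
              else 0 := by
            calc ∑ t : Fin m', ∑ s : Fin m', ∑ i, ∑ j,
                  (if (eD t : ZMod v') - (eD s : ZMod v') = π d0 then
                    ((Q i ×ˢ Q j).filter (fun x => f t x.1 - f s x.2 = d0)).card
                  else 0)
                = ∑ t : Fin m', ∑ i, ∑ s : Fin m', ∑ j,
                  (if (eD t : ZMod v') - (eD s : ZMod v') = π d0 then
                    ((Q i ×ˢ Q j).filter (fun x => f t x.1 - f s x.2 = d0)).card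
                  else 0) :=
                Finset.sum_congr rfl fun t _ => Finset.sum_comm
              _ = ∑ i, ∑ t : Fin m', ∑ s : Fin m', ∑ j,
                  (if (eD t : ZMod v') - (eD s : ZMod v') = π d0 then
                    ((Q i ×ˢ Q j).filter (fun x => f t x.1 - f s x.2 = d0)).card
                  else 0) :=
                Finset.sum_comm
              _ = ∑ i, ∑ t : Fin m', ∑ j, ∑ s : Fin m',
                  (if (eD t : ZMod v') - (eD s : ZMod v') = π d0 then
                    ((Q i ×ˢ Q j).filter (fun x => f t x.1 - f s x.2 = d0)).card
                  else 0) :=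
                Finset.sum_congr rfl fun i _ => Finset.sum_congr rfl fun t _ => Finset.sum_comm
        _ ≤ ∑ p : Fin q × Fin m', ∑ r : Fin q × Fin m', if p = r then 0 else
              ((Q p.1 ×ˢ Q r.1).filter (fun x => f p.2 x.1 - f r.2 x.2 = d0)).card := by
            simp only [Fintype.sum_prod_type]
            refine Finset.sum_le_sum fun i _ => Finset.sum_le_sum fun t _ =>
              Finset.sum_le_sum fun j _ => Finset.sum_le_sum fun s _ => ?_
            by_cases hc : (eD t : ZMod v') - (eD s : ZMod v') = π d0
            · have hne : (i, t) ≠ (j, s) := by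
                intro hh
                exact hcond_ne t s hc (congrArg Prod.snd hh)
              rw [if_pos hc, if_neg hne]
            · rw [if_neg hc]
              exact Nat.zero_le _
end

section
/- (Levenshtein bound) If Q_0,...,Q_{q-1} is a DSS of index ρ over Z_v with q ≥ 2, and r denotes the total number of elements used, r = |Q_0 ∪ ... ∪ Q_{q-1}|, then r ≥ sqrt(qρ(v−1)/(q−1)); equivalently r²(q−1) ≥ qρ(v−1). -/
theorem stmt_6 (v q ρ : ℕ) (hq : 2 ≤ q)
    (Q : Fin q → Finset (ZMod v))
    (hdisj : ∀ i j, i ≠ j → Disjoint (Q i) (Q j))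
    (hidx : ∀ d : ZMod v, d ≠ 0 → ρ ≤ outerCount Q d) :
    Real.sqrt ((q * ρ * (v - 1) : ℝ) / (q - 1)) ≤ ((Finset.univ.biUnion Q).card : ℝ) ∧
    q * ρ * (v - 1) ≤ (Finset.univ.biUnion Q).card ^ 2 * (q - 1) := by
  set r := (Finset.univ.biUnion Q).card with hr
  have hq1 : (1:ℝ) < q := by exact_mod_cast Nat.lt_of_lt_of_le one_lt_two hq
  -- the key natural-number inequality
  have key : q * ρ * (v - 1) ≤ r ^ 2 * (q - 1) := by
    rcases Nat.eq_zero_or_pos v with hv | hv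
    · simp [hv]
    haveI : NeZero v := ⟨hv.ne'⟩
    have hrsum : r = ∑ i : Fin q, (Q i).card := by
      exact Finset.card_biUnion (fun i _ j _ h => hdisj i j h)
    -- total outer count over all d
    have hT : ∑ d : ZMod v, outerCount Q d
        = ∑ i : Fin q, ∑ j : Fin q, if i = j then 0 else (Q i).card * (Q j).card := by
      unfold outerCount
      rw [Finset.sum_comm]
      refine Finset.sum_congr rfl fun i _ => ?_
      rw [Finset.sum_comm]
      refine Finset.sum_congr rfl fun j _ => ?_
      by_cases h : i = j
      · simp [h]
      · simp only [h, if_false]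
        rw [← Finset.card_product]
        exact (Finset.card_eq_sum_card_fiberwise
          (f := fun p : ZMod v × ZMod v => p.1 - p.2)
          (fun x _ => Finset.mem_univ _)).symm
    -- lower bound for total outer count
    have hS : (v - 1) * ρ ≤ ∑ d : ZMod v, outerCount Q d := by
      have hsub : Finset.univ.erase (0 : ZMod v) ⊆ Finset.univ := Finset.erase_subset _ _
      calc (v - 1) * ρ = (Finset.univ.erase (0 : ZMod v)).card * ρ := by
            rw [Finset.card_erase_of_mem (Finset.mem_univ _), Finset.card_univ, ZMod.card]
        _ ≤ ∑ d ∈ Finset.univ.erase (0 : ZMod v), outerCount Q d := by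
            have h := Finset.card_nsmul_le_sum (Finset.univ.erase (0 : ZMod v))
              (outerCount Q) ρ (fun d hd => hidx d (Finset.ne_of_mem_erase hd))
            simpa using h
        _ ≤ ∑ d : ZMod v, outerCount Q d :=
            Finset.sum_le_sum_of_subset hsub
    -- Cauchy-Schwarz : r^2 ≤ q * Σ card^2
    have hCS : r ^ 2 ≤ q * ∑ i : Fin q, (Q i).card ^ 2 := by
      have := sq_sum_le_card_mul_sum_sq (s := (Finset.univ : Finset (Fin q)))
        (f := fun i => ((Q i).card : ℤ))
      have h2 : ((r : ℤ)) ^ 2 ≤ (q : ℤ) * ∑ i : Fin q, ((Q i).card : ℤ) ^ 2 := by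
        rw [hrsum]; push_cast; simpa using this
      exact_mod_cast h2
    -- T + Σ card^2 = r^2
    have hTr : (∑ d : ZMod v, outerCount Q d) + ∑ i : Fin q, (Q i).card ^ 2 = r ^ 2 := by
      rw [hT, hrsum, sq, Finset.sum_mul_sum, ← Finset.sum_add_distrib]
      refine Finset.sum_congr rfl fun i _ => ?_
      calc (∑ j : Fin q, if i = j then 0 else (Q i).card * (Q j).card) + (Q i).card ^ 2
          = (∑ j : Fin q, if i = j then 0 else (Q i).card * (Q j).card)
            + ∑ j : Fin q, if i = j then (Q i).card * (Q j).card else 0 := by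
            rw [Finset.sum_ite_eq]; simp [sq]
        _ = ∑ j : Fin q, ((if i = j then 0 else (Q i).card * (Q j).card)
            + if i = j then (Q i).card * (Q j).card else 0) := (Finset.sum_add_distrib).symm
        _ = ∑ j : Fin q, (Q i).card * (Q j).card := by
            refine Finset.sum_congr rfl fun j _ => ?_
            by_cases h : i = j <;> simp [h]
    have h1 : q * ((v - 1) * ρ) + r ^ 2
        ≤ q * (∑ d : ZMod v, outerCount Q d) + q * ∑ i : Fin q, (Q i).card ^ 2 :=
      add_le_add (Nat.mul_le_mul_left _ hS) hCS
    have h2 : q * (∑ d : ZMod v, outerCount Q d) + q * ∑ i : Fin q, (Q i).card ^ 2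
        = r ^ 2 * (q - 1) + r ^ 2 := by
      rw [← Nat.mul_add, hTr]
      have hq' : q - 1 + 1 = q := by omega
      calc q * r ^ 2 = r ^ 2 * (q - 1 + 1) := by rw [hq']; ring
        _ = r ^ 2 * (q - 1) + r ^ 2 := by ring
    have h3 : q * ((v - 1) * ρ) ≤ r ^ 2 * (q - 1) :=
      Nat.le_of_add_le_add_right (h1.trans_eq h2)
    calc q * ρ * (v - 1) = q * ((v - 1) * ρ) := by ring
      _ ≤ r ^ 2 * (q - 1) := h3
  refine ⟨?_, key⟩
  rcases Nat.eq_zero_or_pos v with hv | hv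
  · subst hv
    have : ((q:ℝ) * ρ * ((0:ℕ) - 1)) / (q - 1) ≤ 0 := by
      apply div_nonpos_of_nonpos_of_nonneg
      · push_cast; nlinarith [Nat.cast_nonneg (α := ℝ) q, Nat.cast_nonneg (α := ℝ) ρ]
      · linarith
    rw [Real.sqrt_eq_zero_of_nonpos this]
    positivity
  · rw [Real.sqrt_le_iff]
    refine ⟨by positivity, ?_⟩
    rw [div_le_iff₀ (by linarith)]
    have hv1 : (1:ℝ) ≤ v := by exact_mod_cast hv
    have hq1n : 1 ≤ q := by omega
    calc (q:ℝ) * ρ * (v - 1) = ((q * ρ * (v-1) : ℕ) : ℝ) := by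
          push_cast [Nat.cast_sub hv]; ring
      _ ≤ ((r ^ 2 * (q - 1) : ℕ) : ℝ) := by exact_mod_cast key
      _ = (r:ℝ)^2 * (q - 1) := by push_cast [Nat.cast_sub hq1n]; ring
end

section
/- Let p = 12n²+1 be an odd prime. Then the three 6th-power cyclotomic classes C_0^6, C_2^6, C_4^6 in F_p (each of size 2n²) form a perfect regular DSS(12n²+1, 2n², 3, 2n²): every nonzero element of F_p occurs exactly 2n² times as an outer difference between distinct classes among these three. -/
open Complex Finset
-- [assume b1 contents available; for testing, include them]
open Complex Finset

noncomputable def omg : ℂ := Complex.exp (2 * Real.pi * Complex.I / 3)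

lemma omg_prim : IsPrimitiveRoot omg 3 := Complex.isPrimitiveRoot_exp 3 (by norm_num)

lemma omg_pow3 : omg ^ 3 = 1 := omg_prim.pow_eq_one

lemma omg_ne_one : omg ≠ 1 := omg_prim.ne_one (by norm_num)

lemma omg_quad : omg ^ 2 + omg + 1 = 0 := by
  have h : (omg - 1) * (omg ^ 2 + omg + 1) = 0 := by linear_combination omg_pow3
  rcases mul_eq_zero.mp h with h1 | h2
  · exact absurd (sub_eq_zero.mp h1) omg_ne_one
  · exact h2

lemma omg_ne_zero : omg ≠ 0 := by
  intro h
  have := omg_pow3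
  rw [h] at this; norm_num at this

lemma conj_omg : (starRingEnd ℂ) omg = omg ^ 2 := by
  have h1 : (starRingEnd ℂ) omg = omg⁻¹ := by
    rw [omg, ← Complex.exp_conj, ← Complex.exp_neg]
    congr 1
    have : (starRingEnd ℂ) (2 * (Real.pi:ℂ) * Complex.I / 3)
        = 2 * (Real.pi:ℂ) * (-Complex.I) / 3 := by
      simp [map_div₀, Complex.conj_I, Complex.conj_ofReal, map_ofNat]
    rw [this]; ring
  rw [h1, inv_eq_of_mul_eq_one_left]
  linear_combination omg_pow3

noncomputable def zet : ℂ := 1 + omg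

lemma zet_sq : zet ^ 2 = omg := by unfold zet; linear_combination omg_quad
lemma zet_cube : zet ^ 3 = -1 := by
  unfold zet; linear_combination 3 * omg_quad + omg_pow3
lemma zet_pow6 : zet ^ 6 = 1 := by
  have h : zet ^ 6 = (zet ^ 3) ^ 2 := by ring
  rw [h, zet_cube]; norm_num
lemma zet_ne_zero : zet ≠ 0 := by
  intro h
  have := zet_pow6; rw [h] at this; norm_num at this

lemma omg_pow_ne_one {k : ℕ} (h1 : 0 < k) (h2 : k < 3) : omg ^ k ≠ 1 := by
  interval_cases k
  · simpa using omg_ne_one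
  · intro h
    exact omg_ne_one (by linear_combination (-omg) * h + omg_pow3)

lemma zet_pow_ne_one {k : ℕ} (h1 : 0 < k) (h2 : k < 6) : zet ^ k ≠ 1 := by
  interval_cases k <;> intro h
  · exact omg_ne_zero (by unfold zet at h; linear_combination h)
  · rw [zet_sq] at h; exact omg_ne_one h
  · rw [zet_cube] at h; norm_num at h
  · have : zet ^ 4 = -zet := by
      have : zet ^ 4 = zet ^ 3 * zet := by ring
      rw [this, zet_cube]; ring
    rw [this] at h
    have hz : zet = -1 := by linear_combination -h
    have hom : omg = -2 := by unfold zet at hz; linear_combination hz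
    have h3 := omg_pow3
    rw [hom] at h3; norm_num at h3
  · have h5 : zet ^ 5 = -omg := by
      have : zet ^ 5 = zet ^ 3 * zet ^ 2 := by ring
      rw [this, zet_cube, zet_sq]; ring
    rw [h5] at h
    have : omg = -1 := by linear_combination -h
    have h3 := omg_pow3
    rw [this] at h3; norm_num at h3

/-- membership in ℤ[ω] -/
def ZOm (z : ℂ) : Prop := ∃ m n : ℤ, z = m + n * omg

lemma ZOm.zero : ZOm 0 := ⟨0, 0, by norm_num⟩
lemma ZOm.one : ZOm 1 := ⟨1, 0, by norm_num⟩
lemma ZOm.add {a b : ℂ} (ha : ZOm a) (hb : ZOm b) : ZOm (a + b) := by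
  obtain ⟨m, n, rfl⟩ := ha; obtain ⟨m', n', rfl⟩ := hb
  exact ⟨m + m', n + n', by push_cast; ring⟩
lemma ZOm.mul {a b : ℂ} (ha : ZOm a) (hb : ZOm b) : ZOm (a * b) := by
  obtain ⟨m, n, rfl⟩ := ha; obtain ⟨m', n', rfl⟩ := hb
  refine ⟨m * m' - n * n', m * n' + n * m' - n * n', ?_⟩
  push_cast
  linear_combination (n : ℂ) * n' * omg_quad
lemma ZOm_omg : ZOm omg := ⟨0, 1, by norm_num⟩
lemma ZOm_zet_pow (s : ℕ) : ZOm (zet ^ s) := by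
  induction s with
  | zero => simpa using ZOm.one
  | succ k ih =>
      rw [pow_succ]
      exact ih.mul (⟨1, 1, by unfold zet; push_cast; ring⟩)
lemma ZOm_omg_pow (s : ℕ) : ZOm (omg ^ s) := by
  induction s with
  | zero => simpa using ZOm.one
  | succ k ih => rw [pow_succ]; exact ih.mul ZOm_omg

lemma omg_im_ne : omg.im ≠ 0 := by
  intro h
  have hq := omg_quad
  have hre := congrArg Complex.re hq
  simp [pow_two, Complex.add_re, Complex.mul_re, h] at hre
  nlinarith [hre, sq_nonneg (omg.re + 1), sq_nonneg omg.re]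

lemma ZOm_uniq {m n m' n' : ℤ} (h : (m : ℂ) + n * omg = m' + n' * omg) :
    m = m' ∧ n = n' := by
  have him := congrArg Complex.im h
  simp [Complex.add_im, Complex.mul_im] at him
  have hn : (n : ℝ) = n' := by
    rcases him with h1 | h2
    · exact_mod_cast h1
    · exact absurd h2 omg_im_ne
  have hn' : n = n' := by exact_mod_cast hn
  subst hn'
  have : (m : ℂ) = m' := by linear_combination h
  exact ⟨by exact_mod_cast this, rfl⟩

lemma geom6 {z : ℂ} (hz : z ^ 6 = 1) (hz1 : z ≠ 1) : ∑ k ∈ range 6, z ^ k = 0 := by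
  have h : (z - 1) * ∑ k ∈ range 6, z ^ k = z ^ 6 - 1 := by
    rw [mul_comm]; exact geom_sum_mul z 6
  rw [hz, sub_self] at h
  rcases mul_eq_zero.mp h with h1 | h2
  · exact absurd (sub_eq_zero.mp h1) hz1
  · exact h2

lemma one_sub_omg_pow (s : ℕ) : ∃ z : ℂ, ZOm z ∧ 1 - omg ^ s = (1 - omg) * z := by
  induction s with
  | zero => exact ⟨0, ZOm.zero, by norm_num⟩
  | succ k ih =>
      obtain ⟨z, hz, hzz⟩ := ih
      refine ⟨z + omg ^ k, hz.add (ZOm_omg_pow k), ?_⟩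
      rw [pow_succ]
      linear_combination hzz

lemma pow_eq_of_mod6_eq {M : Type*} [Monoid M] {z : M} (hz : z ^ 6 = 1) {s t : ℕ}
    (h : s % 6 = t % 6) : z ^ s = z ^ t := by
  conv_lhs => rw [← Nat.div_add_mod s 6]
  conv_rhs => rw [← Nat.div_add_mod t 6]
  rw [pow_add, pow_add, pow_mul, pow_mul, hz, one_pow, one_pow, h]

lemma zet_pow_mod6 (s : ℕ) : zet ^ s = zet ^ (s % 6) :=
  pow_eq_of_mod6_eq zet_pow6 (Nat.mod_mod_of_dvd s (dvd_refl 6)).symm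

lemma zet_pow_eq_one_iff {s : ℕ} : zet ^ s = 1 ↔ s % 6 = 0 := by
  constructor
  · intro h
    by_contra hne
    have hlt : s % 6 < 6 := Nat.mod_lt _ (by norm_num)
    have h0 : 0 < s % 6 := Nat.pos_of_ne_zero hne
    rw [zet_pow_mod6] at h
    exact zet_pow_ne_one h0 hlt h
  · intro h
    rw [zet_pow_mod6, h, pow_zero]

/-- The uniqueness ingredient: if `p = 12 n₀² + 1` is prime, `a² + 3 b² = p` and `3 ∣ a + 1`,
then `a = -1`. -/
lemma rep_aux {p n0 a b : ℤ} (hp : Prime p) (h1 : p = 12 * n0 ^ 2 + 1)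
    (h2 : a ^ 2 + 3 * b ^ 2 = p) (hdvd : p ∣ a + 6 * b * n0) : a ^ 2 = 1 := by
  have hppos : 0 < p := by nlinarith [sq_nonneg n0]
  have h3np : ¬ (3 : ℤ) ∣ p := by
    intro hd; obtain ⟨c, hc⟩ := hd; omega
  obtain ⟨k, hk⟩ := hdvd
  have hB : (a + 6 * b * n0) ^ 2 + 3 * (2 * a * n0 - b) ^ 2 = p ^ 2 := by
    linear_combination (1 + 12 * n0 ^ 2) * h2 + (-p) * h1
  have h0 : 3 * (2 * a * n0 - b) ^ 2 = p ^ 2 * (1 - k ^ 2) := by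
    linear_combination hB + (-(a + 6 * b * n0 + p * k)) * hk
  have hk2 : k ^ 2 ≤ 1 := by nlinarith [sq_nonneg (2 * a * n0 - b), sq_nonneg p, sq_nonneg k]
  rcases eq_or_ne k 0 with hk0 | hkne
  · exfalso
    rw [hk0] at h0
    have : (3 : ℤ) ∣ p * p := ⟨(2 * a * n0 - b) ^ 2, by linarith [h0]⟩
    rcases (Int.prime_three.dvd_mul.mp this) with h | h <;> exact h3np h
  · have hk1 : k ^ 2 = 1 := by
      have : 1 ≤ k ^ 2 := by
        rcases lt_trichotomy k 0 with h | h | h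
        · nlinarith
        · exact absurd h hkne
        · nlinarith
      omega
    have hX : 2 * a * n0 - b = 0 := by nlinarith [sq_nonneg (2 * a * n0 - b)]
    have hb : b = 2 * a * n0 := by linarith
    subst hb
    have hap : (a ^ 2 - 1) * p = 0 := by linear_combination a ^ 2 * h1 + h2
    rcases mul_eq_zero.mp hap with h | h
    · linarith
    · exact absurd h (by positivity)

lemma rep_eq_neg_one {p n0 a b : ℤ} (hp : Prime p) (h1 : p = 12 * n0 ^ 2 + 1)
    (h2 : a ^ 2 + 3 * b ^ 2 = p) (h3 : (3 : ℤ) ∣ a + 1) : a = -1 := by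
  have key : (a + 6 * b * n0) * (a - 6 * b * n0) = p * (a ^ 2 - 12 * n0 ^ 2) := by
    linear_combination (-a ^ 2) * h1 + (-12 * n0 ^ 2) * h2
  have hpdvd : p ∣ (a + 6 * b * n0) * (a - 6 * b * n0) := ⟨_, key⟩
  have hasq : a ^ 2 = 1 := by
    rcases hp.dvd_mul.mp hpdvd with hd | hd
    · exact rep_aux hp h1 h2 hd
    · have h2' : a ^ 2 + 3 * (-b) ^ 2 = p := by linear_combination h2
      exact rep_aux hp h1 h2' (by rwa [show a + 6 * -b * n0 = a - 6 * b * n0 by ring])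
  have : a = 1 ∨ a = -1 := by
    have h' : (a - 1) * (a + 1) = 0 := by linear_combination hasq
    rcases mul_eq_zero.mp h' with h | h
    · left; linarith
    · right; linarith
  rcases this with h | h
  · exfalso; rw [h] at h3; omega
  · exact h
open Complex Finset

section Main
variable {p : ℕ} [Fact p.Prime]

lemma exists_pow (α : (ZMod p)ˣ) (hα : ∀ x : (ZMod p)ˣ, x ∈ Subgroup.zpowers α)
    (x : (ZMod p)ˣ) : ∃ k : ℕ, α ^ k = x := by
  have h := ((isOfFinOrder_of_finite α).mem_powers_iff_mem_zpowers).mpr (hα x)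
  exact (Submonoid.mem_powers_iff x α).mp h

noncomputable def dlog (α : (ZMod p)ˣ) (hα : ∀ x : (ZMod p)ˣ, x ∈ Subgroup.zpowers α)
    (x : (ZMod p)ˣ) : ℕ := Classical.choose (exists_pow α hα x)

lemma dlog_spec (α : (ZMod p)ˣ) (hα : ∀ x : (ZMod p)ˣ, x ∈ Subgroup.zpowers α)
    (x : (ZMod p)ˣ) : α ^ dlog α hα x = x := Classical.choose_spec (exists_pow α hα x)

lemma dlog_mod (α : (ZMod p)ˣ) (hα : ∀ x : (ZMod p)ˣ, x ∈ Subgroup.zpowers α)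
    {s : ℕ} {x : (ZMod p)ˣ} (h : α ^ s = x) :
    dlog α hα x ≡ s [MOD orderOf α] :=
  pow_eq_pow_iff_modEq.mp (by rw [dlog_spec, h])

lemma zet_pow_of_modEq (α : (ZMod p)ˣ) (h6 : 6 ∣ orderOf α) {a b : ℕ}
    (h : a ≡ b [MOD orderOf α]) : zet ^ a = zet ^ b :=
  pow_eq_of_mod6_eq zet_pow6 (Nat.ModEq.of_dvd h6 h)

noncomputable def zunit : ℂˣ := Units.mk0 zet zet_ne_zero

lemma zunit_pow_of_modEq (α : (ZMod p)ˣ) (h6 : 6 ∣ orderOf α) {a b : ℕ}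
    (h : a ≡ b [MOD orderOf α]) : zunit ^ a = zunit ^ b := by
  apply Units.ext
  rw [Units.val_pow_eq_pow_val, Units.val_pow_eq_pow_val]
  exact zet_pow_of_modEq α h6 h

noncomputable def chiHom (α : (ZMod p)ˣ) (hα : ∀ x : (ZMod p)ˣ, x ∈ Subgroup.zpowers α)
    (h6 : 6 ∣ orderOf α) : (ZMod p)ˣ →* ℂˣ where
  toFun x := zunit ^ (dlog α hα x)
  map_one' := by
    have h1 : dlog α hα 1 ≡ 0 [MOD orderOf α] := dlog_mod α hα (pow_zero α)
    rw [zunit_pow_of_modEq α h6 h1, pow_zero]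
  map_mul' x y := by
    have hxy : α ^ (dlog α hα x + dlog α hα y) = x * y := by
      rw [pow_add, dlog_spec, dlog_spec]
    have h1 : dlog α hα (x * y) ≡ dlog α hα x + dlog α hα y [MOD orderOf α] :=
      dlog_mod α hα hxy
    rw [zunit_pow_of_modEq α h6 h1, pow_add]

noncomputable def chi6 (α : (ZMod p)ˣ) (hα : ∀ x : (ZMod p)ˣ, x ∈ Subgroup.zpowers α)
    (h6 : 6 ∣ orderOf α) : MulChar (ZMod p) ℂ := MulChar.ofUnitHom (chiHom α hα h6)

variable (α : (ZMod p)ˣ) (hα : ∀ x : (ZMod p)ˣ, x ∈ Subgroup.zpowers α) (h6 : 6 ∣ orderOf α)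

lemma chi6_coe (x : (ZMod p)ˣ) : chi6 α hα h6 ↑x = zet ^ dlog α hα x := by
  rw [chi6, MulChar.ofUnitHom_coe]
  simp [chiHom, zunit]

lemma chi6_pow_coe (k : ℕ) (x : (ZMod p)ˣ) :
    (chi6 α hα h6 ^ k) ↑x = zet ^ (k * dlog α hα x) := by
  rw [MulChar.pow_apply_coe, chi6_coe, ← pow_mul, Nat.mul_comm]

lemma chi6_pow_apply_pow (k s : ℕ) :
    (chi6 α hα h6 ^ k) ((α : ZMod p) ^ s) = zet ^ (k * s) := by
  have hcoe : ((α : ZMod p)) ^ s = ((α ^ s : (ZMod p)ˣ) : ZMod p) := by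
    rw [Units.val_pow_eq_pow_val]
  rw [hcoe, chi6_pow_coe]
  have h1 : dlog α hα (α ^ s) ≡ s [MOD orderOf α] := dlog_mod α hα rfl
  exact pow_eq_of_mod6_eq zet_pow6 (Nat.ModEq.of_dvd h6 (h1.mul_left k))

lemma chi6_pow_six : chi6 α hα h6 ^ 6 = 1 := by
  apply MulChar.ext
  intro a
  rw [chi6_pow_coe, MulChar.one_apply_coe]
  have h1 : 6 * dlog α hα a ≡ 0 [MOD 6] := by
    unfold Nat.ModEq; omega
  exact pow_eq_of_mod6_eq zet_pow6 h1

lemma chi6_pow_ne_one {k : ℕ} (h1 : 0 < k) (h2 : k < 6) : chi6 α hα h6 ^ k ≠ 1 := by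
  intro h
  have h3 := congrArg (fun χ : MulChar (ZMod p) ℂ => χ ((α : ZMod p) ^ 1)) h
  rw [chi6_pow_apply_pow] at h3
  have hone : (1 : MulChar (ZMod p) ℂ) ((α:ZMod p) ^ 1) = 1 := by
    rw [pow_one]
    exact MulChar.one_apply_coe α
  rw [hone, Nat.mul_one] at h3
  exact zet_pow_ne_one h1 h2 h3
end Main
open Complex Finset

section Hard
variable {p : ℕ} [Fact p.Prime]
variable (α : (ZMod p)ˣ) (hα : ∀ x : (ZMod p)ˣ, x ∈ Subgroup.zpowers α) (h6 : 6 ∣ orderOf α)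

/-- values of powers of chi6 are 0 or powers of zet -/
lemma chi6_val_cases (k : ℕ) (y : ZMod p) :
    (chi6 α hα h6 ^ k) y = 0 ∨ ∃ s : ℕ, (chi6 α hα h6 ^ k) y = zet ^ s := by
  by_cases hy : IsUnit y
  · obtain ⟨u, rfl⟩ := hy
    exact Or.inr ⟨k * dlog α hα u, chi6_pow_coe α hα h6 k u⟩
  · exact Or.inl (MulChar.map_nonunit _ hy)

lemma chi6_val_ZOm (k : ℕ) (y : ZMod p) : ZOm ((chi6 α hα h6 ^ k) y) := by
  rcases chi6_val_cases α hα h6 k y with h | ⟨s, h⟩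
  · rw [h]; exact ZOm.zero
  · rw [h]; exact ZOm_zet_pow s

lemma neg_one_eq_alpha_pow (n : ℕ) (hn : 0 < n) (hp : p = 12 * n ^ 2 + 1)
    (horder : orderOf α = p - 1) : ((α : ZMod p)) ^ (6 * n ^ 2) = -1 := by
  have hu2 : (α ^ (6 * n ^ 2)) ^ 2 = 1 := by
    rw [← pow_mul]
    have : 6 * n ^ 2 * 2 = p - 1 := by omega
    rw [this, ← horder]
    exact pow_orderOf_eq_one α
  have hune : α ^ (6 * n ^ 2) ≠ 1 := by
    intro h
    have hd : orderOf α ∣ 6 * n ^ 2 := orderOf_dvd_of_pow_eq_one h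
    rw [horder] at hd
    have h1 : p - 1 ≤ 6 * n ^ 2 := Nat.le_of_dvd (by positivity) hd
    have hn2 : 0 < n ^ 2 := by positivity
    omega
  -- in the field, x^2 = 1 and x ≠ 1 implies x = -1
  have hval : ((α : ZMod p)) ^ (6 * n ^ 2) = ((α ^ (6 * n ^ 2) : (ZMod p)ˣ) : ZMod p) := by
    rw [Units.val_pow_eq_pow_val]
  rw [hval]
  set x : (ZMod p)ˣ := α ^ (6 * n ^ 2)
  have hsq : ((x : ZMod p) - 1) * ((x : ZMod p) + 1) = 0 := by
    have : ((x : ZMod p)) ^ 2 = 1 := by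
      rw [← Units.val_pow_eq_pow_val, hu2, Units.val_one]
    linear_combination this
  rcases mul_eq_zero.mp hsq with h | h
  · exfalso
    apply hune
    apply Units.ext
    rw [Units.val_one]
    linear_combination h
  · linear_combination h

lemma chi6_pow_neg_one (n : ℕ) (hn : 0 < n) (hp : p = 12 * n ^ 2 + 1)
    (horder : orderOf α = p - 1) (k : ℕ) : (chi6 α hα h6 ^ k) (-1 : ZMod p) = 1 := by
  rw [← neg_one_eq_alpha_pow α n hn hp horder, chi6_pow_apply_pow]
  have : k * (6 * n ^ 2) % 6 = 0 % 6 := by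
    have : k * (6 * n ^ 2) = 6 * (k * n ^ 2) := by ring
    omega
  rw [pow_eq_of_mod6_eq zet_pow6 this, pow_zero]

end Hard

lemma conj_zet : (starRingEnd ℂ) zet = zet ^ 5 := by
  have h5 : zet ^ 5 = -omg := by
    have h : zet ^ 5 = zet ^ 3 * zet ^ 2 := by ring
    rw [h, zet_cube, zet_sq]; ring
  rw [h5]
  show (starRingEnd ℂ) (1 + omg) = -omg
  rw [map_add, map_one, conj_omg]
  linear_combination omg_quad

section Hard2
variable {p : ℕ} [Fact p.Prime]
variable (α : (ZMod p)ˣ) (hα : ∀ x : (ZMod p)ˣ, x ∈ Subgroup.zpowers α) (h6 : 6 ∣ orderOf α)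

lemma hard_jacobi (n : ℕ) (hn : 0 < n) (hp : p = 12 * n ^ 2 + 1)
    (horder : orderOf α = p - 1) :
    jacobiSum (chi6 α hα h6) (chi6 α hα h6 ^ 2)
      + jacobiSum (chi6 α hα h6 ^ 5) (chi6 α hα h6 ^ 4) = -2 := by
  set χ := chi6 α hα h6 with hχdef
  have hpow6 : χ ^ 6 = 1 := chi6_pow_six α hα h6
  have hne : ∀ k : ℕ, 0 < k → k < 6 → χ ^ k ≠ 1 := fun k h1 h2 => chi6_pow_ne_one α hα h6 h1 h2
  have hne1 : χ ≠ 1 := by have := hne 1 one_pos (by norm_num); rwa [pow_one] at this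
  have hinv1 : χ⁻¹ = χ ^ 5 := by
    apply inv_eq_of_mul_eq_one_right
    rw [← pow_succ']; exact hpow6
  have hinv2 : (χ ^ 2)⁻¹ = χ ^ 4 := by
    apply inv_eq_of_mul_eq_one_right
    rw [← pow_add]; exact hpow6
  have hinv4 : (χ ^ 4)⁻¹ = χ ^ 2 := by
    apply inv_eq_of_mul_eq_one_right
    rw [← pow_add]; exact hpow6
  -- easy Jacobi sums
  have hJ42 : jacobiSum (χ ^ 4) (χ ^ 2) = -1 := by
    have h := jacobiSum_nontrivial_inv (hne 4 (by norm_num) (by norm_num))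
    rw [hinv4] at h
    rw [h, chi6_pow_neg_one α hα h6 n hn hp horder 4]
  have hJ36 : jacobiSum (χ ^ 3) (χ ^ 6) = -1 := by
    rw [hpow6, jacobiSum_comm, jacobiSum_one_nontrivial (hne 3 (by norm_num) (by norm_num))]
  -- J is in Z[omega]
  have hZOmJ : ZOm (jacobiSum χ (χ ^ 2)) := by
    apply Finset.sum_induction _ ZOm (fun a b => ZOm.add) ZOm.zero
    intro x _
    have h1 : ZOm (χ x) := by
      have := chi6_val_ZOm α hα h6 1 x; rwa [pow_one] at this
    exact h1.mul (chi6_val_ZOm α hα h6 2 (1 - x))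
  obtain ⟨M, N, hJmn⟩ := hZOmJ
  -- congruence mod 2
  have key2 : ∃ z : ℂ, ZOm z ∧ jacobiSum χ (χ ^ 2) - jacobiSum (χ ^ 4) (χ ^ 2) = 2 * z := by
    have hterm : ∀ x : ZMod p, ∃ z : ℂ, ZOm z ∧
        χ x * (χ ^ 2) (1 - x) - (χ ^ 4) x * (χ ^ 2) (1 - x) = 2 * z := by
      intro x
      by_cases hx : IsUnit x
      · obtain ⟨u, rfl⟩ := hx
        set s := dlog α hα u with hs
        have hv1 : χ ↑u = zet ^ s := chi6_coe α hα h6 u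
        have hv4 : (χ ^ 4) ↑u = (zet ^ s) ^ 4 := by
          rw [chi6_pow_coe, ← pow_mul, Nat.mul_comm]
        have hv6 : (zet ^ s) ^ 6 = 1 := by
          rw [← pow_mul, Nat.mul_comm, pow_mul, zet_pow6, one_pow]
        have hcase : ((zet ^ s) ^ 3 - 1) * ((zet ^ s) ^ 3 + 1) = 0 := by
          linear_combination hv6
        rcases mul_eq_zero.mp hcase with h | h
        · refine ⟨0, ZOm.zero, ?_⟩
          have h3 : (zet ^ s) ^ 3 = 1 := by linear_combination h
          rw [hv1, hv4]
          have : (zet ^ s) ^ 4 = zet ^ s := by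
            have : (zet ^ s) ^ 4 = (zet ^ s) ^ 3 * zet ^ s := by ring
            rw [this, h3, one_mul]
          rw [this]; ring
        · have h3 : (zet ^ s) ^ 3 = -1 := by linear_combination h
          refine ⟨zet ^ s * (χ ^ 2) (1 - ↑u), (ZOm_zet_pow s).mul (chi6_val_ZOm α hα h6 2 _), ?_⟩
          have h4 : (zet ^ s) ^ 4 = -(zet ^ s) := by
            have : (zet ^ s) ^ 4 = (zet ^ s) ^ 3 * zet ^ s := by ring
            rw [this, h3]; ring
          rw [hv1, hv4, h4]; ring
      · refine ⟨0, ZOm.zero, ?_⟩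
        rw [MulChar.map_nonunit χ hx, MulChar.map_nonunit (χ ^ 4) hx]
        ring
    choose z hz1 hz2 using hterm
    refine ⟨∑ x : ZMod p, z x, ?_, ?_⟩
    · exact Finset.sum_induction _ ZOm (fun a b => ZOm.add) ZOm.zero (fun x _ => hz1 x)
    · rw [jacobiSum, jacobiSum, ← Finset.sum_sub_distrib, Finset.mul_sum]
      exact Finset.sum_congr rfl (fun x _ => hz2 x)
  -- congruence mod (1 - omega)
  have key3 : ∃ z : ℂ, ZOm z ∧
      jacobiSum χ (χ ^ 2) - jacobiSum (χ ^ 3) (χ ^ 6) = (1 - omg) * z := by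
    have hterm : ∀ x : ZMod p, ∃ z : ℂ, ZOm z ∧
        χ x * (χ ^ 2) (1 - x) - (χ ^ 3) x * (χ ^ 6) (1 - x) = (1 - omg) * z := by
      intro x
      have h3x : (χ ^ 3) x = (χ x) ^ 3 := MulChar.pow_apply' χ (by norm_num) x
      have h6x : (χ ^ 6) (1 - x) = ((χ ^ 2) (1 - x)) ^ 3 := by
        have h62 : χ ^ 6 = (χ ^ 2) ^ 3 := by rw [← pow_mul]
        rw [h62, MulChar.pow_apply' (χ ^ 2) (by norm_num) (1 - x)]
      rw [h3x, h6x]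
      have hw : χ x * (χ ^ 2) (1 - x) = 0 ∨ ∃ r : ℕ, χ x * (χ ^ 2) (1 - x) = zet ^ r := by
        rcases chi6_val_cases α hα h6 1 x with h0 | ⟨s, hs⟩
        · left; rw [pow_one] at h0; rw [h0, zero_mul]
        · rcases chi6_val_cases α hα h6 2 (1 - x) with h0' | ⟨t, ht⟩
          · left; rw [h0', mul_zero]
          · right; rw [pow_one] at hs; exact ⟨s + t, by rw [hs, ht, pow_add]⟩
      rcases hw with h0 | ⟨r, hr⟩
      · refine ⟨0, ZOm.zero, ?_⟩
        have : (χ x) ^ 3 * ((χ ^ 2) (1 - x)) ^ 3 = (χ x * (χ ^ 2) (1 - x)) ^ 3 := by ring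
        rw [this, h0]
        ring
      · obtain ⟨z', hz'Z, hz'⟩ := one_sub_omg_pow r
        refine ⟨zet ^ r * z', (ZOm_zet_pow r).mul hz'Z, ?_⟩
        have hcube : (χ x) ^ 3 * ((χ ^ 2) (1 - x)) ^ 3 = (zet ^ r) ^ 3 := by
          rw [← hr]; ring
        rw [hcube, hr]
        have homg : (zet ^ r) ^ 2 = omg ^ r := by
          rw [← pow_mul, Nat.mul_comm, pow_mul, zet_sq]
        calc zet ^ r - (zet ^ r) ^ 3
            = zet ^ r * (1 - (zet ^ r) ^ 2) := by ring
          _ = zet ^ r * (1 - omg ^ r) := by rw [homg]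
          _ = zet ^ r * ((1 - omg) * z') := by rw [← hz']
          _ = (1 - omg) * (zet ^ r * z') := by ring
    choose z hz1 hz2 using hterm
    refine ⟨∑ x : ZMod p, z x, ?_, ?_⟩
    · exact Finset.sum_induction _ ZOm (fun a b => ZOm.add) ZOm.zero (fun x _ => hz1 x)
    · rw [jacobiSum, jacobiSum, ← Finset.sum_sub_distrib, Finset.mul_sum]
      exact Finset.sum_congr rfl (fun x _ => hz2 x)
  -- conjugate
  have e1 : χ.ringHomComp (starRingEnd ℂ) = χ ^ 5 := by
    apply MulChar.ext
    intro a
    rw [MulChar.ringHomComp_apply, chi6_pow_coe, chi6_coe, map_pow, conj_zet, ← pow_mul]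
  have e2 : (χ ^ 2).ringHomComp (starRingEnd ℂ) = χ ^ 4 := by
    apply MulChar.ext
    intro a
    rw [MulChar.ringHomComp_apply, chi6_pow_coe, chi6_pow_coe, map_pow, conj_zet, ← pow_mul]
    exact pow_eq_of_mod6_eq zet_pow6 (by omega)
  have hconj : jacobiSum (χ ^ 5) (χ ^ 4) = (starRingEnd ℂ) (jacobiSum χ (χ ^ 2)) := by
    rw [← jacobiSum_ringHomComp, e1, e2]
  -- norm equation
  have hnorm : jacobiSum χ (χ ^ 2) * jacobiSum (χ ^ 5) (χ ^ 4) = (p : ℂ) := by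
    have hrc : ringChar ℂ ≠ ringChar (ZMod p) := by
      rw [ringChar.eq_zero, ZMod.ringChar_zmod_n]
      exact fun h => (Fact.out : p.Prime).ne_zero h.symm
    have hχφ : χ * χ ^ 2 ≠ 1 := by
      rw [show χ * χ ^ 2 = χ ^ 3 from by rw [← pow_succ']]
      exact hne 3 (by norm_num) (by norm_num)
    have h := jacobiSum_mul_jacobiSum_inv hrc hne1
      (hne 2 (by norm_num) (by norm_num)) hχφ
    rw [hinv1, hinv2] at h
    rw [h, ZMod.card]
  -- extract integer coordinates and congruences
  obtain ⟨z2, hz2Z, hz2⟩ := key2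
  obtain ⟨u2, v2, rfl⟩ := hz2Z
  rw [hJ42, sub_neg_eq_add] at hz2
  obtain ⟨z3, hz3Z, hz3⟩ := key3
  obtain ⟨u3, v3, rfl⟩ := hz3Z
  rw [hJ36, sub_neg_eq_add] at hz3
  have heq2 : ((M + 1 : ℤ) : ℂ) + (N : ℤ) * omg = ((2 * u2 : ℤ) : ℂ) + ((2 * v2 : ℤ)) * omg := by
    push_cast
    push_cast at hz2
    linear_combination hz2 - hJmn
  obtain ⟨hM2, hN2⟩ := ZOm_uniq heq2
  have heq3 : ((M + 1 : ℤ) : ℂ) + (N : ℤ) * omg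
      = ((u3 + v3 : ℤ) : ℂ) + ((2 * v3 - u3 : ℤ)) * omg := by
    push_cast
    push_cast at hz3
    linear_combination hz3 - hJmn - (v3 : ℂ) * omg_quad
  obtain ⟨hM3, hN3⟩ := ZOm_uniq heq3
  -- norm in coordinates
  have hnormZ : M ^ 2 - M * N + N ^ 2 = (p : ℤ) := by
    have hc : ((M ^ 2 - M * N + N ^ 2 : ℤ) : ℂ) = ((p : ℤ) : ℂ) := by
      push_cast
      rw [hconj, hJmn] at hnorm
      have hcj : (starRingEnd ℂ) ((M : ℂ) + (N : ℂ) * omg) = (M : ℂ) + (N : ℂ) * omg ^ 2 := by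
        rw [map_add, map_mul, conj_omg, map_intCast, map_intCast]
      rw [hcj] at hnorm
      linear_combination hnorm - ((M : ℂ) * N) * omg_quad - ((N : ℂ) ^ 2) * omg_pow3
    exact_mod_cast hc
  -- now the integer argument
  set a : ℤ := M - v2 with hadef
  have hN2' : N = 2 * v2 := hN2
  have ha2 : a ^ 2 + 3 * v2 ^ 2 = (p : ℤ) := by
    rw [hadef]
    linear_combination hnormZ + (M - N - 2 * v2) * hN2'
  have hdvd3 : (3 : ℤ) ∣ (a + 1) ^ 2 + 3 * v2 ^ 2 := by
    have hrw : (a + 1) ^ 2 + 3 * v2 ^ 2 = (M + 1) ^ 2 - (M + 1) * N + N ^ 2 := by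
      rw [hadef, hN2']; ring
    rw [hrw, hM3, hN3]
    exact ⟨u3 ^ 2 - u3 * v3 + v3 ^ 2, by ring⟩
  have hdvd3' : (3 : ℤ) ∣ (a + 1) := by
    have h1 : (3 : ℤ) ∣ (a + 1) ^ 2 := by
      obtain ⟨c, hc⟩ := hdvd3
      exact ⟨c - v2 ^ 2, by linarith⟩
    exact Int.prime_three.dvd_of_dvd_pow h1
  have hpZ : Prime (p : ℤ) := Nat.prime_iff_prime_int.mp (Fact.out : p.Prime)
  have hpn : (p : ℤ) = 12 * (n : ℤ) ^ 2 + 1 := by exact_mod_cast hp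
  have ha : a = -1 := rep_eq_neg_one hpZ hpn ha2 hdvd3'
  -- finish
  have hMN : 2 * M - N = -2 := by
    have hM : M = v2 - 1 := by omega
    omega
  have hMNc : 2 * (M : ℂ) - (N : ℂ) = -2 := by exact_mod_cast hMN
  rw [hconj, hJmn]
  rw [map_add, map_mul, conj_omg, map_intCast, map_intCast]
  linear_combination (N : ℂ) * omg_quad + hMNc
end Hard2
open Complex Finset

section Count
variable {p : ℕ} [Fact p.Prime]
variable (α : (ZMod p)ˣ) (hα : ∀ x : (ZMod p)ˣ, x ∈ Subgroup.zpowers α) (h6 : 6 ∣ orderOf α)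

lemma sum_shift (χ ψ : MulChar (ZMod p) ℂ) (hψ : ψ (-1) = 1) {d : ZMod p} (hd : d ≠ 0) :
    ∑ a : ZMod p, χ a * ψ (a - d) = χ d * ψ d * jacobiSum χ ψ := by
  rw [jacobiSum, Finset.mul_sum]
  refine (Fintype.sum_equiv (Equiv.mulLeft₀ d hd) _ _ ?_).symm
  intro x
  have h1 : d * x - d = -1 * (d * (1 - x)) := by ring
  simp only [Equiv.mulLeft₀_apply]
  rw [h1, map_mul, map_mul, map_mul, hψ]
  ring

lemma card_filter_product (A B : Finset (ZMod p)) (d : ZMod p) :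
    ((((A ×ˢ B).filter (fun q => q.1 - q.2 = d)).card : ℂ))
      = ∑ a : ZMod p, (if a ∈ A then (1:ℂ) else 0) * (if a - d ∈ B then (1:ℂ) else 0) := by
  have hinner : ∀ a : ZMod p, (∑ b ∈ B, if a - b = d then (1:ℕ) else 0)
      = if a - d ∈ B then 1 else 0 := by
    intro a
    rw [show (∑ b ∈ B, if a - b = d then (1:ℕ) else 0)
        = ∑ b ∈ B, if b = a - d then 1 else 0 from Finset.sum_congr rfl (fun b _ => by
          congr 1
          simp only [eq_iff_iff]
          constructor
          · intro h; linear_combination -h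
          · intro h; linear_combination -h)]
    exact Finset.sum_ite_eq' B (a - d) (fun _ => 1)
  have hN : (((A ×ˢ B).filter (fun q => q.1 - q.2 = d)).card : ℕ)
      = ∑ a ∈ A, (if a - d ∈ B then (1:ℕ) else 0) := by
    rw [Finset.card_filter, Finset.sum_product]
    exact Finset.sum_congr rfl (fun a _ => hinner a)
  rw [hN, Nat.cast_sum]
  calc (∑ a ∈ A, (((if a - d ∈ B then (1:ℕ) else 0) : ℕ) : ℂ))
      = ∑ a ∈ A, (if a - d ∈ B then (1:ℂ) else 0) := by
        refine Finset.sum_congr rfl (fun a _ => ?_)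
        split <;> simp
    _ = ∑ a : ZMod p, (if a ∈ A then (1:ℂ) else 0) * (if a - d ∈ B then (1:ℂ) else 0) := by
        rw [← Finset.sum_filter_add_sum_filter_not univ (fun a => a ∈ A)]
        have h0 : ∑ a ∈ univ.filter (fun a => ¬ a ∈ A),
            (if a ∈ A then (1:ℂ) else 0) * (if a - d ∈ B then (1:ℂ) else 0) = 0 := by
          apply Finset.sum_eq_zero
          intro a ha
          rw [if_neg (Finset.mem_filter.mp ha).2, zero_mul]
        rw [h0, add_zero]
        rw [show univ.filter (fun a => a ∈ A) = A from by ext a; simp]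
        refine Finset.sum_congr rfl (fun a ha => ?_)
        rw [if_pos ha, one_mul]

lemma mem_Cset_iff (h6 : 6 ∣ orderOf α) (n : ℕ) (hn : 0 < n) (hp : p = 12 * n ^ 2 + 1)
    (horder : orderOf α = p - 1) (j : ℕ) (hj : j < 6) (u : (ZMod p)ˣ) :
    ((u : ZMod p) ∈ (Finset.range (2 * n ^ 2)).image (fun t => ((α : ZMod p)) ^ (j + 6 * t)))
      ↔ dlog α hα u % 6 = j := by
  have hordpos : orderOf α = 12 * n ^ 2 := by omega
  constructor
  · intro hmem
    obtain ⟨t, ht, hteq⟩ := Finset.mem_image.mp hmem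
    have hunit : α ^ (j + 6 * t) = u := by
      apply Units.ext
      rw [Units.val_pow_eq_pow_val]
      exact hteq
    have hmod := Nat.ModEq.of_dvd h6 (dlog_mod α hα hunit)
    have := hmod
    unfold Nat.ModEq at this
    omega
  · intro hm
    set s := dlog α hα u with hs
    set r := s % orderOf α with hr
    have hr6 : r % 6 = j := by
      rw [hr, Nat.mod_mod_of_dvd s h6]
      exact hm
    have hrlt : r < 12 * n ^ 2 := by
      rw [hr, ← hordpos]
      exact Nat.mod_lt _ (by rw [hordpos]; positivity)
    have hjr : j ≤ r := by omega
    refine Finset.mem_image.mpr ⟨(r - j) / 6, Finset.mem_range.mpr (by omega), ?_⟩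
    have hexp : j + 6 * ((r - j) / 6) = r := by omega
    rw [hexp]
    have : α ^ r = u := by
      rw [hr, pow_mod_orderOf, hs]
      exact dlog_spec α hα u
    rw [← this, Units.val_pow_eq_pow_val]

lemma indicator_sum (n : ℕ) (hn : 0 < n) (hp : p = 12 * n ^ 2 + 1)
    (horder : orderOf α = p - 1) (j : ℕ) (hj : j < 6) (x : ZMod p) :
    (if x ∈ (Finset.range (2 * n ^ 2)).image (fun t => ((α : ZMod p)) ^ (j + 6 * t))
        then (6:ℂ) else 0)
      = ∑ k ∈ range 6, zet ^ ((6 - j) * k) * (chi6 α hα h6 ^ k) x := by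
  by_cases hx : IsUnit x
  · obtain ⟨u, rfl⟩ := hx
    set s := dlog α hα u with hs
    have hrw : ∀ k ∈ range 6, zet ^ ((6 - j) * k) * (chi6 α hα h6 ^ k) ↑u
        = (zet ^ (6 - j + s)) ^ k := by
      intro k _
      rw [chi6_pow_coe, ← pow_add, ← pow_mul]
      congr 1
      rw [← hs]
      ring
    rw [Finset.sum_congr rfl hrw]
    by_cases hcond : s % 6 = j
    · rw [if_pos ((mem_Cset_iff α hα h6 n hn hp horder j hj u).mpr hcond)]
      have hz1 : zet ^ (6 - j + s) = 1 := by
        rw [zet_pow_eq_one_iff]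
        omega
      rw [hz1]
      simp
    · rw [if_neg (fun hmem => hcond ((mem_Cset_iff α hα h6 n hn hp horder j hj u).mp hmem))]
      have hz6 : (zet ^ (6 - j + s)) ^ 6 = 1 := by
        rw [← pow_mul, mul_comm, pow_mul, zet_pow6, one_pow]
      have hzne : zet ^ (6 - j + s) ≠ 1 := by
        rw [Ne, zet_pow_eq_one_iff]
        omega
      exact (geom6 hz6 hzne).symm
  · have hnotmem : x ∉ (Finset.range (2 * n ^ 2)).image
        (fun t => ((α : ZMod p)) ^ (j + 6 * t)) := by
      intro hmem
      obtain ⟨t, _, hteq⟩ := Finset.mem_image.mp hmem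
      apply hx
      rw [← hteq, ← Units.val_pow_eq_pow_val]
      exact Units.isUnit _
    rw [if_neg hnotmem]
    symm
    apply Finset.sum_eq_zero
    intro k _
    rw [MulChar.map_nonunit _ hx, mul_zero]

lemma zet_pow4 : zet ^ 4 = -1 - omg := by
  have h : zet ^ 4 = zet ^ 3 * zet := by ring
  rw [h, zet_cube]
  unfold zet
  ring

lemma zet_pow5 : zet ^ 5 = -omg := by
  have h : zet ^ 5 = zet ^ 3 * zet ^ 2 := by ring
  rw [h, zet_cube, zet_sq]
  ring

end Count
open Complex Finset

lemma omg_pow_mod3 (m : ℕ) : omg ^ m = omg ^ (m % 3) := by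
  conv_lhs => rw [← Nat.div_add_mod m 3]
  rw [pow_add, pow_mul, omg_pow3, one_pow, one_mul]

lemma coef3 (m : ℕ) : zet ^ (6 * m) + zet ^ (4 * m) + zet ^ (2 * m)
    = if 3 ∣ m then (3:ℂ) else 0 := by
  have h6 : zet ^ (6 * m) = 1 := by rw [pow_mul, zet_pow6, one_pow]
  have h2 : zet ^ (2 * m) = omg ^ m := by rw [pow_mul, zet_sq]
  have h4 : zet ^ (4 * m) = (omg ^ m) ^ 2 := by
    rw [show 4 * m = 2 * (2 * m) from by ring, pow_mul, zet_sq, ← pow_mul, mul_comm, pow_mul]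
  rw [h6, h2, h4]
  by_cases h : 3 ∣ m
  · obtain ⟨c, rfl⟩ := h
    rw [if_pos ⟨c, rfl⟩, pow_mul, omg_pow3, one_pow]
    norm_num
  · rw [if_neg h]
    have hne : omg ^ m ≠ 1 := by
      rw [omg_pow_mod3]
      have h1 : m % 3 < 3 := Nat.mod_lt _ (by norm_num)
      have h0 : 0 < m % 3 := Nat.pos_of_ne_zero (fun hc => h (Nat.dvd_of_mod_eq_zero hc))
      exact omg_pow_ne_one h0 h1
    have hcube : (omg ^ m) ^ 3 = 1 := by rw [← pow_mul, mul_comm, pow_mul, omg_pow3, one_pow]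
    have hfac : (omg ^ m - 1) * (1 + omg ^ m + (omg ^ m) ^ 2) = 0 := by
      linear_combination hcube
    rcases mul_eq_zero.mp hfac with hh | hh
    · exact absurd (sub_eq_zero.mp hh) hne
    · linear_combination hh

section Count2
variable {p : ℕ} [Fact p.Prime]
variable (α : (ZMod p)ˣ) (hα : ∀ x : (ZMod p)ˣ, x ∈ Subgroup.zpowers α) (h6 : 6 ∣ orderOf α)
variable (n : ℕ)

/-- abbreviation for the cyclotomic class as a finset -/
def Cset (j : ℕ) : Finset (ZMod p) :=
  (Finset.range (2 * n ^ 2)).image (fun t => ((α : ZMod p)) ^ (j + 6 * t))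

variable (hn : 0 < n) (hp : p = 12 * n ^ 2 + 1) (horder : orderOf α = p - 1)

lemma sum_ind_eq (hn : 0 < n) (hp : p = 12 * n ^ 2 + 1) (horder : orderOf α = p - 1)
    (x : ZMod p) :
    (if x ∈ Cset α n 0 then (6:ℂ) else 0) + (if x ∈ Cset α n 2 then (6:ℂ) else 0)
      + (if x ∈ Cset α n 4 then (6:ℂ) else 0)
    = 3 * ((chi6 α hα h6 ^ 0) x + (chi6 α hα h6 ^ 3) x) := by
  rw [show (Cset α n 0 : Finset (ZMod p))
      = (Finset.range (2 * n ^ 2)).image (fun t => ((α : ZMod p)) ^ (0 + 6 * t)) from rfl]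
  rw [show (Cset α n 2 : Finset (ZMod p))
      = (Finset.range (2 * n ^ 2)).image (fun t => ((α : ZMod p)) ^ (2 + 6 * t)) from rfl]
  rw [show (Cset α n 4 : Finset (ZMod p))
      = (Finset.range (2 * n ^ 2)).image (fun t => ((α : ZMod p)) ^ (4 + 6 * t)) from rfl]
  rw [indicator_sum α hα h6 n hn hp horder 0 (by norm_num) x,
      indicator_sum α hα h6 n hn hp horder 2 (by norm_num) x,
      indicator_sum α hα h6 n hn hp horder 4 (by norm_num) x]
  rw [← Finset.sum_add_distrib, ← Finset.sum_add_distrib]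
  have hterm : ∀ k ∈ range 6, zet ^ ((6 - 0) * k) * (chi6 α hα h6 ^ k) x
      + zet ^ ((6 - 2) * k) * (chi6 α hα h6 ^ k) x
      + zet ^ ((6 - 4) * k) * (chi6 α hα h6 ^ k) x
      = (if 3 ∣ k then (3:ℂ) else 0) * (chi6 α hα h6 ^ k) x := by
    intro k _
    rw [← coef3 k]
    ring_nf
  rw [Finset.sum_congr rfl hterm]
  rw [Finset.sum_range_succ, Finset.sum_range_succ, Finset.sum_range_succ,
      Finset.sum_range_succ, Finset.sum_range_succ, Finset.sum_range_succ]
  norm_num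
  ring
end Count2

section Count3
variable {p : ℕ} [Fact p.Prime]
variable (α : (ZMod p)ˣ) (hα : ∀ x : (ZMod p)ˣ, x ∈ Subgroup.zpowers α) (h6 : 6 ∣ orderOf α)
variable (n : ℕ)

lemma D_identity (hn : 0 < n) (hp : p = 12 * n ^ 2 + 1) (horder : orderOf α = p - 1)
    (a b : ZMod p) :
    36 * ((if a ∈ Cset α n 0 then (1:ℂ) else 0) * (if b ∈ Cset α n 0 then (1:ℂ) else 0)
        + (if a ∈ Cset α n 2 then (1:ℂ) else 0) * (if b ∈ Cset α n 2 then (1:ℂ) else 0)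
        + (if a ∈ Cset α n 4 then (1:ℂ) else 0) * (if b ∈ Cset α n 4 then (1:ℂ) else 0))
    = ∑ k ∈ range 6, ∑ l ∈ range 6,
        (if 3 ∣ (k + l) then (3:ℂ) else 0) * ((chi6 α hα h6 ^ k) a * (chi6 α hα h6 ^ l) b) := by
  have hsix : ∀ (j : ℕ) (x : ZMod p), (if x ∈ Cset α n j then (6:ℂ) else 0)
      = 6 * (if x ∈ Cset α n j then (1:ℂ) else 0) := by
    intro j x; split <;> ring
  have hiprod : ∀ j : ℕ, j < 6 →
      36 * ((if a ∈ Cset α n j then (1:ℂ) else 0) * (if b ∈ Cset α n j then (1:ℂ) else 0))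
      = (∑ k ∈ range 6, zet ^ ((6 - j) * k) * (chi6 α hα h6 ^ k) a)
        * (∑ l ∈ range 6, zet ^ ((6 - j) * l) * (chi6 α hα h6 ^ l) b) := by
    intro j hj
    rw [← indicator_sum α hα h6 n hn hp horder j hj a,
        ← indicator_sum α hα h6 n hn hp horder j hj b]
    show 36 * _ = (if a ∈ Cset α n j then (6:ℂ) else 0) * (if b ∈ Cset α n j then (6:ℂ) else 0)
    rw [hsix, hsix]
    ring
  rw [mul_add, mul_add, hiprod 0 (by norm_num), hiprod 2 (by norm_num), hiprod 4 (by norm_num)]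
  rw [Finset.sum_mul_sum, Finset.sum_mul_sum, Finset.sum_mul_sum]
  rw [← Finset.sum_add_distrib, ← Finset.sum_add_distrib]
  refine Finset.sum_congr rfl (fun k _ => ?_)
  rw [← Finset.sum_add_distrib, ← Finset.sum_add_distrib]
  refine Finset.sum_congr rfl (fun l _ => ?_)
  have hz : ∀ j : ℕ, (zet ^ ((6 - j) * k) * (chi6 α hα h6 ^ k) a)
      * (zet ^ ((6 - j) * l) * (chi6 α hα h6 ^ l) b)
      = zet ^ ((6 - j) * (k + l)) * ((chi6 α hα h6 ^ k) a * (chi6 α hα h6 ^ l) b) := by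
    intro j
    rw [show (6 - j) * (k + l) = (6 - j) * k + (6 - j) * l from by ring, pow_add]
    ring
  rw [hz 0, hz 2, hz 4, ← coef3 (k + l)]
  norm_num
  ring
end Count3

section Count4
variable {p : ℕ} [Fact p.Prime]
variable (α : (ZMod p)ˣ)
variable (n : ℕ)

lemma Cset_card (hn : 0 < n) (hp : p = 12 * n ^ 2 + 1) (horder : orderOf α = p - 1)
    (j : ℕ) (hj : j < 6) : (Cset α n j : Finset (ZMod p)).card = 2 * n ^ 2 := by
  rw [Cset, Finset.card_image_of_injOn, Finset.card_range]
  intro t ht t' ht' heq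
  simp only [Finset.mem_coe, Finset.mem_range] at ht ht'
  have hunit : α ^ (j + 6 * t) = α ^ (j + 6 * t') := by
    apply Units.ext
    rw [Units.val_pow_eq_pow_val, Units.val_pow_eq_pow_val]
    exact heq
  have hmod := pow_eq_pow_iff_modEq.mp hunit
  rw [horder] at hmod
  unfold Nat.ModEq at hmod
  have h1 : j + 6 * t < p - 1 := by omega
  have h2 : j + 6 * t' < p - 1 := by omega
  rw [Nat.mod_eq_of_lt h1, Nat.mod_eq_of_lt h2] at hmod
  omega

lemma Cset_disjoint (hα : ∀ x : (ZMod p)ˣ, x ∈ Subgroup.zpowers α) (h6 : 6 ∣ orderOf α)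
    (hn : 0 < n) (hp : p = 12 * n ^ 2 + 1) (horder : orderOf α = p - 1)
    (i j : ℕ) (hi : i < 6) (hj : j < 6) (hij : i ≠ j) :
    Disjoint (Cset α n i : Finset (ZMod p)) (Cset α n j) := by
  rw [Finset.disjoint_left]
  intro x hxi hxj
  have hxunit : IsUnit x := by
    obtain ⟨t, _, hteq⟩ := Finset.mem_image.mp hxi
    rw [← hteq, ← Units.val_pow_eq_pow_val]
    exact Units.isUnit _
  obtain ⟨u, rfl⟩ := hxunit
  have h1 := (mem_Cset_iff α hα h6 n hn hp horder i hi u).mp hxi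
  have h2 := (mem_Cset_iff α hα h6 n hn hp horder j hj u).mp hxj
  omega
end Count4
open Complex Finset

theorem stmt_10 (n p : ℕ) (hp : p = 12 * n ^ 2 + 1) (hprime : p.Prime) (hodd : Odd p)
    (α : (ZMod p)ˣ) (hα : ∀ x : (ZMod p)ˣ, x ∈ Subgroup.zpowers α) :
    -- the 6th-power cyclotomic classes C_i^6 = {α^(i+6t) : 0 ≤ t < 2n²}
    let C : ℕ → Finset (ZMod p) := fun i =>
      (Finset.range (2 * n ^ 2)).image (fun t => ((α : ZMod p)) ^ (i + 6 * t))
    -- {C_0^6, C_2^6, C_4^6} is a perfect regular DSS(12n²+1, 2n², 3, 2n²)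
    (∀ i ∈ ({0, 2, 4} : Finset ℕ), (C i).card = 2 * n ^ 2) ∧
    (∀ i ∈ ({0, 2, 4} : Finset ℕ), ∀ j ∈ ({0, 2, 4} : Finset ℕ), i ≠ j → Disjoint (C i) (C j)) ∧
    (∀ d : ZMod p, d ≠ 0 → outerCount ![C 0, C 2, C 4] d = 2 * n ^ 2) := by
  intro C
  haveI : Fact p.Prime := ⟨hprime⟩
  have hn : 0 < n := by
    rcases Nat.eq_zero_or_pos n with h | h
    · exfalso
      subst h
      norm_num at hp
      rw [hp] at hprime
      exact Nat.not_prime_one hprime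
    · exact h
  have horder : orderOf α = p - 1 := by
    rw [orderOf_eq_card_of_forall_mem_zpowers hα, Nat.card_eq_fintype_card, ZMod.card_units]
  have h6 : 6 ∣ orderOf α := by
    rw [horder]
    exact ⟨2 * n ^ 2, by omega⟩
  have hCeq : ∀ j : ℕ, C j = Cset α n j := fun j => rfl
  refine ⟨?_, ?_, ?_⟩
  · -- cardinalities
    intro i hi
    have hi6 : i < 6 := by fin_cases hi <;> norm_num
    rw [hCeq i]
    exact Cset_card α n hn hp horder i hi6
  · -- disjointness
    intro i hi j hj hij
    have hi6 : i < 6 := by fin_cases hi <;> norm_num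
    have hj6 : j < 6 := by fin_cases hj <;> norm_num
    rw [hCeq i, hCeq j]
    exact Cset_disjoint α n hα h6 hn hp horder i j hi6 hj6 hij
  · -- the perfect-difference property
    intro d hd
    set χ := chi6 α hα h6 with hχdef
    have hpow6 : χ ^ 6 = 1 := chi6_pow_six α hα h6
    have hne : ∀ k : ℕ, 0 < k → k < 6 → χ ^ k ≠ 1 := fun k h1 h2 => chi6_pow_ne_one α hα h6 h1 h2
    have hdu : IsUnit d := isUnit_iff_ne_zero.mpr hd
    have h1d : (1 : MulChar (ZMod p) ℂ) d = 1 := by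
      obtain ⟨u, rfl⟩ := hdu
      exact MulChar.one_apply_coe u
    have hv0 : (χ ^ 0) d = 1 := by rw [pow_zero]; exact h1d
    have hv : ∀ k : ℕ, k ≠ 0 → (χ ^ k) d = (χ d) ^ k := fun k hk => MulChar.pow_apply' χ hk d
    have hd6 : (χ d) ^ 6 = 1 := by
      rw [← hv 6 (by norm_num), hpow6]
      exact h1d
    set w : ℂ := (χ d) ^ 3 with hwdef
    have hw2 : w ^ 2 = 1 := by rw [hwdef, ← pow_mul]; exact hd6
    -- Jacobi sum values
    have hJ00 : jacobiSum (χ ^ 0) (χ ^ 0) = (p : ℂ) - 2 := by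
      rw [pow_zero, jacobiSum_one_one, ZMod.card]
    have hJ03 : jacobiSum (χ ^ 0) (χ ^ 3) = -1 := by
      rw [pow_zero]
      exact jacobiSum_one_nontrivial (hne 3 (by norm_num) (by norm_num))
    have hJ30 : jacobiSum (χ ^ 3) (χ ^ 0) = -1 := by rw [jacobiSum_comm]; exact hJ03
    have hJinv : ∀ k : ℕ, 0 < k → k < 6 → jacobiSum (χ ^ k) (χ ^ (6 - k)) = -1 := by
      intro k hk1 hk2
      have hinv : (χ ^ k)⁻¹ = χ ^ (6 - k) := by
        apply inv_eq_of_mul_eq_one_right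
        rw [← pow_add, show k + (6 - k) = 6 from by omega]
        exact hpow6
      have h := jacobiSum_nontrivial_inv (hne k hk1 hk2)
      rw [hinv] at h
      rw [h, chi6_pow_neg_one α hα h6 n hn hp horder k]
    have hJ33 : jacobiSum (χ ^ 3) (χ ^ 3) = -1 := hJinv 3 (by norm_num) (by norm_num)
    have hJ15 : jacobiSum (χ ^ 1) (χ ^ 5) = -1 := hJinv 1 (by norm_num) (by norm_num)
    have hJ51 : jacobiSum (χ ^ 5) (χ ^ 1) = -1 := by rw [jacobiSum_comm]; exact hJ15
    have hJ24 : jacobiSum (χ ^ 2) (χ ^ 4) = -1 := hJinv 2 (by norm_num) (by norm_num)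
    have hJ42 : jacobiSum (χ ^ 4) (χ ^ 2) = -1 := by rw [jacobiSum_comm]; exact hJ24
    have hard := hard_jacobi α hα h6 n hn hp horder
    set J : ℂ := jacobiSum χ (χ ^ 2) with hJdef
    set J' : ℂ := jacobiSum (χ ^ 5) (χ ^ 4) with hJ'def
    have hJ12 : jacobiSum (χ ^ 1) (χ ^ 2) = J := by rw [pow_one]
    have hJ21 : jacobiSum (χ ^ 2) (χ ^ 1) = J := by rw [jacobiSum_comm, pow_one]
    have hJ45 : jacobiSum (χ ^ 4) (χ ^ 5) = J' := by rw [jacobiSum_comm]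
    have hJ54 : jacobiSum (χ ^ 5) (χ ^ 4) = J' := rfl
    -- translated character sums
    have hT : ∀ k l : ℕ, (∑ a : ZMod p, (χ ^ k) a * (χ ^ l) (a - d))
        = (χ ^ k) d * (χ ^ l) d * jacobiSum (χ ^ k) (χ ^ l) := fun k l =>
      sum_shift (χ ^ k) (χ ^ l) (chi6_pow_neg_one α hα h6 n hn hp horder l) hd
    -- indicators
    set i0 : ZMod p → ℂ := fun x => if x ∈ Cset α n 0 then 1 else 0 with hi0
    set i2 : ZMod p → ℂ := fun x => if x ∈ Cset α n 2 then 1 else 0 with hi2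
    set i4 : ZMod p → ℂ := fun x => if x ∈ Cset α n 4 then 1 else 0 with hi4
    set SF : ℂ := ∑ a : ZMod p, (i0 a + i2 a + i4 a) * (i0 (a - d) + i2 (a - d) + i4 (a - d))
      with hSF
    set SD : ℂ := ∑ a : ZMod p,
      (i0 a * i0 (a - d) + i2 a * i2 (a - d) + i4 a * i4 (a - d)) with hSD
    -- outerCount in terms of SF and SD
    have hout : ((outerCount ![C 0, C 2, C 4] d : ℕ) : ℂ) = SF - SD := by
      have hout6 : outerCount ![C 0, C 2, C 4] d
          = ((C 0 ×ˢ C 2).filter (fun q => q.1 - q.2 = d)).card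
          + ((C 0 ×ˢ C 4).filter (fun q => q.1 - q.2 = d)).card
          + ((C 2 ×ˢ C 0).filter (fun q => q.1 - q.2 = d)).card
          + ((C 2 ×ˢ C 4).filter (fun q => q.1 - q.2 = d)).card
          + ((C 4 ×ˢ C 0).filter (fun q => q.1 - q.2 = d)).card
          + ((C 4 ×ˢ C 2).filter (fun q => q.1 - q.2 = d)).card := by
        simp [outerCount, Fin.sum_univ_three]
        ring
      rw [hout6]
      push_cast
      rw [hCeq 0, hCeq 2, hCeq 4]
      rw [card_filter_product, card_filter_product, card_filter_product,
          card_filter_product, card_filter_product, card_filter_product]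
      rw [hSF, hSD, ← Finset.sum_sub_distrib, ← Finset.sum_add_distrib,
        ← Finset.sum_add_distrib, ← Finset.sum_add_distrib, ← Finset.sum_add_distrib,
        ← Finset.sum_add_distrib]
      refine Finset.sum_congr rfl (fun a _ => ?_)
      rw [hi0, hi2, hi4]
      ring
    -- evaluate SF
    have htwoF : ∀ x : ZMod p, 2 * (i0 x + i2 x + i4 x) = (χ ^ 0) x + (χ ^ 3) x := by
      intro x
      have h := sum_ind_eq α hα h6 n hn hp horder x
      have h6i : (if x ∈ Cset α n 0 then (6:ℂ) else 0) + (if x ∈ Cset α n 2 then (6:ℂ) else 0)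
          + (if x ∈ Cset α n 4 then (6:ℂ) else 0) = 6 * (i0 x + i2 x + i4 x) := by
        rw [hi0, hi2, hi4]
        simp only
        split <;> split <;> split <;> ring
      rw [h6i] at h
      have h3 : (3:ℂ) ≠ 0 := by norm_num
      apply mul_left_cancel₀ h3
      rw [show (3:ℂ) * (2 * (i0 x + i2 x + i4 x)) = 6 * (i0 x + i2 x + i4 x) from by ring, h]
    have e1 : 4 * SF = (p : ℂ) - 3 - 2 * w := by
      have h4 : 4 * SF = ∑ a : ZMod p,
          ((χ ^ 0) a + (χ ^ 3) a) * ((χ ^ 0) (a - d) + (χ ^ 3) (a - d)) := by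
        rw [hSF, Finset.mul_sum]
        refine Finset.sum_congr rfl (fun a _ => ?_)
        rw [← htwoF a, ← htwoF (a - d)]
        ring
      have hsplit : ∑ a : ZMod p,
          ((χ ^ 0) a + (χ ^ 3) a) * ((χ ^ 0) (a - d) + (χ ^ 3) (a - d))
          = (∑ a : ZMod p, (χ ^ 0) a * (χ ^ 0) (a - d))
          + (∑ a : ZMod p, (χ ^ 0) a * (χ ^ 3) (a - d))
          + (∑ a : ZMod p, (χ ^ 3) a * (χ ^ 0) (a - d))
          + (∑ a : ZMod p, (χ ^ 3) a * (χ ^ 3) (a - d)) := by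
        rw [← Finset.sum_add_distrib, ← Finset.sum_add_distrib, ← Finset.sum_add_distrib]
        refine Finset.sum_congr rfl (fun a _ => ?_)
        ring
      rw [h4, hsplit, hT 0 0, hT 0 3, hT 3 0, hT 3 3, hJ00, hJ03, hJ30, hJ33, hv0,
        hv 3 (by norm_num)]
      rw [← hwdef]
      linear_combination (-1 : ℂ) * hw2
    -- evaluate SD
    have e2 : 36 * SD = 3 * ((p : ℂ) - 7 - 6 * w) := by
      have hstep : 36 * SD = ∑ k ∈ range 6, ∑ l ∈ range 6,
          (if 3 ∣ (k + l) then (3:ℂ) else 0)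
            * ((χ ^ k) d * (χ ^ l) d * jacobiSum (χ ^ k) (χ ^ l)) := by
        rw [hSD, Finset.mul_sum]
        have hpoint : ∀ a : ZMod p,
            (36:ℂ) * (i0 a * i0 (a - d) + i2 a * i2 (a - d) + i4 a * i4 (a - d))
            = ∑ k ∈ range 6, ∑ l ∈ range 6, (if 3 ∣ (k + l) then (3:ℂ) else 0)
              * ((χ ^ k) a * (χ ^ l) (a - d)) := by
          intro a
          rw [hi0, hi2, hi4]
          exact D_identity α hα h6 n hn hp horder a (a - d)
        rw [Finset.sum_congr rfl (fun a _ => hpoint a)]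
        rw [Finset.sum_comm]
        refine Finset.sum_congr rfl (fun k _ => ?_)
        rw [Finset.sum_comm]
        refine Finset.sum_congr rfl (fun l _ => ?_)
        rw [← Finset.mul_sum, hT k l]
      rw [hstep]
      simp only [Finset.sum_range_succ, Finset.sum_range_zero]
      norm_num
      rw [show jacobiSum (1 : MulChar (ZMod p) ℂ) 1 = (p:ℂ) - 2 from by
        rw [jacobiSum_one_one, ZMod.card]]
      rw [show jacobiSum (1 : MulChar (ZMod p) ℂ) (χ ^ 3) = -1 from
        jacobiSum_one_nontrivial (hne 3 (by norm_num) (by norm_num))]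
      rw [show jacobiSum (χ ^ 3) (1 : MulChar (ZMod p) ℂ) = -1 from by
        rw [jacobiSum_comm]
        exact jacobiSum_one_nontrivial (hne 3 (by norm_num) (by norm_num))]
      rw [show jacobiSum (χ ^ 2) χ = J from by rw [jacobiSum_comm]]
      rw [show jacobiSum χ (χ ^ 5) = -1 from by have := hJ15; rwa [pow_one] at this]
      rw [show jacobiSum (χ ^ 5) χ = -1 from by have := hJ51; rwa [pow_one] at this]
      rw [hJ24, hJ33, hJ42, hJ45]
      rw [← hJdef, ← hJ'def, h1d, hv 2 (by norm_num), hv 3 (by norm_num),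
        hv 4 (by norm_num), hv 5 (by norm_num)]
      linear_combination (6 * J' * (χ d) ^ 3 - 15 : ℂ) * hd6 + (18 : ℂ) * hwdef
        + (6 * (χ d) ^ 3 : ℂ) * hard
    -- final assembly
    have hfinal : ((outerCount ![C 0, C 2, C 4] d : ℕ) : ℂ) = ((2 * n ^ 2 : ℕ) : ℂ) := by
      rw [hout]
      have hpc : (p : ℂ) = 12 * (n : ℂ) ^ 2 + 1 := by exact_mod_cast hp
      push_cast
      linear_combination (1/4 : ℂ) * e1 - (1/36 : ℂ) * e2 + (1/6 : ℂ) * hpc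
    exact_mod_cast hfinal
end

section
/- Let p = fmq+1 be an odd prime with primitive root α, and consider the family {C_{fi}^{fq} : 0 ≤ i ≤ q−1} of fq-th cyclotomic classes. Then this family is a regular DSS(p, m, q, ρ) where ρ = min over 0 ≤ i ≤ f−1 of Σ_{j=0}^{q−1} Σ_{a=1}^{q−1} (i+jf, af)_{fq}, the sums of cyclotomic numbers of order fq. -/
lemma mod_two_cases (x q : ℕ) (hq : 0 < q) (hx : x < 2*q) : x % q = x ∨ x % q + q = x := by
  rcases Nat.lt_or_ge x q with h | h
  · exact Or.inl (Nat.mod_eq_of_lt h)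
  · right; rw [Nat.mod_eq_sub_mod h, Nat.mod_eq_of_lt (by omega)]; omega

theorem stmt_12 (p f m q : ℕ) (hf : 0 < f) (hm : 0 < m) (hq : 0 < q)
    (hp : p = f * m * q + 1) (hprime : p.Prime) (hodd : Odd p)
    (α : (ZMod p)ˣ) (hα : ∀ x : (ZMod p)ˣ, x ∈ Subgroup.zpowers α) :
    -- the fq-th cyclotomic classes C_i^{fq} = {α^(i+t·fq) : 0 ≤ t < m}
    let C : ℕ → Finset (ZMod p) := fun i =>
      (Finset.range m).image (fun t => ((α : ZMod p)) ^ (i + t * (f * q)))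
    -- the cyclotomic numbers (i,j)_{fq} = |(C_i^{fq} + 1) ∩ C_j^{fq}|
    let cyc : ℕ → ℕ → ℕ := fun i j => (((C i).image (fun x => x + 1)) ∩ C j).card
    -- the sums Σ_{j=0}^{q-1} Σ_{a=1}^{q-1} (i+jf, af)_{fq}
    let g : ℕ → ℕ := fun i =>
      ∑ j ∈ Finset.range q, ∑ a ∈ Finset.Icc 1 (q - 1), cyc (i + j * f) (a * f)
    -- {C_{fi}^{fq} : 0 ≤ i ≤ q-1} is a regular DSS(p, m, q, ρ) with
    -- ρ = min_{0 ≤ i ≤ f-1} g i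
    let Q : Fin q → Finset (ZMod p) := fun i => C (f * (i : ℕ))
    (∀ i j, i ≠ j → Disjoint (Q i) (Q j)) ∧
    (∀ i, (Q i).card = m) ∧
    (∀ d : ZMod p, d ≠ 0 → sInf (g '' Set.Iio f) ≤ outerCount Q d) := by
  intro C cyc g Q
  haveI : Fact p.Prime := ⟨hprime⟩
  have hC : ∀ i, C i = (Finset.range m).image (fun t => ((α : ZMod p)) ^ (i + t * (f * q))) :=
    fun _ => rfl
  have hcyc : ∀ a b, cyc a b = (((C a).image (fun x => x + 1)) ∩ C b).card := fun _ _ => rfl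
  have hQ : ∀ i, Q i = C (f * (i : ℕ)) := fun _ => rfl
  have horder : orderOf α = f * m * q := by
    rw [orderOf_eq_card_of_forall_mem_zpowers hα, Nat.card_eq_fintype_card,
      ZMod.card_units p]; omega
  have hpow : ∀ a b : ℕ, ((α : ZMod p) ^ a = (α : ZMod p) ^ b) ↔ a ≡ b [MOD f * m * q] := by
    intro a b
    rw [← Units.val_pow_eq_pow_val, ← Units.val_pow_eq_pow_val,
      ← Units.ext_iff, pow_eq_pow_iff_modEq, horder]
  have hone : (α : ZMod p) ^ (f * m * q) = 1 := by
    have := (hpow (f*m*q) 0).mpr (Nat.modEq_zero_iff_dvd.mpr dvd_rfl)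
    simpa using this
  have hN2 : 2 ≤ f * m * q := by
    have h2 := hprime.two_le
    have h3 := Nat.odd_iff.mp hodd
    omega
  have hdvdN : f * q ∣ f * m * q := ⟨m, by ring⟩
  -- class congruence
  have hCeq : ∀ i j, i ≡ j [MOD f * q] → C i = C j := by
    have hsub : ∀ i j, i ≡ j [MOD f * q] → C i ⊆ C j := by
      intro i j hij x hx
      rw [hC] at hx ⊢
      obtain ⟨t, ht, rfl⟩ := Finset.mem_image.mp hx
      rw [Finset.mem_range] at ht
      obtain ⟨m', hm'⟩ : ∃ m', m = m' + 1 := ⟨m - 1, by omega⟩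
      obtain ⟨di, dj, r, hi2, hj2⟩ :
          ∃ di dj r, i = f*q*di + r ∧ j = f*q*dj + r := by
        refine ⟨i/(f*q), j/(f*q), i%(f*q), (Nat.div_add_mod _ _).symm, ?_⟩
        have h3 : j % (f*q) = i % (f*q) := hij.symm
        rw [← h3]
        exact (Nat.div_add_mod _ _).symm
      set s : ℕ := di + t + dj * m' with hs
      have key : j + s * (f*q) = (i + t * (f*q)) + (f*m*q) * dj := by
        rw [hs, hi2, hj2, hm']
        ring
      refine Finset.mem_image.mpr ⟨s % m, Finset.mem_range.mpr (Nat.mod_lt _ hm), ?_⟩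
      rw [hpow]
      calc j + s % m * (f*q) ≡ j + s * (f*q) [MOD f*m*q] := by
            refine Nat.ModEq.add_left j ?_
            have := (Nat.mod_modEq s m).mul_right' (f*q)
            have hmm : m * (f*q) = f*m*q := by ring
            rwa [hmm] at this
        _ = (i + t * (f*q)) + (f*m*q) * dj := key
        _ ≡ i + t * (f*q) + (f*m*q) * 0 [MOD f*m*q] :=
            (Nat.modEq_zero_iff_dvd.mpr (Dvd.intro _ rfl)).add_left _
        _ = i + t * (f*q) := by ring
    exact fun i j hij => subset_antisymm (hsub i j hij) (hsub j i hij.symm)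
  have hself : ∀ k : ℕ, (α : ZMod p) ^ k ∈ C k := by
    intro k
    rw [hC]
    exact Finset.mem_image.mpr ⟨0, Finset.mem_range.mpr hm, by simp⟩
  have hmemC : ∀ k i : ℕ, k ≡ i [MOD f*q] → (α : ZMod p) ^ k ∈ C i := fun k i h =>
    hCeq k i h ▸ hself k
  have hexp : ∀ (i : ℕ) (x : ZMod p), x ∈ C i → ∃ e, (α : ZMod p) ^ e = x ∧ e ≡ i [MOD f*q] := by
    intro i x hx
    rw [hC] at hx
    obtain ⟨t, _, rfl⟩ := Finset.mem_image.mp hx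
    exact ⟨i + t * (f*q), rfl, by
      have : (i + t * (f*q)) % (f*q) = i % (f*q) := Nat.add_mul_mod_self_right ..
      exact this⟩
  have hCmul : ∀ (a b : ℕ) (x y : ZMod p), x ∈ C a → y ∈ C b → x * y ∈ C (a + b) := by
    intro a b x y hx hy
    obtain ⟨e, rfl, he⟩ := hexp a x hx
    obtain ⟨e', rfl, he'⟩ := hexp b y hy
    rw [← pow_add]
    exact hmemC _ _ (he.add he')
  have hα0 : (α : ZMod p) ≠ 0 := Units.ne_zero α
  have hCne : ∀ (a : ℕ) (x : ZMod p), x ∈ C a → x ≠ 0 := by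
    intro a x hx
    obtain ⟨e, rfl, -⟩ := hexp a x hx
    exact pow_ne_zero _ hα0
  have hCinv : ∀ (a : ℕ) (x : ZMod p), x ∈ C a → x⁻¹ ∈ C (a * (f*m*q - 1)) := by
    intro a x hx
    obtain ⟨e, rfl, he⟩ := hexp a x hx
    have hxinv : ((α : ZMod p) ^ e)⁻¹ = (α : ZMod p) ^ (e * (f*m*q - 1)) := by
      refine (inv_eq_of_mul_eq_one_right ?_)
      rw [← pow_add]
      have h1 : e + e * (f*m*q - 1) = (f*m*q) * e := by
        calc e + e * (f*m*q-1) = e * (f*m*q-1) + e := by ring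
          _ = e * (f*m*q-1+1) := (Nat.mul_succ _ _).symm
          _ = (f*m*q) * e := by rw [show f*m*q-1+1 = f*m*q by omega]; ring
      rw [h1, pow_mul, hone, one_pow]
    rw [hxinv]
    exact hmemC _ _ (he.mul_right _)
  -- shift lemma
  have hS : ∀ (a b s : ℕ) (d : ZMod p),
      ((C a ×ˢ C b).filter (fun z => z.1 - z.2 = d)).card
      = ((C (s+a) ×ˢ C (s+b)).filter (fun z => z.1 - z.2 = (α : ZMod p)^s * d)).card := by
    intro a b s d
    have hN0 : 0 < f*m*q := by omega
    set K : ℕ := f*m*q - s % (f*m*q) with hKdef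
    have hKs : K + s = (f*m*q) * (s/(f*m*q) + 1) := by
      have h1 := Nat.div_add_mod s (f*m*q)
      have h2 : s % (f*m*q) < f*m*q := Nat.mod_lt _ hN0
      rw [Nat.mul_add, Nat.mul_one]
      omega
    have hKs1 : (α : ZMod p)^K * (α : ZMod p)^s = 1 := by
      rw [← pow_add, hKs, pow_mul, hone, one_pow]
    have hsK1 : (α : ZMod p)^s * (α : ZMod p)^K = 1 := by
      rw [mul_comm]; exact hKs1
    have hKmod : K + s ≡ 0 [MOD f*q] :=
      Nat.modEq_zero_iff_dvd.mpr (hKs ▸ Dvd.dvd.mul_right hdvdN _)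
    have hCKa : ∀ c : ℕ, C (K + (s + c)) = C c := by
      intro c
      refine hCeq _ _ ?_
      have := hKmod.add_right c
      rw [Nat.zero_add] at this
      rwa [← Nat.add_assoc]
    refine Finset.card_bij'
      (fun z _ => ((α : ZMod p)^s * z.1, (α : ZMod p)^s * z.2))
      (fun z _ => ((α : ZMod p)^K * z.1, (α : ZMod p)^K * z.2)) ?_ ?_ ?_ ?_
    · intro z hz
      simp only [Finset.mem_filter, Finset.mem_product] at hz ⊢
      exact ⟨⟨hCmul _ _ _ _ (hself s) hz.1.1, hCmul _ _ _ _ (hself s) hz.1.2⟩,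
        by rw [← mul_sub, hz.2]⟩
    · intro z hz
      simp only [Finset.mem_filter, Finset.mem_product] at hz ⊢
      refine ⟨⟨?_, ?_⟩, ?_⟩
      · exact hCKa a ▸ hCmul _ _ _ _ (hself K) hz.1.1
      · exact hCKa b ▸ hCmul _ _ _ _ (hself K) hz.1.2
      · rw [← mul_sub, hz.2, ← mul_assoc, hKs1, one_mul]
    · intro z hz
      simp only [← mul_assoc, hKs1, one_mul]
    · intro z hz
      simp only [← mul_assoc, hsK1, one_mul]
  -- inversion lemma
  have hI : ∀ a b : ℕ,
      ((C a ×ˢ C b).filter (fun z => z.1 - z.2 = 1)).card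
      = ((C (a + b*(f*m*q-1)) ×ˢ C (b*(f*m*q-1))).filter (fun z => z.1 - z.2 = 1)).card := by
    intro a b
    have hNsq : ∀ c : ℕ, c * (f*m*q-1) * (f*m*q-1) ≡ c [MOD f*q] := by
      intro c
      obtain ⟨n, hn⟩ : ∃ n, f*m*q = n + 2 := ⟨f*m*q - 2, by omega⟩
      have h1 : c * (f*m*q-1) * (f*m*q-1) = c * ((f*m*q) * (f*m*q - 2)) + c := by
        rw [hn]
        have e1 : n+2-1 = n+1 := by omega
        have e2 : n+2-2 = n := by omega
        rw [e1, e2]; ring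
      calc c * (f*m*q-1) * (f*m*q-1) = c * ((f*m*q) * (f*m*q-2)) + c := h1
        _ ≡ 0 + c [MOD f*q] := by
            refine Nat.ModEq.add_right c (Nat.modEq_zero_iff_dvd.mpr ?_)
            exact Dvd.dvd.mul_left (hdvdN.mul_right _) c
        _ = c := by omega
    have hback : ∀ c : ℕ, C (c*(f*m*q-1)*(f*m*q-1)) = C c := fun c => hCeq _ _ (hNsq c)
    have hsum : ∀ a b : ℕ, C (a + b*(f*m*q-1) + b*(f*m*q-1)*(f*m*q-1)) = C a := by
      intro a b
      refine hCeq _ _ ?_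
      have h1 : b*(f*m*q-1) + b*(f*m*q-1)*(f*m*q-1) = b*(f*m*q-1)*(f*m*q) := by
        calc b*(f*m*q-1) + b*(f*m*q-1)*(f*m*q-1) = b*(f*m*q-1)*(f*m*q-1+1) := by ring_nf
          _ = b*(f*m*q-1)*(f*m*q) := by rw [show f*m*q-1+1 = f*m*q by omega]
      rw [Nat.add_assoc, h1]
      calc a + b*(f*m*q-1)*(f*m*q) ≡ a + 0 [MOD f*q] := by
            refine Nat.ModEq.add_left a (Nat.modEq_zero_iff_dvd.mpr ?_)
            exact Dvd.dvd.mul_left hdvdN _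
        _ = a := by omega
    refine Finset.card_bij'
      (fun z _ => (z.1 * z.2⁻¹, z.2⁻¹)) (fun z _ => (z.1 * z.2⁻¹, z.2⁻¹)) ?_ ?_ ?_ ?_
    · intro z hz
      simp only [Finset.mem_filter, Finset.mem_product] at hz ⊢
      obtain ⟨⟨h1, h2⟩, h3⟩ := hz
      have hy0 : z.2 ≠ 0 := hCne _ _ h2
      refine ⟨⟨hCmul _ _ _ _ h1 (hCinv _ _ h2), hCinv _ _ h2⟩, ?_⟩
      · have hx1 : z.1 - 1 = z.2 := by rw [← h3]; ring
        calc z.1 * z.2⁻¹ - z.2⁻¹ = (z.1 - 1) * z.2⁻¹ := by ring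
          _ = z.2 * z.2⁻¹ := by rw [hx1]
          _ = 1 := mul_inv_cancel₀ hy0
    · intro z hz
      simp only [Finset.mem_filter, Finset.mem_product] at hz ⊢
      obtain ⟨⟨h1, h2⟩, h3⟩ := hz
      have hy0 : z.2 ≠ 0 := hCne _ _ h2
      refine ⟨⟨?_, ?_⟩, ?_⟩
      · have := hCmul _ _ _ _ h1 (hCinv _ _ h2)
        rwa [hsum a b] at this
      · have := hCinv _ _ h2
        rwa [hback b] at this
      · have hx1 : z.1 - 1 = z.2 := by rw [← h3]; ring
        calc z.1 * z.2⁻¹ - z.2⁻¹ = (z.1 - 1) * z.2⁻¹ := by ring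
          _ = z.2 * z.2⁻¹ := by rw [hx1]
          _ = 1 := mul_inv_cancel₀ hy0
    · intro z hz
      simp only [Finset.mem_filter, Finset.mem_product] at hz
      have hy0 : z.2 ≠ 0 := hCne _ _ hz.1.2
      have hyi0 : z.2⁻¹ ≠ 0 := inv_ne_zero hy0
      simp only [mul_assoc, inv_inv, inv_mul_cancel₀ hy0, mul_one]
    · intro z hz
      simp only [Finset.mem_filter, Finset.mem_product] at hz
      have hy0 : z.2 ≠ 0 := hCne _ _ hz.1.2
      simp only [mul_assoc, inv_inv, inv_mul_cancel₀ hy0, mul_one]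
  -- base case: count of difference 1 equals cyclotomic number
  have hE : ∀ a b : ℕ,
      ((C a ×ˢ C b).filter (fun z => z.1 - z.2 = 1)).card = cyc b a := by
    intro a b
    rw [hcyc]
    refine Finset.card_bij (fun z _ => z.1) ?_ ?_ ?_
    · intro z hz
      simp only [Finset.mem_filter, Finset.mem_product] at hz
      refine Finset.mem_inter.mpr ⟨Finset.mem_image.mpr ⟨z.2, hz.1.2, ?_⟩, hz.1.1⟩
      show z.2 + 1 = z.1
      linear_combination -hz.2
    · intro z1 h1 z2 h2 hee
      simp only [Finset.mem_filter, Finset.mem_product] at h1 h2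
      exact Prod.ext hee (by linear_combination hee - h1.2 + h2.2)
    · intro w hw
      obtain ⟨hw1, hw2⟩ := Finset.mem_inter.mp hw
      obtain ⟨y, hy, hyw⟩ := Finset.mem_image.mp hw1
      refine ⟨(w, y), ?_, rfl⟩
      simp only [Finset.mem_filter, Finset.mem_product]
      exact ⟨⟨hw2, hy⟩, by linear_combination -hyw⟩
  have hcyccong : ∀ a a' b b' : ℕ, a ≡ a' [MOD f*q] → b ≡ b' [MOD f*q] →
      cyc a b = cyc a' b' := by
    intro a a' b b' h1 h2
    rw [hcyc, hcyc, hCeq a a' h1, hCeq b b' h2]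
  refine ⟨?_, ?_, ?_⟩
  · -- disjointness
    intro i j hij
    rw [Finset.disjoint_left]
    intro x hxi hxj
    rw [hQ] at hxi hxj
    obtain ⟨e, hxe, he⟩ := hexp _ _ hxi
    obtain ⟨e', hxe', he'⟩ := hexp _ _ hxj
    have h1 : e ≡ e' [MOD f*m*q] := (hpow e e').mp (by rw [hxe, hxe'])
    have h2 : (f*(i:ℕ)) ≡ (f*(j:ℕ)) [MOD f*q] :=
      (he.symm.trans (h1.of_dvd hdvdN)).trans he'
    have h3 : f * ((i:ℕ) % q) = f * ((j:ℕ) % q) := by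
      have h2' := h2
      unfold Nat.ModEq at h2'
      rwa [Nat.mul_mod_mul_left, Nat.mul_mod_mul_left] at h2'
    have h4 : (i:ℕ) % q = (j:ℕ) % q := Nat.eq_of_mul_eq_mul_left hf h3
    rw [Nat.mod_eq_of_lt i.is_lt, Nat.mod_eq_of_lt j.is_lt] at h4
    exact hij (Fin.ext h4)
  · -- cardinality
    intro i
    rw [hQ, hC]
    rw [Finset.card_image_of_injOn, Finset.card_range]
    intro t ht u hu hee
    simp only [Finset.coe_range, Set.mem_Iio] at ht hu
    have h1 := (hpow _ _).mp hee
    have h2 := Nat.ModEq.add_left_cancel' _ h1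
    have h3 : f*m*q = m*(f*q) := by ring
    rw [h3] at h2
    have h4 : t % m * (f*q) = u % m * (f*q) := by
      have := h2
      unfold Nat.ModEq at this
      rwa [Nat.mul_mod_mul_right, Nat.mul_mod_mul_right] at this
    have h5 : t % m = u % m := Nat.eq_of_mul_eq_mul_right (by positivity) h4
    rwa [Nat.mod_eq_of_lt ht, Nat.mod_eq_of_lt hu] at h5
  · -- main inequality
    intro d hd
    haveI : NeZero (f*q) := ⟨by positivity⟩
    obtain ⟨k, rfl⟩ : ∃ k : ℕ, (α : ZMod p)^k = d := by
      obtain ⟨u, hu⟩ := isUnit_iff_ne_zero.mpr hd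
      obtain ⟨k, hk⟩ := mem_powers_iff_mem_zpowers.mpr (hα u)
      exact ⟨k, by rw [← hu, ← hk]; rfl⟩
    set i0 : ℕ := k % f with hi0def
    set s' : ℕ := (k / f) % q with hs'def
    set K : ℕ := f*m*q - k % (f*m*q) with hKdef
    have hN0 : 0 < f*m*q := by omega
    have hs'q : s' < q := Nat.mod_lt _ hq
    have hKk : K + k = (f*m*q) * (k/(f*m*q) + 1) := by
      have h1 := Nat.div_add_mod k (f*m*q)
      have h2 : k % (f*m*q) < f*m*q := Nat.mod_lt _ hN0
      rw [Nat.mul_add, Nat.mul_one]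
      omega
    have hKk1 : (α : ZMod p)^K * (α : ZMod p)^k = 1 := by
      rw [← pow_add, hKk, pow_mul, hone, one_pow]
    -- casts in ZMod (f*q)
    have hNc : ((f*m*q : ℕ) : ZMod (f*q)) = 0 :=
      (ZMod.natCast_eq_zero_iff _ _).mpr hdvdN
    have hKc : ((K : ℕ) : ZMod (f*q)) = -(k : ZMod (f*q)) := by
      have h1 : ((K + k : ℕ) : ZMod (f*q)) = 0 := by
        rw [hKk, Nat.cast_mul, hNc, zero_mul]
      rw [Nat.cast_add] at h1
      exact eq_neg_of_add_eq_zero_left h1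
    have hN1c : ((f*m*q - 1 : ℕ) : ZMod (f*q)) = -1 := by
      rw [Nat.cast_sub (by omega : 1 ≤ f*m*q), hNc, Nat.cast_one, zero_sub]
    have hqf0 : ((q : ℕ) : ZMod (f*q)) * ((f : ℕ) : ZMod (f*q)) = 0 := by
      rw [← Nat.cast_mul]
      exact (ZMod.natCast_eq_zero_iff _ _).mpr ⟨1, by ring⟩
    have hkc : ((k : ℕ) : ZMod (f*q)) =
        (i0 : ZMod (f*q)) + (f : ZMod (f*q)) * (s' : ZMod (f*q)) := by
      have h0 : i0 + f * (k/f) = k := Nat.mod_add_div k f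
      have hfs : ((f * s' : ℕ) : ZMod (f*q)) = ((f * (k/f) : ℕ) : ZMod (f*q)) := by
        rw [ZMod.natCast_eq_natCast_iff]
        exact (Nat.mod_modEq (k/f) q).mul_left' f
      calc ((k : ℕ) : ZMod (f*q)) = ((i0 + f * (k/f) : ℕ) : ZMod (f*q)) := by rw [h0]
        _ = (i0 : ZMod (f*q)) + ((f * (k/f) : ℕ) : ZMod (f*q)) := by push_cast; ring
        _ = (i0 : ZMod (f*q)) + ((f * s' : ℕ) : ZMod (f*q)) := by rw [hfs]
        _ = (i0 : ZMod (f*q)) + (f : ZMod (f*q)) * (s' : ZMod (f*q)) := by push_cast; ring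
    -- per-term computation
    have hterm : ∀ i j : Fin q, i ≠ j →
        ((C (f*(i:ℕ)) ×ˢ C (f*(j:ℕ))).filter (fun z => z.1 - z.2 = (α : ZMod p)^k)).card
        = cyc (i0 + ((s' + q - (j:ℕ)) % q) * f) ((((i:ℕ) + q - (j:ℕ)) % q) * f) := by
      intro i j hij
      rw [hS (f*(i:ℕ)) (f*(j:ℕ)) K]
      simp only [hKk1]
      rw [hI (K + f*(i:ℕ)) (K + f*(j:ℕ)), hE]
      have hjq := j.is_lt
      have hiq := i.is_lt
      refine hcyccong _ _ _ _ ?_ ?_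
      · rw [← ZMod.natCast_eq_natCast_iff]
        have hj' : ((((s'+q-(j:ℕ))%q) * f : ℕ) : ZMod (f*q))
            = (((s'+q-(j:ℕ)) * f : ℕ) : ZMod (f*q)) := by
          rw [ZMod.natCast_eq_natCast_iff]
          have h := (Nat.mod_modEq (s'+q-(j:ℕ)) q).mul_right' f
          rwa [mul_comm q f] at h
        have eL : (((K + f*(j:ℕ)) * (f*m*q-1) : ℕ) : ZMod (f*q))
            = (k : ZMod (f*q)) - (f : ZMod (f*q)) * ((j:ℕ) : ZMod (f*q)) := by
          push_cast [hKc, hN1c]; ring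
        have eR : ((i0 + ((s'+q-(j:ℕ))%q)*f : ℕ) : ZMod (f*q))
            = (k : ZMod (f*q)) - (f : ZMod (f*q)) * ((j:ℕ) : ZMod (f*q)) := by
          rw [Nat.cast_add, hj']
          push_cast [Nat.cast_sub (by omega : (j:ℕ) ≤ s' + q)]
          linear_combination hqf0 - hkc
        rw [eL, eR]
      · rw [← ZMod.natCast_eq_natCast_iff]
        have hc' : (((((i:ℕ)+q-(j:ℕ))%q) * f : ℕ) : ZMod (f*q))
            = ((((i:ℕ)+q-(j:ℕ)) * f : ℕ) : ZMod (f*q)) := by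
          rw [ZMod.natCast_eq_natCast_iff]
          have h := (Nat.mod_modEq ((i:ℕ)+q-(j:ℕ)) q).mul_right' f
          rwa [mul_comm q f] at h
        have eL : (((K + f*(i:ℕ)) + (K + f*(j:ℕ)) * (f*m*q-1) : ℕ) : ZMod (f*q))
            = (f : ZMod (f*q)) * ((i:ℕ) : ZMod (f*q))
              - (f : ZMod (f*q)) * ((j:ℕ) : ZMod (f*q)) := by
          push_cast [hKc, hN1c]; ring
        have eR : (((((i:ℕ)+q-(j:ℕ))%q) * f : ℕ) : ZMod (f*q))
            = (f : ZMod (f*q)) * ((i:ℕ) : ZMod (f*q))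
              - (f : ZMod (f*q)) * ((j:ℕ) : ZMod (f*q)) := by
          rw [hc']
          push_cast [Nat.cast_sub (by omega : (j:ℕ) ≤ (i:ℕ) + q)]
          linear_combination hqf0
        rw [eL, eR]
    -- the total count equals g i0
    have hoc : outerCount Q ((α : ZMod p)^k) = g i0 := by
      simp only [outerCount, hQ]
      rw [Finset.sum_comm]
      have hrow : ∀ j : Fin q,
          (∑ i : Fin q, if i = j then 0 else
            ((C (f*(i:ℕ)) ×ˢ C (f*(j:ℕ))).filter (fun z => z.1 - z.2 = (α : ZMod p)^k)).card)
          = ∑ a ∈ Finset.Icc 1 (q-1), cyc (i0 + ((s' + q - (j:ℕ)) % q) * f) (a * f) := by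
        intro j
        have hjq := j.is_lt
        have h1 : (∑ i : Fin q, if i = j then 0 else
            ((C (f*(i:ℕ)) ×ˢ C (f*(j:ℕ))).filter (fun z => z.1 - z.2 = (α : ZMod p)^k)).card)
            = ∑ i ∈ Finset.univ.filter (fun i => ¬ i = j),
            ((C (f*(i:ℕ)) ×ˢ C (f*(j:ℕ))).filter (fun z => z.1 - z.2 = (α : ZMod p)^k)).card := by
          rw [Finset.sum_filter]
          refine Finset.sum_congr rfl fun i _ => ?_
          by_cases h : i = j <;> simp [h]
        rw [h1]
        rw [Finset.sum_congr rfl (fun i hi => hterm i j (Finset.mem_filter.mp hi).2)]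
        refine Finset.sum_nbij' (fun i => (((i:ℕ) + q - (j:ℕ)) % q))
          (fun a => (⟨(a + (j:ℕ)) % q, Nat.mod_lt _ hq⟩ : Fin q)) ?_ ?_ ?_ ?_ ?_
        · intro i hi
          have hiq := i.is_lt
          have hne : (i:ℕ) ≠ (j:ℕ) := fun h => (Finset.mem_filter.mp hi).2 (Fin.ext h)
          have h5 : ((i:ℕ)+q-(j:ℕ)) % q < q := Nat.mod_lt _ hq
          simp only [Finset.mem_Icc]
          rcases mod_two_cases ((i:ℕ)+q-(j:ℕ)) q hq (by omega) with h | h <;> omega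
        · intro a ha
          rw [Finset.mem_Icc] at ha
          refine Finset.mem_filter.mpr ⟨Finset.mem_univ _, fun h => ?_⟩
          have h6 := congrArg Fin.val h
          simp only at h6
          have h5 : (a + (j:ℕ)) % q < q := Nat.mod_lt _ hq
          rcases mod_two_cases (a + (j:ℕ)) q hq (by omega) with h7 | h7 <;> omega
        · intro i hi
          have hiq := i.is_lt
          have hne : (i:ℕ) ≠ (j:ℕ) := fun h => (Finset.mem_filter.mp hi).2 (Fin.ext h)
          refine Fin.ext ?_
          simp only [Fin.val_mk]
          have h5 : ((i:ℕ)+q-(j:ℕ)) % q < q := Nat.mod_lt _ hq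
          have h6 : (((i:ℕ)+q-(j:ℕ)) % q + (j:ℕ)) % q < q := Nat.mod_lt _ hq
          rcases mod_two_cases ((i:ℕ)+q-(j:ℕ)) q hq (by omega) with h7 | h7 <;>
            rcases mod_two_cases (((i:ℕ)+q-(j:ℕ)) % q + (j:ℕ)) q hq (by omega) with h8 | h8 <;>
            omega
        · intro a ha
          rw [Finset.mem_Icc] at ha
          simp only [Fin.val_mk]
          have h5 : (a + (j:ℕ)) % q < q := Nat.mod_lt _ hq
          have h6 : ((a + (j:ℕ)) % q + q - (j:ℕ)) % q < q := Nat.mod_lt _ hq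
          rcases mod_two_cases (a + (j:ℕ)) q hq (by omega) with h7 | h7 <;>
            rcases mod_two_cases ((a + (j:ℕ)) % q + q - (j:ℕ)) q hq (by omega) with h8 | h8 <;>
            omega
        · intro i hi
          rfl
      rw [Finset.sum_congr rfl (fun j _ => hrow j)]
      refine Finset.sum_nbij' (fun j : Fin q => (s' + q - (j:ℕ)) % q)
        (fun j' => (⟨(s' + q - j') % q, Nat.mod_lt _ hq⟩ : Fin q)) ?_ ?_ ?_ ?_ ?_
      · intro j _
        exact Finset.mem_range.mpr (Nat.mod_lt _ hq)
      · intro j' _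
        exact Finset.mem_univ _
      · intro j _
        have hjq := j.is_lt
        refine Fin.ext ?_
        simp only [Fin.val_mk]
        have h5 : (s' + q - (j:ℕ)) % q < q := Nat.mod_lt _ hq
        have h6 : (s' + q - (s' + q - (j:ℕ)) % q) % q < q := Nat.mod_lt _ hq
        rcases mod_two_cases (s' + q - (j:ℕ)) q hq (by omega) with h7 | h7 <;>
          rcases mod_two_cases (s' + q - (s' + q - (j:ℕ)) % q) q hq (by omega) with h8 | h8 <;>
          omega
      · intro j' hj'
        rw [Finset.mem_range] at hj'
        simp only [Fin.val_mk]
        have h5 : (s' + q - j') % q < q := Nat.mod_lt _ hq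
        have h6 : (s' + q - (s' + q - j') % q) % q < q := Nat.mod_lt _ hq
        rcases mod_two_cases (s' + q - j') q hq (by omega) with h7 | h7 <;>
          rcases mod_two_cases (s' + q - (s' + q - j') % q) q hq (by omega) with h8 | h8 <;>
          omega
      · intro j _
        rfl
    rw [hoc]
    exact Nat.sInf_le ⟨i0, Set.mem_Iio.mpr (Nat.mod_lt _ hf), rfl⟩
end

section
/- A DSS of index ρ ≥ 1 over Z_v with q sets guarantees block synchronization under up to ⌊(ρ−1)/2⌋ substitution errors: if every nonzero cyclic shift difference is covered at least ρ times, then any codeword of the associated coset code and any splice of two codewords have Hamming distance at least ρ on the marker positions; hence a received word within Hamming distance ⌊(ρ−1)/2⌋ of a codeword cannot simultaneously be within distance ⌊(ρ−1)/2⌋ of a splice. -/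
/-- The splice with offset `s` (1 ≤ s ≤ v−1) between a preceding codeword `x` and a
following codeword `y`: the last `s` symbols of `x` followed by the first `v−s`
symbols of `y`. -/
def splice {v q : ℕ} [NeZero v] (x y : ZMod v → Fin q) (s : ℕ) : ZMod v → Fin q :=
  fun k => if k.val < s then x (k - (s : ZMod v)) else y (k - (s : ZMod v))

/-- A word of the coset code determined by the marker sets `Q`: positions in `Q i`
carry the synchronization marker `i`; all other positions are arbitrary. -/
def isCodeword {v q : ℕ} (Q : Fin q → Finset (ZMod v)) (z : ZMod v → Fin q) : Prop :=
  ∀ i : Fin q, ∀ k ∈ Q i, z k = i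

theorem stmt_14 (v q ρ : ℕ) [NeZero v] (hρ : 1 ≤ ρ)
    (Q : Fin q → Finset (ZMod v))
    (hdisj : ∀ i j, i ≠ j → Disjoint (Q i) (Q j))
    (hidx : ∀ d : ZMod v, d ≠ 0 → ρ ≤ outerCount Q d) :
    ∀ z x y : ZMod v → Fin q, isCodeword Q z → isCodeword Q x → isCodeword Q y →
      ∀ s : ℕ, 1 ≤ s → s ≤ v - 1 →
        ρ ≤ hammingDist z (splice x y s) ∧
        ∀ r : ZMod v → Fin q,
          hammingDist r z ≤ (ρ - 1) / 2 → ¬ hammingDist r (splice x y s) ≤ (ρ - 1) / 2 := by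
  intro z x y hz hx hy s hs1 hs2
  have hvpos : 0 < v := Nat.pos_of_ne_zero (NeZero.ne v)
  have hsv : s < v := by omega
  set d : ZMod v := (s : ZMod v) with hd
  have hdne : d ≠ 0 := by
    rw [hd, Ne, ZMod.natCast_eq_zero_iff]
    intro hdvd
    exact absurd (Nat.le_of_dvd (by omega) hdvd) (by omega)
  set w : ZMod v → Fin q := splice x y s with hw
  set A : Fin q × Fin q → Finset (ZMod v) :=
    fun p => if p.1 = p.2 then ∅ else (Q p.1).filter (fun a => a - d ∈ Q p.2) with hA
  have key : ρ ≤ hammingDist z w := by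
    have h1 : outerCount Q d = ∑ p : Fin q × Fin q, (A p).card := by
      rw [outerCount, ← Fintype.sum_prod_type']
      refine Finset.sum_congr rfl fun p _ => ?_
      by_cases h : p.1 = p.2
      · simp [hA, h]
      · rw [if_neg h]
        simp only [hA, if_neg h]
        refine Finset.card_bij (fun pr _ => pr.1) ?_ ?_ ?_
        · intro pr hpr
          simp only [Finset.mem_filter, Finset.mem_product] at hpr
          simp only [Finset.mem_filter]
          refine ⟨hpr.1.1, ?_⟩
          have : pr.1 - d = pr.2 := by rw [← hpr.2]; ring
          rw [this]; exact hpr.1.2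
        · intro pr hpr pr' hpr' hab
          simp only [Finset.mem_filter, Finset.mem_product] at hpr hpr'
          have h2 : pr.2 = pr'.2 := by
            have e1 : pr.2 = pr.1 - d := by rw [← hpr.2]; ring
            have e2 : pr'.2 = pr'.1 - d := by rw [← hpr'.2]; ring
            rw [e1, e2, hab]
          exact Prod.ext hab h2
        · intro b hb
          simp only [Finset.mem_filter] at hb
          refine ⟨(b, b - d), ?_, rfl⟩
          simp only [Finset.mem_filter, Finset.mem_product]
          exact ⟨⟨hb.1, hb.2⟩, by ring⟩
      -- end
    have hpd : ∀ p ∈ (Finset.univ : Finset (Fin q × Fin q)), ∀ p' ∈ Finset.univ,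
        p ≠ p' → Disjoint (A p) (A p') := by
      intro p _ p' _ hne
      simp only [hA]
      by_cases h : p.1 = p.2
      · simp [h]
      by_cases h' : p'.1 = p'.2
      · simp [h']
      rw [if_neg h, if_neg h']
      rw [Finset.disjoint_left]
      intro a ha ha'
      simp only [Finset.mem_filter] at ha ha'
      by_cases h1 : p.1 = p'.1
      · have h2 : p.2 ≠ p'.2 := by
          intro h2; exact hne (Prod.ext h1 h2)
        exact (Finset.disjoint_left.mp (hdisj _ _ h2) ha.2) ha'.2
      · exact (Finset.disjoint_left.mp (hdisj _ _ h1) ha.1) ha'.1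
    have h2 : ∑ p : Fin q × Fin q, (A p).card = (Finset.univ.biUnion A).card :=
      (Finset.card_biUnion hpd).symm
    have h3 : Finset.univ.biUnion A ⊆ Finset.univ.filter (fun k => z k ≠ w k) := by
      intro k hk
      simp only [Finset.mem_biUnion] at hk
      obtain ⟨p, _, hkp⟩ := hk
      simp only [hA] at hkp
      by_cases h : p.1 = p.2
      · simp [h] at hkp
      rw [if_neg h, Finset.mem_filter] at hkp
      have hzk : z k = p.1 := hz p.1 k hkp.1
      have hwk : w k = p.2 := by
        rw [hw, splice]
        by_cases hc : k.val < s
        · rw [if_pos hc]; exact hx p.2 _ hkp.2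
        · rw [if_neg hc]; exact hy p.2 _ hkp.2
      simp only [Finset.mem_filter, Finset.mem_univ, true_and]
      rw [hzk, hwk]; exact h
    have h4 : hammingDist z w = (Finset.univ.filter (fun k => z k ≠ w k)).card := rfl
    calc ρ ≤ outerCount Q d := hidx d hdne
      _ = (Finset.univ.biUnion A).card := by rw [h1, h2]
      _ ≤ (Finset.univ.filter (fun k => z k ≠ w k)).card := Finset.card_le_card h3
      _ = hammingDist z w := h4.symm
  refine ⟨key, ?_⟩
  intro r hr hrw
  have htri : hammingDist z w ≤ hammingDist z r + hammingDist r w := hammingDist_triangle z r w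
  rw [hammingDist_comm z r] at htri
  omega
end

section
/- Let v = 4n+3 be a prime. The set of nonzero quadratic residues of F_v, partitioned into (2n+1)/m disjoint m-subsets each closed under multiplication by an appropriate subgroup (the Paley-type partition), yields a perfect regular DSS(4n+3, m, (2n+1)/m, (2n+1−m)/2) whenever m divides 2n+1. In particular, every nonzero element of F_v occurs exactly (2n+1−m)/2 times as an outer difference between distinct parts. -/
open Finset in
theorem myOuterCount_neg {G ι : Type*} [AddCommGroup G] [DecidableEq G] [Fintype ι] [DecidableEq ι]
    (Q : ι → Finset G) (d : G) : outerCount Q (-d) = outerCount Q d := by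
  unfold outerCount
  rw [Finset.sum_comm]
  refine Finset.sum_congr rfl fun x _ => Finset.sum_congr rfl fun y _ => ?_
  by_cases hxy : x = y
  · simp [hxy]
  · rw [if_neg (Ne.symm hxy), if_neg hxy]
    have himg : (Q y ×ˢ Q x).filter (fun p => p.1 - p.2 = -d)
        = ((Q x ×ˢ Q y).filter (fun p => p.1 - p.2 = d)).image Prod.swap := by
      ext ⟨a, b⟩
      simp only [mem_filter, mem_product, mem_image, Prod.exists, Prod.swap_prod_mk,
        Prod.mk.injEq]
      constructor
      · rintro ⟨⟨ha, hb⟩, hd⟩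
        exact ⟨b, a, ⟨⟨hb, ha⟩, by rw [← neg_sub, hd, neg_neg]⟩, rfl, rfl⟩
      · rintro ⟨c, e, ⟨⟨hc, he⟩, hd⟩, rfl, rfl⟩
        exact ⟨⟨he, hc⟩, by rw [← neg_sub, hd]⟩
    rw [himg, Finset.card_image_of_injective _ Prod.swap_injective]

open Finset in
theorem myOuterCount_mul {F ι : Type*} [Field F] [DecidableEq F] [Fintype ι] [DecidableEq ι]
    (Q : ι → Finset F) (σ : Equiv.Perm ι) (c : F) (hc : c ≠ 0)
    (hQ : ∀ i, Q (σ i) = (Q i).image (fun x => c * x)) (d : F) :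
    outerCount Q (c * d) = outerCount Q d := by
  unfold outerCount
  rw [← Equiv.sum_comp σ (fun i => ∑ j : ι,
      if i = j then 0 else ((Q i ×ˢ Q j).filter (fun p => p.1 - p.2 = c * d)).card)]
  refine Finset.sum_congr rfl fun i _ => ?_
  rw [← Equiv.sum_comp σ (fun j =>
      if σ i = j then 0 else ((Q (σ i) ×ˢ Q j).filter (fun p => p.1 - p.2 = c * d)).card)]
  refine Finset.sum_congr rfl fun j _ => ?_
  by_cases hij : i = j
  · simp [hij]
  · rw [if_neg hij, if_neg (fun h => hij (σ.injective h)), hQ i, hQ j]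
    have himg : (((Q i).image (fun x => c * x)) ×ˢ ((Q j).image (fun x => c * x))).filter
          (fun p => p.1 - p.2 = c * d)
        = ((Q i ×ˢ Q j).filter (fun p => p.1 - p.2 = d)).image
            (fun p => (c * p.1, c * p.2)) := by
      ext ⟨a, b⟩
      simp only [mem_filter, mem_product, mem_image, Prod.exists, Prod.mk.injEq]
      constructor
      · rintro ⟨⟨⟨x, hx, rfl⟩, ⟨y, hy, rfl⟩⟩, hd⟩
        refine ⟨x, y, ⟨⟨hx, hy⟩, ?_⟩, rfl, rfl⟩
        rw [← mul_sub] at hd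
        exact mul_left_cancel₀ hc hd
      · rintro ⟨x, y, ⟨⟨hx, hy⟩, hd⟩, rfl, rfl⟩
        exact ⟨⟨⟨x, hx, rfl⟩, ⟨y, hy, rfl⟩⟩, by rw [← mul_sub, hd]⟩
    rw [himg, Finset.card_image_of_injective]
    intro a b hab
    simp only [Prod.mk.injEq, Prod.ext_iff] at hab ⊢
    exact ⟨mul_left_cancel₀ hc hab.1, mul_left_cancel₀ hc hab.2⟩

theorem stmt_16 (n m p : ℕ) (hp : p = 4 * n + 3) (hprime : p.Prime)
    (hm : m ∣ 2 * n + 1)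
    (α : (ZMod p)ˣ) (hα : ∀ x : (ZMod p)ˣ, x ∈ Subgroup.zpowers α) :
    -- the Paley-type partition of the nonzero quadratic residues into q = (2n+1)/m
    -- cosets of the subgroup of index q of the cyclic group of quadratic residues
    let q : ℕ := (2 * n + 1) / m
    let Q : Fin q → Finset (ZMod p) := fun i =>
      (Finset.range m).image (fun t => ((α : ZMod p)) ^ (2 * (i : ℕ) + 2 * q * t))
    -- it is a perfect regular DSS(4n+3, m, (2n+1)/m, (2n+1−m)/2)
    (∀ i j, i ≠ j → Disjoint (Q i) (Q j)) ∧
    (∀ i, (Q i).card = m) ∧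
    (∀ d : ZMod p, d ≠ 0 → outerCount Q d = (2 * n + 1 - m) / 2) := by
  subst hp
  haveI hfact : Fact (Nat.Prime (4 * n + 3)) := ⟨hprime⟩
  intro q Q
  set u : ZMod (4 * n + 3) := (α : ZMod (4 * n + 3)) with hu
  have hm0 : 0 < m := Nat.pos_of_ne_zero (by
    rintro rfl
    exact absurd (Nat.eq_zero_of_zero_dvd hm) (by omega))
  have hqm : q * m = 2 * n + 1 := Nat.div_mul_cancel hm
  have hq0 : 0 < q := by
    rcases Nat.eq_zero_or_pos q with h | h
    · rw [h, zero_mul] at hqm; omega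
    · exact h
  haveI : NeZero q := ⟨hq0.ne'⟩
  have hcard : Nat.card (ZMod (4 * n + 3))ˣ = 4 * n + 2 := by
    rw [Nat.card_eq_fintype_card, ZMod.card_units]
    omega
  have hoα : orderOf α = 4 * n + 2 := by
    rw [orderOf_eq_card_of_forall_mem_zpowers hα, hcard]
  have hou : orderOf u = 4 * n + 2 := by rw [hu, orderOf_units, hoα]
  have hu0 : u ≠ 0 := α.ne_zero
  have hupow : ∀ a b : ℕ, u ^ a = u ^ b ↔ a ≡ b [MOD 4 * n + 2] := by
    intro a b
    constructor
    · intro h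
      have h' : α ^ a = α ^ b := Units.ext (by
        rw [Units.val_pow_eq_pow_val, Units.val_pow_eq_pow_val]; exact h)
      rw [← hoα]; exact pow_eq_pow_iff_modEq.1 h'
    · intro h
      have h' : α ^ a = α ^ b := pow_eq_pow_iff_modEq.2 (by rw [hoα]; exact h)
      have h'' := congrArg Units.val h'
      rw [Units.val_pow_eq_pow_val, Units.val_pow_eq_pow_val] at h''
      exact h''
  have hu1 : u ^ (4 * n + 2) = 1 := by
    have h' : α ^ (4 * n + 2) = 1 := by rw [← hoα]; exact pow_orderOf_eq_one α
    have h'' := congrArg Units.val h'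
    rw [Units.val_pow_eq_pow_val] at h''
    exact h''
  have hu2qm : u ^ (2 * (q * m)) = 1 := by
    rw [hqm, show 2 * (2 * n + 1) = 4 * n + 2 by ring, hu1]
  have hred : ∀ (A B r : ℕ), u ^ (2 * (q * (m * A + B) + r)) = u ^ (2 * r + 2 * q * B) := by
    intro A B r
    rw [show 2 * (q * (m * A + B) + r) = (2 * r + 2 * q * B) + (2 * (q * m)) * A by ring,
      pow_add, pow_mul, hu2qm, one_pow, mul_one]
  have hmem : ∀ (i : Fin q) (x : ZMod (4 * n + 3)),
      x ∈ Q i ↔ ∃ s : ℕ, x = u ^ (2 * s) ∧ s % q = (i : ℕ) := by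
    intro i x
    simp only [Q, Finset.mem_image, Finset.mem_range, ← hu]
    constructor
    · rintro ⟨t, ht, rfl⟩
      refine ⟨(i : ℕ) + q * t, ?_, ?_⟩
      · congr 1; ring
      · rw [Nat.add_mul_mod_self_left, Nat.mod_eq_of_lt i.isLt]
    · rintro ⟨s, rfl, hs⟩
      obtain ⟨A, B, hB, hsA⟩ : ∃ A B : ℕ, B = (s / q) % m ∧ s = q * (m * A + B) + (i : ℕ) := by
        refine ⟨s / q / m, (s / q) % m, rfl, ?_⟩
        have h1 := Nat.div_add_mod s q
        have h2 := Nat.div_add_mod (s / q) m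
        rw [hs] at h1
        conv_lhs => rw [← h1]
        rw [h2]
      refine ⟨B, by rw [hB]; exact Nat.mod_lt _ hm0, ?_⟩
      rw [hsA]
      exact (hred A B (i : ℕ)).symm
  have hcardQ : ∀ i : Fin q, (Q i).card = m := by
    intro i
    have hlt : ∀ t, t < m → 2 * (i : ℕ) + 2 * q * t < 4 * n + 2 := by
      intro t ht
      have h1 : q * (t + 1) ≤ q * m := Nat.mul_le_mul_left q (by omega)
      have h2 : (i : ℕ) < q := i.isLt
      have h3 : q * t + q = q * (t + 1) := by ring
      have h4 : 2 * q * t = 2 * (q * t) := by ring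
      omega
    have hinj : Set.InjOn (fun t => u ^ (2 * (i : ℕ) + 2 * q * t)) (Finset.range m) := by
      intro a ha b hb hab
      simp only [Finset.coe_range, Set.mem_Iio] at ha hb
      rw [hupow] at hab
      unfold Nat.ModEq at hab
      rw [Nat.mod_eq_of_lt (hlt a ha), Nat.mod_eq_of_lt (hlt b hb)] at hab
      have h4 : 2 * q * a = 2 * (q * a) := by ring
      have h5 : 2 * q * b = 2 * (q * b) := by ring
      have h6 : q * a = q * b := by omega
      exact Nat.eq_of_mul_eq_mul_left hq0 h6
    show ((Finset.range m).image (fun t => u ^ (2 * (i : ℕ) + 2 * q * t))).card = m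
    rw [Finset.card_image_of_injOn hinj, Finset.card_range]
  have hdisj : ∀ i j : Fin q, i ≠ j → Disjoint (Q i) (Q j) := by
    intro i j hij
    rw [Finset.disjoint_left]
    intro x hxi hxj
    obtain ⟨s, rfl, hs⟩ := (hmem i x).1 hxi
    obtain ⟨s', hss', hs'⟩ := (hmem j _).1 hxj
    have h1 : 2 * s ≡ 2 * s' [MOD 4 * n + 2] := (hupow _ _).1 hss'
    have h2 : 2 * s ≡ 2 * s' [MOD 2 * (2 * n + 1)] := by
      rwa [show 2 * (2 * n + 1) = 4 * n + 2 by ring]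
    have h3 : s ≡ s' [MOD 2 * n + 1] := Nat.ModEq.mul_left_cancel' (by norm_num) h2
    have h4 : s ≡ s' [MOD q] := Nat.ModEq.of_dvd ⟨m, hqm.symm⟩ h3
    exact hij (Fin.ext (by rw [← hs, ← hs']; exact h4))
  have hmul_inj : Function.Injective (fun x : ZMod (4 * n + 3) => u ^ 2 * x) :=
    fun a b hab => mul_left_cancel₀ (pow_ne_zero 2 hu0) hab
  have hshift : ∀ i : Fin q, Q (i + 1) = (Q i).image (fun x => u ^ 2 * x) := by
    intro i
    refine (Finset.eq_of_subset_of_card_le ?_ ?_).symm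
    · intro x hx
      obtain ⟨y, hy, rfl⟩ := Finset.mem_image.1 hx
      obtain ⟨s, rfl, hs⟩ := (hmem i y).1 hy
      refine (hmem (i + 1) _).2 ⟨s + 1, ?_, ?_⟩
      · rw [← pow_add]; congr 1; ring
      · have hval : ((i + 1 : Fin q) : ℕ) = ((i : ℕ) + (1 % q)) % q := by
          rw [Fin.val_add, Fin.val_one']
        rw [hval, Nat.add_mod, hs]
    · rw [Finset.card_image_of_injective _ hmul_inj, hcardQ, hcardQ]
  have hstep : ∀ e : ZMod (4 * n + 3), outerCount Q (u ^ 2 * e) = outerCount Q e := by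
    intro e
    refine myOuterCount_mul Q (Equiv.addRight (1 : Fin q)) (u ^ 2) (pow_ne_zero 2 hu0) ?_ e
    intro i
    simpa using hshift i
  have hkey : ∀ (a : ℕ) (e : ZMod (4 * n + 3)),
      outerCount Q ((u ^ 2) ^ a * e) = outerCount Q e := by
    intro a
    induction a with
    | zero => intro e; rw [pow_zero, one_mul]
    | succ a ih =>
      intro e
      rw [show ((u ^ 2) ^ (a + 1) * e) = (u ^ 2) ^ a * (u ^ 2 * e) by ring, ih, hstep]
  have hneg1 : u ^ (2 * n + 1) = -1 := by
    have hsq : u ^ (2 * n + 1) * u ^ (2 * n + 1) = 1 := by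
      rw [← pow_add, show (2 * n + 1) + (2 * n + 1) = 4 * n + 2 by ring, hu1]
    rcases mul_self_eq_one_iff.1 hsq with h | h
    · exfalso
      have hdvd : orderOf u ∣ 2 * n + 1 := orderOf_dvd_of_pow_eq_one h
      rw [hou] at hdvd
      have := Nat.le_of_dvd (by omega) hdvd
      omega
    · exact h
  have hconst : ∀ d : ZMod (4 * n + 3), d ≠ 0 → outerCount Q d = outerCount Q 1 := by
    intro d hd
    obtain ⟨k, hk⟩ := (Submonoid.mem_powers_iff _ _).1
      ((mem_powers_iff_mem_zpowers).2 (hα (Units.mk0 d hd)))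
    have hdk : d = u ^ k := by
      have h := congrArg Units.val hk
      rw [Units.val_pow_eq_pow_val] at h
      simpa [hu] using h.symm
    rcases Nat.even_or_odd k with ⟨a, ha⟩ | ⟨a, ha⟩
    · rw [hdk, show u ^ k = (u ^ 2) ^ a * 1 by
        rw [mul_one, ← pow_mul, show 2 * a = k from by omega]]
      exact hkey a 1
    · have h1 : u ^ k = (u ^ 2) ^ a * u := by
        rw [← pow_mul, ← pow_succ, show 2 * a + 1 = k from by omega]
      rw [hdk, h1, hkey a u]
      have h2 : u = -((u ^ 2) ^ (n + 1) * 1) := by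
        rw [mul_one, ← pow_mul, show 2 * (n + 1) = (2 * n + 1) + 1 from by ring,
          pow_succ, hneg1]
        ring
      rw [h2, myOuterCount_neg, hkey]
  have hout0 : outerCount Q (0 : ZMod (4 * n + 3)) = 0 := by
    unfold outerCount
    refine Finset.sum_eq_zero fun i _ => Finset.sum_eq_zero fun j _ => ?_
    by_cases hij : i = j
    · rw [if_pos hij]
    · rw [if_neg hij, Finset.card_eq_zero, Finset.filter_eq_empty_iff]
      rintro ⟨a, b⟩ hab
      rw [Finset.mem_product] at hab
      intro h
      rw [sub_eq_zero] at h
      exact (Finset.disjoint_left.1 (hdisj i j hij)) hab.1 (by rw [h]; exact hab.2)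
  have hsum : ∑ d : ZMod (4 * n + 3), outerCount Q d = q * ((q - 1) * (m * m)) := by
    unfold outerCount
    rw [Finset.sum_comm]
    have hinner : ∀ i : Fin q, (∑ d : ZMod (4 * n + 3), ∑ j : Fin q,
        if i = j then 0 else ((Q i ×ˢ Q j).filter (fun p => p.1 - p.2 = d)).card)
        = (q - 1) * (m * m) := by
      intro i
      rw [Finset.sum_comm]
      have hj : ∀ j : Fin q, (∑ d : ZMod (4 * n + 3),
          if i = j then 0 else ((Q i ×ˢ Q j).filter (fun p => p.1 - p.2 = d)).card)
          = if i = j then 0 else m * m := by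
        intro j
        by_cases hij : i = j
        · simp [hij]
        · simp only [if_neg hij]
          rw [← Finset.card_eq_sum_card_fiberwise (f := fun p : ZMod (4*n+3) × ZMod (4*n+3) => p.1 - p.2)
              (t := Finset.univ) (fun x _ => Finset.mem_univ _)]
          rw [Finset.card_product, hcardQ, hcardQ]
      rw [Finset.sum_congr rfl (fun j _ => hj j)]
      rw [← Finset.add_sum_erase _ _ (Finset.mem_univ i), if_pos rfl, zero_add]
      rw [Finset.sum_congr rfl
        (fun j hj' => if_neg (fun h => (Finset.ne_of_mem_erase hj') h.symm))]
      rw [Finset.sum_const, smul_eq_mul, Finset.card_erase_of_mem (Finset.mem_univ _),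
        Finset.card_univ, Fintype.card_fin]
    rw [Finset.sum_congr rfl (fun i _ => hinner i), Finset.sum_const, smul_eq_mul,
      Finset.card_univ, Fintype.card_fin]
  refine ⟨hdisj, hcardQ, ?_⟩
  intro d hd
  have h1 : ∑ d : ZMod (4 * n + 3), outerCount Q d = (4 * n + 2) * outerCount Q 1 := by
    rw [← Finset.add_sum_erase _ _ (Finset.mem_univ (0 : ZMod (4 * n + 3))), hout0, zero_add]
    rw [Finset.sum_congr rfl (fun x hx => hconst x (Finset.ne_of_mem_erase hx))]
    rw [Finset.sum_const, smul_eq_mul, Finset.card_erase_of_mem (Finset.mem_univ _),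
      Finset.card_univ, ZMod.card]
    congr 1
  have h2 : (4 * n + 2) * outerCount Q 1 = q * ((q - 1) * (m * m)) := by rw [← h1, hsum]
  have h3 : (2 * n + 1) * (2 * outerCount Q 1) = (2 * n + 1) * ((2 * n + 1) - m) := by
    have e1 : q * ((q - 1) * (m * m)) = (q * m) * ((q - 1) * m) := by ring
    have e2 : (q - 1) * m = q * m - 1 * m := Nat.sub_mul q 1 m
    rw [e1, e2, one_mul, hqm] at h2
    rw [← h2]; ring
  have h4 : 2 * outerCount Q 1 = (2 * n + 1) - m :=
    Nat.eq_of_mul_eq_mul_left (by omega) h3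
  have h5 : m ≤ 2 * n + 1 := Nat.le_of_dvd (by omega) hm
  rw [hconst d hd]
  omega
end

section
/- For the regular DSSs of Corollary on Paley products, the redundancy ratio tends to the Levenshtein bound: with v = 2mq+1, v' = 2m'q'+1 primes ≡ 3 (mod 4), index ρ'' = (m(m'−1)(q−1)+(m−1)m'(q'−1)+mm'(q−1)(q'−1))/4 and redundancy mm'qq', the ratio mm'qq' / sqrt(qq'ρ''(vv'−1)/(qq'−1)) tends to 1 as m, m' → ∞ (with q, q' fixed). -/
open Filter

theorem stmt_18 (q q' : ℕ) (hq : 2 ≤ q) (hq' : 2 ≤ q') :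
    -- with v = 2mq+1 and v' = 2m'q'+1, the ratio of the redundancy mm'qq' of the
    -- product DSS of index ρ'' = (m(m'−1)(q−1)+(m−1)m'(q'−1)+mm'(q−1)(q'−1))/4
    -- to the Levenshtein bound sqrt(qq'·ρ''·(vv'−1)/(qq'−1)) tends to 1
    -- as m, m' → ∞
    Tendsto
      (fun mm : ℕ × ℕ =>
        let m : ℝ := mm.1
        let m' : ℝ := mm.2
        let ρ : ℝ := (m * (m' - 1) * (q - 1) + (m - 1) * m' * (q' - 1)
          + m * m' * (q - 1) * (q' - 1)) / 4
        (m * m' * q * q') /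
          Real.sqrt ((q * q' * ρ * ((2 * m * q + 1) * (2 * m' * q' + 1) - 1))
            / (q * q' - 1)))
      atTop (nhds 1) := by
  have hQ : (2:ℝ) ≤ (q:ℝ) := by exact_mod_cast hq
  have hQ' : (2:ℝ) ≤ (q':ℝ) := by exact_mod_cast hq'
  set Q : ℝ := (q:ℝ) with hQdef
  set Q' : ℝ := (q':ℝ) with hQ'def
  have hQ0 : 0 < Q := by linarith
  have hQ'0 : 0 < Q' := by linarith
  have hQQ : (4:ℝ) ≤ Q * Q' := by nlinarith
  have hQQ1 : (0:ℝ) < Q * Q' - 1 := by linarith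
  set g : ℝ × ℝ → ℝ := fun p =>
    Q * Q' / Real.sqrt (Q * Q' * ((Q * Q' - 1) - p.2 * (Q - 1) - p.1 * (Q' - 1))
      * (4 * Q * Q' + 2 * Q * p.2 + 2 * Q' * p.1) / (4 * (Q * Q' - 1))) with hg
  have harg0 : Q * Q' * ((Q * Q' - 1) - (0:ℝ) * (Q - 1) - (0:ℝ) * (Q' - 1))
      * (4 * Q * Q' + 2 * Q * 0 + 2 * Q' * 0) / (4 * (Q * Q' - 1)) = (Q * Q')^2 := by
    field_simp
    ring
  have hgval : g (0, 0) = 1 := by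
    simp only [hg]
    rw [harg0, Real.sqrt_sq (by positivity)]
    field_simp
  have hcont : ContinuousAt g (0, 0) := by
    apply ContinuousAt.div continuousAt_const
    · exact (Real.continuous_sqrt.continuousAt).comp (by fun_prop)
    · rw [harg0, Real.sqrt_sq (by positivity)]
      positivity
  have hto : Tendsto (fun mm : ℕ × ℕ => ((1:ℝ) / mm.1, (1:ℝ) / mm.2)) atTop
      (nhds ((0:ℝ), (0:ℝ))) := by
    rw [← prod_atTop_atTop_eq, nhds_prod_eq]
    exact Tendsto.prodMk
      (tendsto_one_div_atTop_nhds_zero_nat.comp tendsto_fst)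
      (tendsto_one_div_atTop_nhds_zero_nat.comp tendsto_snd)
  have hmain : Tendsto (fun mm : ℕ × ℕ => g ((1:ℝ) / mm.1, (1:ℝ) / mm.2)) atTop (nhds 1) := by
    have h := hcont.tendsto.comp hto
    rwa [hgval] at h
  refine hmain.congr' ?_
  filter_upwards [eventually_ge_atTop ((1,1) : ℕ × ℕ)] with mm hmm
  obtain ⟨h1, h2⟩ := hmm
  have hm : (1:ℝ) ≤ (mm.1 : ℝ) := by exact_mod_cast h1
  have hm' : (1:ℝ) ≤ (mm.2 : ℝ) := by exact_mod_cast h2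
  set m : ℝ := (mm.1 : ℝ)
  set m' : ℝ := (mm.2 : ℝ)
  have hm0 : (0:ℝ) < m := by linarith
  have hm'0 : (0:ℝ) < m' := by linarith
  simp only [hg]
  have key : (Q * Q' * ((m * (m' - 1) * (Q - 1) + (m - 1) * m' * (Q' - 1)
        + m * m' * (Q - 1) * (Q' - 1)) / 4) * ((2 * m * Q + 1) * (2 * m' * Q' + 1) - 1))
        / (Q * Q' - 1)
      = (m * m')^2 * (Q * Q' * ((Q * Q' - 1) - (1/m') * (Q - 1) - (1/m) * (Q' - 1))
        * (4 * Q * Q' + 2 * Q * (1/m') + 2 * Q' * (1/m)) / (4 * (Q * Q' - 1))) := by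
    field_simp
    ring
  rw [key, Real.sqrt_mul (sq_nonneg _), Real.sqrt_sq (by positivity)]
  rw [show m * m' * Q * Q' = (m * m') * (Q * Q') by ring]
  rw [mul_div_mul_left _ _ (by positivity : m * m' ≠ 0)]
end

section
/- In the embedding construction of Theorem (FHS × DSS), outer differences divisible by v' occur at least ρv'e' times: for the sets S_{i,x} = {v'a + x : a ∈ Q_i} over Z_{vv'}, where {Q_i} partitions Z_v with every nonzero outer difference occurring at least ρ times, and x ranges over the v'e' points used by the DSS over Z_{v'}, every nonzero element of Z_{vv'} that is a multiple of v' occurs at least ρv'e' times as an outer difference among the S_{i,x}. -/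
set_option maxHeartbeats 1000000 in
theorem stmt_19 (v v' q ρ : ℕ) [NeZero v] (hv' : 0 < v')
    (Q : Fin q → Finset (ZMod v))
    -- {Q_i} partitions Z_v and every nonzero outer difference occurs at least ρ times
    (hQdisj : ∀ i j, i ≠ j → Disjoint (Q i) (Q j))
    (hQcover : ∀ x : ZMod v, ∃ i, x ∈ Q i)
    (hQidx : ∀ d : ZMod v, d ≠ 0 → ρ ≤ outerCount Q d)
    -- P is the set of v'e' points used by the DSS over Z_{v'}
    (P : Finset (ZMod v')) :
    let S : Fin q × {x : ZMod v' // x ∈ P} → Finset (ZMod (v * v')) := fun ix =>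
      (Q ix.1).image (fun a => ((v' * a.val + ix.2.val.val : ℕ) : ZMod (v * v')))
    -- every nonzero multiple of v' in Z_{vv'} occurs at least ρ·v'e' = ρ·|P| times
    -- as an outer difference among the S_{i,x}
    ∀ d : ZMod (v * v'), d ≠ 0 → (∃ c : ℕ, d = ((v' * c : ℕ) : ZMod (v * v'))) →
      ρ * P.card ≤ outerCount S d := by
  intro S d hd hdc
  obtain ⟨c, hc⟩ := hdc
  haveI : NeZero v' := ⟨hv'.ne'⟩
  haveI : NeZero (v * v') := ⟨Nat.mul_ne_zero (NeZero.ne v) hv'.ne'⟩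
  have hS : S = fun ix => (Q ix.1).image
      (fun a => ((v' * a.val + ix.2.val.val : ℕ) : ZMod (v * v'))) := rfl
  set c' : ZMod v := (c : ZMod v) with hc'def
  have hc'0 : c' ≠ 0 := by
    intro h
    obtain ⟨k, hk⟩ := (ZMod.natCast_eq_zero_iff c v).mp h
    apply hd
    rw [hc, hk, show v' * (v * k) = (v * v') * k by ring,
      Nat.cast_mul, ZMod.natCast_self, zero_mul]
  -- the key per-pair cardinality comparison
  have key : ∀ (x : {x : ZMod v' // x ∈ P}) (i j : Fin q),
      ((Q i ×ˢ Q j).filter (fun p => p.1 - p.2 = c')).card ≤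
      ((S (i, x) ×ˢ S (j, x)).filter (fun p => p.1 - p.2 = d)).card := by
    intro x i j
    set φ : ZMod v → ZMod (v * v') :=
      fun a => ((v' * a.val + x.val.val : ℕ) : ZMod (v * v')) with hφ
    have hlt : ∀ a : ZMod v, v' * a.val + x.val.val < v * v' := by
      intro a
      have h1 : x.val.val < v' := ZMod.val_lt x.val
      have h2 : a.val < v := ZMod.val_lt a
      calc v' * a.val + x.val.val < v' * a.val + v' := by omega
        _ = v' * (a.val + 1) := by ring
        _ ≤ v' * v := Nat.mul_le_mul_left _ (by omega)
        _ = v * v' := Nat.mul_comm _ _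
    have hφinj : Function.Injective φ := by
      intro a b hab
      have h := congrArg ZMod.val hab
      simp only [hφ] at h
      rw [ZMod.val_natCast_of_lt (hlt a), ZMod.val_natCast_of_lt (hlt b)] at h
      have : a.val = b.val := Nat.eq_of_mul_eq_mul_left hv' (by omega)
      exact ZMod.val_injective _ this
    have hφdiff : ∀ a b : ZMod v, a - b = c' → φ a - φ b = d := by
      intro a b hab
      have h1 : (v : ℤ) ∣ ((a.val : ℤ) - b.val - c) := by
        have h0 : (((a.val : ℤ) - b.val - c : ℤ) : ZMod v) = 0 := by
          push_cast
          simp only [ZMod.natCast_val, ZMod.cast_id]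
          rw [sub_eq_zero]
          exact hab
        exact (ZMod.intCast_zmod_eq_zero_iff_dvd _ v).mp h0
      have h2 : ((v * v' : ℕ) : ℤ) ∣ (v' : ℤ) * ((a.val : ℤ) - b.val - c) := by
        obtain ⟨k, hk⟩ := h1
        exact ⟨k, by push_cast; rw [hk]; ring⟩
      have h3 : (((v' : ℤ) * ((a.val : ℤ) - b.val - c) : ℤ) : ZMod (v * v')) = 0 :=
        (ZMod.intCast_zmod_eq_zero_iff_dvd _ (v * v')).mpr h2
      push_cast at h3
      simp only [hφ, hc]
      push_cast
      linear_combination h3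
    apply Finset.card_le_card_of_injOn (fun p => (φ p.1, φ p.2))
    · intro p hp
      simp only [Finset.mem_coe, Finset.mem_filter, Finset.mem_product] at hp ⊢
      refine ⟨⟨?_, ?_⟩, hφdiff _ _ hp.2⟩
      · rw [hS]
        exact Finset.mem_image_of_mem φ hp.1.1
      · rw [hS]
        exact Finset.mem_image_of_mem φ hp.1.2
    · intro p _ p' _ h
      have h1 := congrArg Prod.fst h
      have h2 := congrArg Prod.snd h
      exact Prod.ext (hφinj h1) (hφinj h2)
  -- sum manipulation
  have expand : outerCount S d =
      ∑ i : Fin q, ∑ x : {x : ZMod v' // x ∈ P}, ∑ j : Fin q, ∑ y : {x : ZMod v' // x ∈ P},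
        (if (i, x) = (j, y) then 0
          else ((S (i, x) ×ˢ S (j, y)).filter (fun p => p.1 - p.2 = d)).card) := by
    simp only [outerCount, Fintype.sum_prod_type]
  have step1 : ∀ (i : Fin q) (x : {x : ZMod v' // x ∈ P}) (j : Fin q),
      (if i = j then 0 else ((Q i ×ˢ Q j).filter (fun p => p.1 - p.2 = c')).card) ≤
      ∑ y : {x : ZMod v' // x ∈ P},
        (if (i, x) = (j, y) then 0
          else ((S (i, x) ×ˢ S (j, y)).filter (fun p => p.1 - p.2 = d)).card) := by
    intro i x j
    have hsingle := Finset.single_le_sum (f := fun y : {x : ZMod v' // x ∈ P} =>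
      (if (i, x) = (j, y) then 0
        else ((S (i, x) ×ˢ S (j, y)).filter (fun p => p.1 - p.2 = d)).card))
      (fun _ _ => Nat.zero_le _) (Finset.mem_univ x)
    refine le_trans ?_ hsingle
    by_cases hij : i = j
    · simp [hij]
    · rw [if_neg hij, if_neg (by simp [Prod.ext_iff, hij])]
      exact key x i j
  calc ρ * P.card = ∑ _x : {x : ZMod v' // x ∈ P}, ρ := by
        simp [Finset.sum_const, Fintype.card_coe, Nat.mul_comm]
    _ ≤ ∑ _x : {x : ZMod v' // x ∈ P}, outerCount Q c' :=
        Finset.sum_le_sum fun _ _ => hQidx c' hc'0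
    _ = ∑ x : {x : ZMod v' // x ∈ P}, ∑ i : Fin q, ∑ j : Fin q,
          (if i = j then 0 else ((Q i ×ˢ Q j).filter (fun p => p.1 - p.2 = c')).card) := rfl
    _ ≤ ∑ x : {x : ZMod v' // x ∈ P}, ∑ i : Fin q, ∑ j : Fin q,
          ∑ y : {x : ZMod v' // x ∈ P},
            (if (i, x) = (j, y) then 0
              else ((S (i, x) ×ˢ S (j, y)).filter (fun p => p.1 - p.2 = d)).card) := by
        refine Finset.sum_le_sum fun x _ => Finset.sum_le_sum fun i _ =>
          Finset.sum_le_sum fun j _ => step1 i x j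
    _ = ∑ i : Fin q, ∑ x : {x : ZMod v' // x ∈ P}, ∑ j : Fin q,
          ∑ y : {x : ZMod v' // x ∈ P},
            (if (i, x) = (j, y) then 0
              else ((S (i, x) ×ˢ S (j, y)).filter (fun p => p.1 - p.2 = d)).card) :=
        Finset.sum_comm
    _ = outerCount S d := expand.symm
end
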